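/- arXiv:1112.5753 — 5 statements merged into one kernel-verified Lean document; each statement's English description precedes it below -/
import Mathlib

section
/- The elasticity of Int(ℤ) is infinite: for every real number M there exists a nonzero nonunit f ∈ Int(ℤ) and natural numbers m, n in the set of lengths L(f) with m / n > M. -/
open Polynomial

noncomputable def IntValued : Subring (Polynomial ℚ) where
  carrier := {f | ∀ c : ℤ, ∃ m : ℤ, f.eval (c : ℚ) = (m : ℚ)}
  zero_mem' := fun c => ⟨0, by simp⟩
  one_mem' := fun c => ⟨1, by simp⟩
  add_mem' := by
    rintro f g hf hg c
    obtain ⟨m, hm⟩ := hf c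
    obtain ⟨n, hn⟩ := hg c
    exact ⟨m + n, by simp [hm, hn]⟩
  mul_mem' := by
    rintro f g hf hg c
    obtain ⟨m, hm⟩ := hf c
    obtain ⟨n, hn⟩ := hg c
    exact ⟨m * n, by simp [hm, hn]⟩
  neg_mem' := by
    rintro f hf c
    obtain ⟨m, hm⟩ := hf c
    exact ⟨-m, by simp [hm]⟩

namespace ElasAux

/-- `K = (P-1)!` -/
def K (P : ℕ) : ℤ := ((P - 1).factorial : ℤ)

lemma K_pos (P : ℕ) : 0 < K P := Int.natCast_pos.mpr (P - 1).factorial_pos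

/-- Wilson: `P ∣ (P-1)! + 1`. -/
lemma dvd_K_add_one {P : ℕ} (hP : P.Prime) : (P : ℤ) ∣ K P + 1 := by
  haveI : Fact P.Prime := ⟨hP⟩
  rw [← ZMod.intCast_zmod_eq_zero_iff_dvd]
  push_cast [K]
  rw [ZMod.wilsons_lemma]
  ring

lemma not_dvd_K {P : ℕ} (hP : P.Prime) : ¬ (P : ℤ) ∣ K P := by
  intro h
  have h1 : (P : ℤ) ∣ 1 := by
    have h2 := dvd_K_add_one hP
    have := (Dvd.dvd.sub h2 h)
    simpa using this
  have := Int.le_of_dvd one_pos h1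
  have := hP.one_lt
  omega

/-- the roots `i * K`. -/
def rt (P : ℕ) (i : ℕ) : ℤ := (i : ℤ) * K P

lemma rt_injective (P : ℕ) : Function.Injective (rt P) := by
  intro i j h
  have hK := K_pos P
  have : (i : ℤ) = j := by
    unfold rt at h
    exact mul_right_cancel₀ (by omega) h
  exact_mod_cast this

def rtQ (P : ℕ) (i : ℕ) : ℚ := ((rt P i : ℤ) : ℚ)

lemma rtQ_injective (P : ℕ) : Function.Injective (rtQ P) := by
  intro i j h
  have h' : ((rt P i : ℤ) : ℚ) = ((rt P j : ℤ) : ℚ) := h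
  exact rt_injective P (by exact_mod_cast h')

/-- The polynomial `∏_{i<P} (X - iK)` over ℚ. -/
noncomputable def F (P : ℕ) : ℚ[X] :=
  (((Multiset.range P).map (rtQ P)).map (fun r => X - C r)).prod

/-- Integer values `∏_{i<P} (x - iK)`. -/
def Fv (P : ℕ) (x : ℤ) : ℤ := ((Multiset.range P).map (fun i => x - rt P i)).prod

lemma F_monic (P : ℕ) : (F P).Monic := by
  unfold F
  rw [Multiset.map_map]
  exact monic_multiset_prod_of_monic _ _ (fun i _ => monic_X_sub_C _)

lemma F_natDegree (P : ℕ) : (F P).natDegree = P := by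
  unfold F
  rw [Multiset.map_map]
  rw [Polynomial.natDegree_multiset_prod_of_monic]
  · simp [Function.comp_def, natDegree_X_sub_C]
  · intro f hf
    obtain ⟨i, _, rfl⟩ := Multiset.mem_map.mp hf
    exact monic_X_sub_C _

lemma evalF (P : ℕ) (x : ℤ) : (F P).eval (x : ℚ) = (Fv P x : ℚ) := by
  unfold F Fv
  rw [Polynomial.eval_multiset_prod]
  rw [Int.cast_multiset_prod]
  rw [Multiset.map_map, Multiset.map_map, Multiset.map_map]
  apply congrArg Multiset.prod
  apply Multiset.map_congr rfl
  intro i _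
  simp [rtQ]

lemma not_dvd_rt_sub {P : ℕ} (hP : P.Prime) {i j : ℕ} (hi : i < P) (hj : j < P)
    (hij : i ≠ j) : ¬ (P : ℤ) ∣ (rt P j - rt P i) := by
  intro h
  have hsub : rt P j - rt P i = ((j : ℤ) - i) * K P := by unfold rt; ring
  rw [hsub] at h
  have hprime : Prime (P : ℤ) := Nat.prime_iff_prime_int.mp hP
  rcases hprime.dvd_mul.mp h with h1 | h1
  · have hne : (j : ℤ) - i ≠ 0 := by
      intro h0
      apply hij
      omega
    have hle := Int.le_of_dvd (abs_pos.mpr hne) ((dvd_abs _ _).mpr h1)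
    have hblt : |(j : ℤ) - (i : ℤ)| < P := by
      rw [abs_sub_lt_iff]
      omega
    exact absurd (lt_of_le_of_lt hle hblt) (lt_irrefl _)
  · exact not_dvd_K hP h1

/-- the fixed divisor: `P` divides all values of `F`. -/
lemma P_dvd_Fv {P : ℕ} (hP : P.Prime) (x : ℤ) : (P : ℤ) ∣ Fv P x := by
  have hpos : 0 < (P : ℤ) := by exact_mod_cast hP.pos
  set j : ℕ := ((-x) % P).toNat with hjdef
  have hj0 : 0 ≤ (-x) % (P : ℤ) := Int.emod_nonneg _ (by omega)
  have hjP : (-x) % (P : ℤ) < P := Int.emod_lt_of_pos _ hpos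
  have hjcast : (j : ℤ) = (-x) % P := Int.toNat_of_nonneg hj0
  have hjlt : j < P := by omega
  have h1 : (P : ℤ) ∣ x + (j : ℤ) := by
    refine ⟨-((-x) / P), ?_⟩
    rw [hjcast, Int.emod_def]
    ring
  have h2 : (P : ℤ) ∣ x - rt P j := by
    have h3 : (P : ℤ) ∣ (j : ℤ) * (K P + 1) := Dvd.dvd.mul_left (dvd_K_add_one hP) _
    have : x - rt P j = (x + j) - (j : ℤ) * (K P + 1) := by unfold rt; ring
    rw [this]
    exact dvd_sub h1 h3
  exact h2.trans (Multiset.dvd_prod (Multiset.mem_map_of_mem _ (Multiset.mem_range.mpr hjlt)))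

lemma F_mem (P : ℕ) : F P ∈ IntValued := fun c => ⟨Fv P c, evalF P c⟩

noncomputable def gPoly (P : ℕ) : ℚ[X] := C ((P : ℚ)⁻¹) * F P

lemma gPoly_mem {P : ℕ} (hP : P.Prime) : gPoly P ∈ IntValued := by
  intro c
  obtain ⟨w, hw⟩ := P_dvd_Fv hP c
  refine ⟨w, ?_⟩
  have hPne : (P : ℚ) ≠ 0 := by exact_mod_cast hP.ne_zero
  rw [gPoly, eval_mul, eval_C, evalF, hw]
  push_cast
  field_simp

noncomputable def linE (P : ℕ) (i : ℕ) : IntValued :=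
  ⟨X - C (rtQ P i), fun c => ⟨c - rt P i, by push_cast [rtQ]; simp⟩⟩

noncomputable def pC (P : ℕ) : IntValued :=
  ⟨C (P : ℚ), fun c => ⟨P, by simp⟩⟩

noncomputable def gE {P : ℕ} (hP : P.Prime) : IntValued := ⟨gPoly P, gPoly_mem hP⟩

noncomputable def fE (P : ℕ) : IntValued := ((Multiset.range P).map (linE P)).prod

lemma fE_val (P : ℕ) : (fE P : ℚ[X]) = F P := by
  unfold fE F
  rw [SubmonoidClass.coe_multiset_prod]
  rw [Multiset.map_map, Multiset.map_map]
  rfl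

/-- an element whose value is a constant unit integer is a unit. -/
lemma isUnit_of_val_eq {u : IntValued} {n : ℤ} (hn : IsUnit n) (h : (u : ℚ[X]) = C (n : ℚ)) :
    IsUnit u := by
  rcases Int.isUnit_iff.mp hn with rfl | rfl
  · have : u = 1 := by
      apply Subtype.ext
      simpa using h
    rw [this]; exact isUnit_one
  · have : u = -1 := by
      apply Subtype.ext
      rw [h]
      push_cast
      simp
    rw [this]
    exact isUnit_one.neg

lemma coe_mul (u v : IntValued) : ((u * v : IntValued) : ℚ[X]) = (u : ℚ[X]) * v := rfl

lemma irreducible_pC {P : ℕ} (hP : P.Prime) : Irreducible (pC P) := by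
  constructor
  · intro h
    obtain ⟨w, hw⟩ := h.exists_right_inv
    have hval : (C (P : ℚ)) * (w : ℚ[X]) = 1 := congrArg Subtype.val hw
    obtain ⟨z, hz⟩ := w.2 0
    have hz' : Polynomial.eval 0 (w : ℚ[X]) = z := by simpa using hz
    have h1 : (P : ℚ) * z = 1 := by
      have := congrArg (fun q => Polynomial.eval (0 : ℚ) q) hval
      simpa [hz'] using this
    have hPz : (P : ℤ) * z = 1 := by exact_mod_cast h1
    have h2 : (P : ℤ) = 1 ∨ (P : ℤ) = -1 := Int.isUnit_iff.mp (IsUnit.of_mul_eq_one _ hPz)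
    have := hP.one_lt
    omega
  · intro u v huv
    have hval : (u : ℚ[X]) * v = C (P : ℚ) := (congrArg Subtype.val huv).symm
    have hCP : (C (P : ℚ) : ℚ[X]) ≠ 0 := by
      simp only [ne_eq, C_eq_zero]
      exact_mod_cast hP.ne_zero
    have hu0 : (u : ℚ[X]) ≠ 0 := left_ne_zero_of_mul (by rw [hval]; exact hCP)
    have hv0 : (v : ℚ[X]) ≠ 0 := right_ne_zero_of_mul (by rw [hval]; exact hCP)
    have hdeg : (u : ℚ[X]).natDegree + (v : ℚ[X]).natDegree = 0 := by
      rw [← Polynomial.natDegree_mul hu0 hv0, hval, natDegree_C]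
    obtain ⟨α, hα⟩ := Polynomial.natDegree_eq_zero.mp (by omega : (u : ℚ[X]).natDegree = 0)
    obtain ⟨β, hβ⟩ := Polynomial.natDegree_eq_zero.mp (by omega : (v : ℚ[X]).natDegree = 0)
    obtain ⟨m0, hm0⟩ := u.2 0
    obtain ⟨n0, hn0⟩ := v.2 0
    have hαm : α = (m0 : ℚ) := by rw [← hα] at hm0; simpa using hm0
    have hβn : β = (n0 : ℚ) := by rw [← hβ] at hn0; simpa using hn0
    have hmn : m0 * n0 = (P : ℤ) := by
      have := congrArg (fun q => Polynomial.eval 0 q) hval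
      simp [← hα, ← hβ, hαm, hβn] at this
      exact_mod_cast this
    have hirr : Irreducible ((P : ℤ)) := (Nat.prime_iff_prime_int.mp hP).irreducible
    rcases hirr.isUnit_or_isUnit hmn.symm with h | h
    · exact Or.inl (isUnit_of_val_eq h (by rw [← hα, hαm]))
    · exact Or.inr (isUnit_of_val_eq h (by rw [← hβ, hβn]))

lemma lin_aux {P i : ℕ} {u v : IntValued} (h : (u : ℚ[X]) * (v : ℚ[X]) = X - C (rtQ P i))
    (hdeg : (u : ℚ[X]).natDegree = 0) : IsUnit u := by
  obtain ⟨α, hα⟩ := Polynomial.natDegree_eq_zero.mp hdeg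
  obtain ⟨m0, hm0⟩ := u.2 0
  have hαm : α = (m0 : ℚ) := by rw [← hα] at hm0; simpa using hm0
  obtain ⟨z, hz⟩ := v.2 (rt P i + 1)
  have heval : α * z = 1 := by
    have := congrArg (fun q => Polynomial.eval ((rt P i + 1 : ℤ) : ℚ) q) h
    simp only [← hα, eval_mul, eval_C, hz, eval_sub, eval_X, rtQ] at this
    rw [this]
    push_cast
    ring
  have hmz : m0 * z = 1 := by
    rw [hαm] at heval
    exact_mod_cast heval
  exact isUnit_of_val_eq (IsUnit.of_mul_eq_one _ hmz) (by rw [← hα, hαm])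

lemma irreducible_linE (P i : ℕ) : Irreducible (linE P i) := by
  constructor
  · intro h
    have h2 : IsUnit ((linE P i : ℚ[X])) := h.map (Subring.subtype IntValued)
    exact Polynomial.not_isUnit_X_sub_C (rtQ P i) h2
  · intro u v huv
    have hval : (u : ℚ[X]) * (v : ℚ[X]) = X - C (rtQ P i) := (congrArg Subtype.val huv).symm
    have hX : (X - C (rtQ P i) : ℚ[X]) ≠ 0 := X_sub_C_ne_zero _
    have hu0 : (u : ℚ[X]) ≠ 0 := left_ne_zero_of_mul (by rw [hval]; exact hX)
    have hv0 : (v : ℚ[X]) ≠ 0 := right_ne_zero_of_mul (by rw [hval]; exact hX)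
    have hdeg : (u : ℚ[X]).natDegree + (v : ℚ[X]).natDegree = 1 := by
      rw [← Polynomial.natDegree_mul hu0 hv0, hval, natDegree_X_sub_C]
    rcases (by omega : (u : ℚ[X]).natDegree = 0 ∨ (v : ℚ[X]).natDegree = 0) with h0 | h0
    · exact Or.inl (lin_aux hval h0)
    · exact Or.inr (lin_aux (by rw [mul_comm] at hval; exact hval) h0)

def sQ (P : ℕ) : Multiset ℚ := (Multiset.range P).map (rtQ P)

lemma F_def' (P : ℕ) : F P = ((sQ P).map (fun r => X - C r)).prod := rfl

lemma splits_multiset_X_sub_C (s : Multiset ℚ) :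
    ((s.map fun r => X - C r).prod).Splits := by
  induction s using Multiset.induction with
  | empty => simpa using Splits.one
  | cons a s ih =>
    rw [Multiset.map_cons, Multiset.prod_cons]
    exact Splits.mul (Splits.X_sub_C _) ih

lemma F_splits (P : ℕ) : (F P).Splits := splits_multiset_X_sub_C _

lemma F_eq {P : ℕ} (hP : P.Prime) : F P = C (P : ℚ) * gPoly P := by
  have hPne : (P : ℚ) ≠ 0 := by exact_mod_cast hP.ne_zero
  rw [gPoly, ← mul_assoc, ← C_mul, mul_inv_cancel₀ hPne, C_1, one_mul]

lemma gPoly_leadingCoeff (P : ℕ) : (gPoly P).leadingCoeff = (P : ℚ)⁻¹ := by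
  rw [gPoly, leadingCoeff_mul, leadingCoeff_C, (F_monic P).leadingCoeff, mul_one]

lemma gPoly_ne_zero {P : ℕ} (hP : P.Prime) : gPoly P ≠ 0 := by
  have hPne : (P : ℚ) ≠ 0 := by exact_mod_cast hP.ne_zero
  exact mul_ne_zero (by simp [hPne]) (F_monic P).ne_zero

lemma gPoly_natDegree {P : ℕ} (hP : P.Prime) : (gPoly P).natDegree = P := by
  have hPne : ((P : ℚ))⁻¹ ≠ 0 := by
    simp only [ne_eq, inv_eq_zero]
    exact_mod_cast hP.ne_zero
  rw [gPoly, natDegree_C_mul hPne, F_natDegree]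

lemma den_dvd {a : ℚ} {N z : ℤ} (h : a * (N : ℚ) = (z : ℚ)) : (a.den : ℤ) ∣ N := by
  have hden : ((a.den : ℤ) : ℚ) ≠ 0 := by
    exact_mod_cast a.den_nz
  have hnum : (a.num : ℚ) = a * a.den := (div_eq_iff hden).mp (Rat.num_div_den a)
  have h1 : (a.num : ℚ) * N = (a.den : ℚ) * z := by
    rw [hnum]
    linear_combination ((a.den : ℚ)) * h
  have h2 : a.num * N = (a.den : ℤ) * z := by exact_mod_cast h1
  have h3 : (a.den : ℤ) ∣ a.num * N := Dvd.intro _ h2.symm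
  have hcop : IsCoprime ((a.den : ℤ)) a.num := by
    rw [Int.isCoprime_iff_gcd_eq_one]
    simpa [Int.gcd] using Nat.Coprime.symm a.reduced
  exact hcop.dvd_of_dvd_mul_left h3

lemma exists_preimage {P : ℕ} {t : Multiset ℚ} (h : t ≤ sQ P) :
    ∃ t₀ : Multiset ℕ, t₀ ≤ Multiset.range P ∧ t = t₀.map (rtQ P) := by
  classical
  refine ⟨(Multiset.range P).filter (fun i => rtQ P i ∈ t), Multiset.filter_le _ _, ?_⟩
  have hsnd : (sQ P).Nodup := (Multiset.nodup_range P).map (rtQ_injective P)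
  have ht : t.Nodup := Multiset.nodup_of_le h hsnd
  have ht0 : (((Multiset.range P).filter (fun i => rtQ P i ∈ t)).map (rtQ P)).Nodup :=
    ((Multiset.nodup_range P).filter _).map (rtQ_injective P)
  rw [Multiset.Nodup.ext ht ht0]
  intro r
  constructor
  · intro hr
    obtain ⟨i, hi, rfl⟩ := Multiset.mem_map.mp (Multiset.mem_of_le h hr)
    exact Multiset.mem_map_of_mem _ (Multiset.mem_filter.mpr ⟨hi, hr⟩)
  · intro hr
    obtain ⟨i, hi, rfl⟩ := Multiset.mem_map.mp hr
    exact (Multiset.mem_filter.mp hi).2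

lemma eval_rootprod (P : ℕ) (t₀ : Multiset ℕ) (j : ℕ) :
    (((t₀.map (rtQ P)).map (fun r => X - C r)).prod).eval (rtQ P j) =
      (((t₀.map fun i => rt P j - rt P i).prod : ℤ) : ℚ) := by
  rw [eval_multiset_prod, Int.cast_multiset_prod,
    Multiset.map_map, Multiset.map_map, Multiset.map_map]
  congr 1
  apply Multiset.map_congr rfl
  intro i _
  simp [rtQ]

lemma FvP_not {P : ℕ} (hP : P.Prime) : ¬ ((P : ℤ) * P ∣ Fv P P) := by
  intro h
  have hPne : (P : ℤ) ≠ 0 := by exact_mod_cast hP.ne_zero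
  have h0 : (0 : ℕ) ∈ Multiset.range P := Multiset.mem_range.mpr hP.pos
  have hsplit : Multiset.range P = 0 ::ₘ (Multiset.range P).erase 0 := (Multiset.cons_erase h0).symm
  have hFv : Fv P P =
      (P : ℤ) * (((Multiset.range P).erase 0).map (fun i => (P : ℤ) - rt P i)).prod := by
    rw [Fv, hsplit, Multiset.map_cons, Multiset.prod_cons]
    congr 1
    simp [rt]
  rw [hFv] at h
  have hPR : (P : ℤ) ∣ (((Multiset.range P).erase 0).map (fun i => (P : ℤ) - rt P i)).prod :=
    (mul_dvd_mul_iff_left hPne).mp h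
  obtain ⟨w, hwmem, hwdvd⟩ := (Nat.prime_iff_prime_int.mp hP).exists_mem_multiset_dvd hPR
  obtain ⟨i, hi, rfl⟩ := Multiset.mem_map.mp hwmem
  have hiP : i < P := Multiset.mem_range.mp (Multiset.mem_of_mem_erase hi)
  have hi0 : i ≠ 0 := by
    intro h0'
    subst h0'
    have hc1 : Multiset.count 0 (Multiset.range P) = 1 :=
      Multiset.count_eq_one_of_mem (Multiset.nodup_range P) h0
    have hc2 := Multiset.count_erase_self (0:ℕ) (Multiset.range P)
    have hc3 := Multiset.one_le_count_iff_mem.mpr hi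
    omega
  have h2 : (P : ℤ) ∣ rt P i := by
    have := dvd_sub (dvd_refl (P : ℤ)) hwdvd
    simpa using this
  rcases (Nat.prime_iff_prime_int.mp hP).dvd_mul.mp (by rwa [rt] at h2) with h3 | h3
  · have hipos : (0 : ℤ) < (i : ℤ) := by exact_mod_cast Nat.pos_of_ne_zero hi0
    have := Int.le_of_dvd hipos h3
    omega
  · exact not_dvd_K hP h3

lemma Fv_one_not {P q : ℕ} (hq : q.Prime) (hlt : q < P) : ¬ ((q : ℤ) ∣ Fv P 1) := by
  haveI : Fact q.Prime := ⟨hq⟩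
  intro h
  have hqK : (q : ℤ) ∣ K P := by
    have : q ∣ (P - 1).factorial := Nat.dvd_factorial hq.pos (by omega)
    exact Int.natCast_dvd_natCast.mpr this
  have hK0 : ((K P : ℤ) : ZMod q) = 0 := (ZMod.intCast_zmod_eq_zero_iff_dvd _ _).mpr hqK
  have hcast : ((Fv P 1 : ℤ) : ZMod q) = 0 := (ZMod.intCast_zmod_eq_zero_iff_dvd _ _).mpr h
  rw [Fv, Int.cast_multiset_prod, Multiset.map_map] at hcast
  have hone : ((Multiset.range P).map (Int.cast ∘ fun i => (1 : ℤ) - rt P i)).prod = (1 : ZMod q) := by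
    apply Multiset.prod_eq_one
    intro w hw
    obtain ⟨i, _, rfl⟩ := Multiset.mem_map.mp hw
    simp only [Function.comp_apply, rt]
    push_cast
    rw [hK0]
    ring
  rw [hone] at hcast
  exact one_ne_zero hcast

lemma Fv_big {P q : ℕ} (hq : q.Prime) (hgt : P < q) : ∃ x : ℤ, ¬ ((q : ℤ) ∣ Fv P x) := by
  haveI : Fact q.Prime := ⟨hq⟩
  classical
  set img : Finset (ZMod q) := (Finset.range P).image (fun i => ((rt P i : ℤ) : ZMod q)) with himg
  have hcard : img.card < Fintype.card (ZMod q) := by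
    calc img.card ≤ (Finset.range P).card := Finset.card_image_le
      _ = P := Finset.card_range P
      _ < q := hgt
      _ = Fintype.card (ZMod q) := (ZMod.card q).symm
  have hne : imgᶜ.Nonempty := by
    rw [← Finset.card_pos, Finset.card_compl]
    omega
  obtain ⟨z, hz⟩ := hne
  have hznot : z ∉ img := Finset.mem_compl.mp hz
  refine ⟨(z.val : ℤ), fun h => ?_⟩
  have hcast : ((Fv P (z.val : ℤ) : ℤ) : ZMod q) = 0 := (ZMod.intCast_zmod_eq_zero_iff_dvd _ _).mpr h
  rw [Fv, Int.cast_multiset_prod, Multiset.map_map] at hcast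
  have h0 : (0 : ZMod q) ∉ (Multiset.range P).map (Int.cast ∘ fun i => ((z.val : ℤ)) - rt P i) := by
    intro hmem
    obtain ⟨i, hi, heq⟩ := Multiset.mem_map.mp hmem
    apply hznot
    have hzz : (((z.val : ℤ)) : ZMod q) = z := by
      push_cast
      simp [ZMod.natCast_val, ZMod.cast_id]
    simp only [Function.comp_apply] at heq
    have heq3 : ((rt P i : ℤ) : ZMod q) = z := by
      rw [← hzz]
      push_cast at heq ⊢
      linear_combination -heq
    exact Finset.mem_image.mpr ⟨i, Finset.mem_range.mpr (Multiset.mem_range.mp hi), heq3⟩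
  exact (Multiset.prod_ne_zero h0) hcast

lemma aux_isUnit {P : ℕ} (hP : P.Prime) {u v : IntValued} (huv : gE hP = u * v)
    (hden : (P : ℤ) ∣ ((((u : ℚ[X]).leadingCoeff).den : ℕ) : ℤ)) : IsUnit v := by
  have hPne : (P : ℚ) ≠ 0 := by exact_mod_cast hP.ne_zero
  have hval : gPoly P = (u : ℚ[X]) * (v : ℚ[X]) := congrArg Subtype.val huv
  have hg0 : gPoly P ≠ 0 := gPoly_ne_zero hP
  have hu0 : (u : ℚ[X]) ≠ 0 := left_ne_zero_of_mul (by rw [← hval]; exact hg0)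
  have hv0 : (v : ℚ[X]) ≠ 0 := right_ne_zero_of_mul (by rw [← hval]; exact hg0)
  set a := (u : ℚ[X]).leadingCoeff with ha
  set b := (v : ℚ[X]).leadingCoeff with hb
  have hab : a * b = (P : ℚ)⁻¹ := by
    rw [ha, hb, ← leadingCoeff_mul, ← hval, gPoly_leadingCoeff]
  have hudvd : (u : ℚ[X]) ∣ F P := by
    refine ⟨C (P : ℚ) * (v : ℚ[X]), ?_⟩
    rw [F_eq hP, hval]
    ring
  have hvdvd : (v : ℚ[X]) ∣ F P := by
    refine ⟨C (P : ℚ) * (u : ℚ[X]), ?_⟩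
    rw [F_eq hP, hval]
    ring
  have husplit : ((u : ℚ[X])).Splits :=
    Splits.of_dvd (F_splits P) (F_monic P).ne_zero hudvd
  have hvsplit : ((v : ℚ[X])).Splits :=
    Splits.of_dvd (F_splits P) (F_monic P).ne_zero hvdvd
  have hu : (u : ℚ[X]) = C a * (((u : ℚ[X]).roots).map fun r => X - C r).prod :=
    Splits.eq_prod_roots husplit
  have hv : (v : ℚ[X]) = C b * (((v : ℚ[X]).roots).map fun r => X - C r).prod :=
    Splits.eq_prod_roots hvsplit
  have hprodeq : ((((u : ℚ[X]).roots + (v : ℚ[X]).roots)).map fun r => X - C r).prod =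
      ((sQ P).map fun r => X - C r).prod := by
    have h1 : C (a * b) * ((((u : ℚ[X]).roots + (v : ℚ[X]).roots)).map fun r => X - C r).prod =
        C ((P : ℚ)⁻¹) * ((sQ P).map fun r => X - C r).prod := by
      rw [Multiset.map_add, Multiset.prod_add, C_mul]
      have h2 : (u : ℚ[X]) * (v : ℚ[X]) = C ((P : ℚ)⁻¹) * ((sQ P).map fun r => X - C r).prod := by
        rw [← hval, gPoly, F_def']
      rw [← h2]
      conv_rhs => rw [hu, hv]
      ring
    rw [hab] at h1
    exact mul_left_cancel₀ (by simp [hPne]) h1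
  have hroots : (u : ℚ[X]).roots + (v : ℚ[X]).roots = sQ P := by
    have h2 := congrArg Polynomial.roots hprodeq
    rwa [roots_multiset_prod_X_sub_C, roots_multiset_prod_X_sub_C] at h2
  -- v has no roots
  have hvr : (v : ℚ[X]).roots = 0 := by
    by_contra hne
    obtain ⟨r, hr⟩ := Multiset.exists_mem_of_ne_zero hne
    have hrs : r ∈ sQ P := by
      rw [← hroots]
      exact Multiset.mem_add.mpr (Or.inr hr)
    obtain ⟨j, hj, rfl⟩ := Multiset.mem_map.mp hrs
    have hjP : j < P := Multiset.mem_range.mp hj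
    have hcount := congrArg (Multiset.count (rtQ P j)) hroots
    rw [Multiset.count_add] at hcount
    have hsnd : (sQ P).Nodup := (Multiset.nodup_range P).map (rtQ_injective P)
    have hc1 : Multiset.count (rtQ P j) (sQ P) ≤ 1 := Multiset.nodup_iff_count_le_one.mp hsnd (rtQ P j)
    have hcv : 1 ≤ Multiset.count (rtQ P j) ((v : ℚ[X]).roots) :=
      Multiset.one_le_count_iff_mem.mpr hr
    have hju : rtQ P j ∉ (u : ℚ[X]).roots := by
      intro hmem
      have := Multiset.one_le_count_iff_mem.mpr hmem
      omega
    have hle : (u : ℚ[X]).roots ≤ sQ P := by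
      rw [← hroots]
      exact Multiset.le_add_right _ _
    obtain ⟨t₀, ht₀le, ht₀⟩ := exists_preimage hle
    have hjt₀ : j ∉ t₀ := fun hmem => hju (ht₀ ▸ Multiset.mem_map_of_mem _ hmem)
    obtain ⟨z, hz⟩ := u.2 (rt P j)
    have heval : a * (((t₀.map fun i => rt P j - rt P i).prod : ℤ) : ℚ) = (z : ℚ) := by
      rw [hu, ht₀] at hz
      rw [show ((rt P j : ℤ) : ℚ) = rtQ P j from rfl] at hz
      rw [eval_mul, eval_C, eval_rootprod] at hz
      exact hz
    have hdvdN : ((a.den : ℕ) : ℤ) ∣ (t₀.map fun i => rt P j - rt P i).prod := den_dvd heval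
    have hPN : (P : ℤ) ∣ (t₀.map fun i => rt P j - rt P i).prod := hden.trans hdvdN
    obtain ⟨w, hwmem, hwdvd⟩ := (Nat.prime_iff_prime_int.mp hP).exists_mem_multiset_dvd hPN
    obtain ⟨i, hi, rfl⟩ := Multiset.mem_map.mp hwmem
    have hiP : i < P := Multiset.mem_range.mp (Multiset.mem_of_le ht₀le hi)
    have hij : i ≠ j := fun h => hjt₀ (h ▸ hi)
    exact not_dvd_rt_sub hP hiP hjP hij hwdvd
  have hvC : (v : ℚ[X]) = C b := by
    rw [hv, hvr]
    simp
  obtain ⟨n0, hn0⟩ := v.2 0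
  have hbn : b = (n0 : ℚ) := by
    rw [hvC] at hn0
    simpa using hn0
  have hn0ne : n0 ≠ 0 := by
    intro h0
    apply hv0
    rw [hvC, hbn, h0]
    simp
  have hunit : IsUnit n0 := by
    by_contra hnu
    have habs : n0.natAbs ≠ 1 := fun h1 => hnu (Int.isUnit_iff_natAbs_eq.mpr h1)
    obtain ⟨q, hq, hqdvd⟩ := Nat.exists_prime_and_dvd habs
    have hqn : (q : ℤ) ∣ n0 := (Int.natCast_dvd_natCast.mpr hqdvd).trans (Int.natAbs_dvd.mpr dvd_rfl)
    have key : ∀ x : ℤ, ∃ z : ℤ, Fv P x = (P : ℤ) * z * n0 := by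
      intro x
      obtain ⟨z, hz⟩ := u.2 x
      refine ⟨z, ?_⟩
      have h2 : ((Fv P x : ℤ) : ℚ) = (((P : ℤ) * z * n0 : ℤ) : ℚ) := by
        rw [← evalF, F_eq hP, eval_mul, eval_C, hval, eval_mul, hz, hvC, eval_C, hbn]
        push_cast
        ring
      exact_mod_cast h2
    rcases lt_trichotomy q P with hlt | heq | hgt
    · obtain ⟨z, hz⟩ := key 1
      exact Fv_one_not hq hlt (by rw [hz]; exact Dvd.dvd.mul_left hqn _)
    · obtain ⟨z, hz⟩ := key (P : ℤ)
      rw [heq] at hqn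
      obtain ⟨c, hc⟩ := hqn
      refine FvP_not hP ?_
      rw [hz, hc]
      exact ⟨z * c, by ring⟩
    · obtain ⟨x, hx⟩ := Fv_big hq hgt
      obtain ⟨z, hz⟩ := key x
      exact hx (by rw [hz]; exact Dvd.dvd.mul_left hqn _)
  exact isUnit_of_val_eq hunit (by rw [hvC, hbn])

lemma irreducible_gE {P : ℕ} (hP : P.Prime) : Irreducible (gE hP) := by
  have hPne : (P : ℚ) ≠ 0 := by exact_mod_cast hP.ne_zero
  constructor
  · intro h
    have h2 : IsUnit (gPoly P) := h.map (Subring.subtype IntValued)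
    have h3 := natDegree_eq_zero_of_isUnit h2
    rw [gPoly_natDegree hP] at h3
    exact hP.ne_zero h3
  · intro u v huv
    have hval : gPoly P = (u : ℚ[X]) * (v : ℚ[X]) := congrArg Subtype.val huv
    set a := (u : ℚ[X]).leadingCoeff with ha
    set b := (v : ℚ[X]).leadingCoeff with hb
    have hab : a * b = (P : ℚ)⁻¹ := by
      rw [ha, hb, ← leadingCoeff_mul, ← hval, gPoly_leadingCoeff]
    have hdena : ((a.den : ℕ) : ℚ) ≠ 0 := by exact_mod_cast a.den_nz
    have hdenb : ((b.den : ℕ) : ℚ) ≠ 0 := by exact_mod_cast b.den_nz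
    have h1a : (a.num : ℚ) = a * a.den := (div_eq_iff hdena).mp (Rat.num_div_den a)
    have h1b : (b.num : ℚ) = b * b.den := (div_eq_iff hdenb).mp (Rat.num_div_den b)
    have habP : a * b * P = 1 := by
      rw [hab]
      field_simp
    have hcast : (a.num : ℚ) * b.num * P = (a.den : ℚ) * b.den := by
      rw [h1a, h1b]
      linear_combination ((a.den : ℚ) * (b.den : ℚ)) * habP
    have hZ : a.num * b.num * (P : ℤ) = ((a.den : ℕ) : ℤ) * ((b.den : ℕ) : ℤ) := by
      exact_mod_cast hcast
    have hPdvd : (P : ℤ) ∣ ((a.den : ℕ) : ℤ) * ((b.den : ℕ) : ℤ) :=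
      ⟨a.num * b.num, by rw [← hZ]; ring⟩
    rcases (Nat.prime_iff_prime_int.mp hP).dvd_mul.mp hPdvd with h | h
    · exact Or.inr (aux_isUnit hP huv h)
    · exact Or.inl (aux_isUnit hP (by rw [huv, mul_comm]) h)

lemma fE_ne_zero (P : ℕ) : fE P ≠ 0 := by
  intro h
  have h2 := congrArg Subtype.val h
  rw [fE_val] at h2
  exact (F_monic P).ne_zero h2

lemma fE_not_isUnit {P : ℕ} (hP : P.Prime) : ¬ IsUnit (fE P) := by
  intro h
  have h2 : IsUnit ((fE P : ℚ[X])) := h.map (Subring.subtype IntValued)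
  rw [fE_val] at h2
  have h3 := natDegree_eq_zero_of_isUnit h2
  rw [F_natDegree] at h3
  exact hP.ne_zero h3

lemma fE_eq {P : ℕ} (hP : P.Prime) : fE P = pC P * gE hP := by
  apply Subtype.ext
  rw [coe_mul]
  rw [fE_val]
  exact F_eq hP

end ElasAux

open ElasAux

/-- The elasticity of `Int(ℤ)` is infinite: for every real `M` there is a nonzero
nonunit `f ∈ Int(ℤ)` and lengths `m, n ∈ L(f)` with `m / n > M`. -/
theorem elasticity_infinite (M : ℝ) :
    ∃ f : IntValued, f ≠ 0 ∧ ¬IsUnit f ∧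
      ∃ m n : ℕ,
        (∃ l : Multiset IntValued, Multiset.card l = m ∧ (∀ g ∈ l, Irreducible g) ∧
          l.prod = f) ∧
        (∃ l : Multiset IntValued, Multiset.card l = n ∧ (∀ g ∈ l, Irreducible g) ∧
          l.prod = f) ∧
        (m : ℝ) / (n : ℝ) > M := by
  obtain ⟨P, hPB, hP⟩ := Nat.exists_infinite_primes (⌈2 * M⌉₊ + 1)
  refine ⟨fE P, fE_ne_zero P, fE_not_isUnit hP, P, 2,
    ⟨(Multiset.range P).map (linE P), by simp, ?_, rfl⟩,
    ⟨{pC P, gE hP}, by simp, ?_, ?_⟩, ?_⟩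
  · intro g hg
    obtain ⟨i, _, rfl⟩ := Multiset.mem_map.mp hg
    exact irreducible_linE P i
  · intro g hg
    rcases Multiset.mem_cons.mp hg with h | h
    · rw [h]; exact irreducible_pC hP
    · rw [Multiset.mem_singleton.mp h]; exact irreducible_gE hP
  · rw [show ({pC P, gE hP} : Multiset IntValued).prod = pC P * gE hP from by
      simp [Multiset.prod_cons]]
    exact (fE_eq hP).symm
  · have h1 : 2 * M ≤ (⌈2 * M⌉₊ : ℝ) := Nat.le_ceil _
    have h2 : ((⌈2 * M⌉₊ : ℕ) : ℝ) + 1 ≤ (P : ℝ) := by exact_mod_cast hPB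
    rw [gt_iff_lt, lt_div_iff₀ (by norm_num : (0 : ℝ) < ((2 : ℕ) : ℝ))]
    push_cast
    linarith
end

section
/- Int(ℤ) is fully elastic: for every rational number q > 1 there exists a nonzero nonunit f ∈ Int(ℤ) with elasticity ρ(f) = q. In fact, f can be chosen so that its set of lengths is a two-element set {a, b} with a < b and b / a = q. -/
open Polynomial

namespace FE



/-- `k = 2w+3`, the (odd, ≥ 3) jump exponent. -/
def kk (w : ℕ) : ℕ := 2*w+3
/-- `M = φ(3^k) = 2·3^{k-1}`. -/
def MM (w : ℕ) : ℕ := 2*3^(2*w+2)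
/-- `s` with `M - k = 2s+1`. -/
def ss (w : ℕ) : ℕ := (MM w - kk w)/2

lemma kk_lt_MM (w : ℕ) : kk w < MM w := by
  have h := Nat.lt_pow_self (a := 3) (n := 2*w+2) (by norm_num)
  unfold kk MM; omega

lemma hMk (w : ℕ) : MM w = kk w + (2*ss w + 1) := by
  have h1 := kk_lt_MM w
  have h2 : Odd (MM w - kk w) := by
    refine Nat.Even.sub_odd (le_of_lt h1) ⟨3^(2*w+2), by unfold MM; ring⟩ ⟨w+1, by unfold kk; ring⟩
  obtain ⟨t, ht⟩ := h2
  unfold ss; omega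

/-- `e₁ = (3·9^s - 1)/2`. -/
def E1 (w : ℕ) : ℤ := (3 * 9^(ss w) - 1)/2

lemma E1_eq (w : ℕ) : ∃ m : ℤ, (9:ℤ)^(ss w) = 8*m+1 ∧ E1 w = 12*m+1 := by
  have h9 : (9:ℤ)^(ss w) ≡ 1^(ss w) [ZMOD 8] := Int.ModEq.pow _ (by decide)
  rw [one_pow] at h9
  obtain ⟨m, hm⟩ := (Int.modEq_iff_dvd.mp h9.symm)
  refine ⟨m, by omega, ?_⟩
  have : (3 * 9^(ss w) - 1 : ℤ) = 2*(12*m+1) := by omega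
  rw [E1, this]
  omega

/-- the polynomial `g` over ℤ. -/
noncomputable def gZ (w : ℕ) : ℤ[X] :=
  C (1+8*3^(2*w+1)) * X^(kk w) + C (-((3^(kk w)-1)*3^(2*w+1))) * X^2
    + C ((3^(2*w+1)-1)*3^(kk w))

/-- the polynomial `h` over ℤ. -/
noncomputable def hZ (w : ℕ) : ℤ[X] :=
  C 3 * X^(MM w+1) + C (-10) * X^(MM w) + C (3^(kk w)*E1 w - 3) * X
    + C (3^(kk w)*(1-E1 w)+10)

lemma pow_kk (w : ℕ) : (3:ℤ)^(kk w) = 9 * 3^(2*w+1) := by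
  rw [kk, show 2*w+3 = (2*w+1)+2 by omega, pow_add]; ring

lemma pow_MM (w : ℕ) : (3:ℤ)^(MM w) = 3^(kk w) * (3 * 9^(ss w)) := by
  rw [hMk w, pow_add, pow_succ, pow_mul]
  ring

lemma gZ_eval_one (w : ℕ) : (gZ w).eval 1 = 1 := by
  simp [gZ, pow_kk]; ring

lemma gZ_eval_three (w : ℕ) : (gZ w).eval 3 = 3^(kk w) := by
  have hk : (3:ℤ)^(kk w) = 9 * 3^(2*w+1) := pow_kk w
  simp [gZ]
  rw [hk]; ring

lemma hZ_eval_one (w : ℕ) : (hZ w).eval 1 = 3^(kk w) := by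
  simp [hZ]; ring

lemma hZ_eval_three (w : ℕ) : (hZ w).eval 3 = 1 := by
  have hM : (3:ℤ)^(MM w) = 3^(kk w) * (3 * 9^(ss w)) := pow_MM w
  have h2 : (2:ℤ) * E1 w = 3 * 9^(ss w) - 1 := by
    obtain ⟨m, hm1, hm2⟩ := E1_eq w
    rw [hm2, hm1]; ring
  simp [hZ]
  rw [show (3:ℤ)^(MM w + 1) = 3 * 3^(MM w) by rw [pow_succ]; ring, hM]
  linear_combination (3:ℤ)^(kk w) * h2

lemma gZ_dvd (w : ℕ) (c : ℤ) (hc : 3 ∣ c) : (3:ℤ)^(kk w) ∣ (gZ w).eval c := by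
  obtain ⟨c', rfl⟩ := hc
  refine ⟨(1+8*3^(2*w+1)) * c'^(kk w) - (3^(kk w) - 1)*c'^2 + (3^(2*w+1) - 1), ?_⟩
  simp [gZ, mul_pow]
  rw [pow_kk]
  ring

lemma hZ_eval_expand (w : ℕ) (c : ℤ) :
    (hZ w).eval c = (c^(MM w) - 1) * (3*c - 10) + 3^(kk w) * (E1 w * c + (1 - E1 w)) := by
  simp [hZ]
  rw [pow_succ]
  ring

/-- Euler: `3 ∤ c → 3^k ∣ c^M - 1`. -/
lemma euler (w : ℕ) (c : ℤ) (hc : ¬ (3:ℤ) ∣ c) : (3:ℤ)^(kk w) ∣ c^(MM w) - 1 := by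
  set N : ℕ := 3^(kk w) with hN
  have hN0 : (N:ℤ) ≠ 0 := by positivity
  have hNpos : 0 < N := by positivity
  set c₀ : ℕ := (c % N).toNat with hc₀
  have hcast : ((c₀ : ℤ)) = c % N := Int.toNat_of_nonneg (Int.emod_nonneg c hN0)
  have hdvd3 : ¬ (3:ℕ) ∣ c₀ := by
    intro h3
    apply hc
    have : (3:ℤ) ∣ (c₀:ℤ) := by exact_mod_cast Int.natCast_dvd_natCast.mpr h3
    rw [hcast] at this
    have h3N : (3:ℤ) ∣ (N:ℤ) := by
      rw [hN]; push_cast; exact dvd_pow_self 3 (by unfold kk; omega)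
    have hsplit : c = (N:ℤ) * (c / N) + c % N := (Int.mul_ediv_add_emod c N).symm
    rw [hsplit]
    exact dvd_add (h3N.mul_right _) this
  have hcop : c₀.Coprime N := by
    rw [hN]
    exact Nat.Coprime.pow_right _ ((Nat.coprime_comm).mp ((Nat.Prime.coprime_iff_not_dvd (by norm_num)).mpr hdvd3))
  have hu := ZMod.pow_totient (ZMod.unitOfCoprime c₀ hcop)
  have htot : N.totient = MM w := by
    rw [hN, Nat.totient_prime_pow (by norm_num) (by unfold kk; omega)]
    rw [MM, kk]
    rw [show 2*w+3-1 = 2*w+2 by omega]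
    ring
  rw [htot] at hu
  have hx : ((c₀ : ZMod N))^(MM w) = 1 := by
    rw [← ZMod.coe_unitOfCoprime c₀ hcop, ← Units.val_pow_eq_pow_val, hu, Units.val_one]
  have hcc : ((c : ZMod N)) = ((c₀:ℤ) : ZMod N) := by
    rw [hcast, ZMod.intCast_mod]
  have : ((c^(MM w) - 1 : ℤ) : ZMod N) = 0 := by
    push_cast
    rw [hcc]
    push_cast
    rw [hx]
    ring
  have := (ZMod.intCast_zmod_eq_zero_iff_dvd _ _).mp this
  rw [hN] at this
  exact_mod_cast this

lemma hZ_dvd (w : ℕ) (c : ℤ) (hc : ¬ (3:ℤ) ∣ c) : (3:ℤ)^(kk w) ∣ (hZ w).eval c := by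
  rw [hZ_eval_expand]
  exact dvd_add (Dvd.dvd.mul_right (euler w c hc) _) (Dvd.intro _ rfl)

lemma ghZ_dvd (w : ℕ) (c : ℤ) : (3:ℤ)^(kk w) ∣ (gZ w).eval c * (hZ w).eval c := by
  by_cases h : (3:ℤ) ∣ c
  · exact Dvd.dvd.mul_right (gZ_dvd w c h) _
  · exact Dvd.dvd.mul_left (hZ_dvd w c h) _


lemma nine_pow (t : ℕ) : ∃ m : ℤ, (9:ℤ)^t = 8*m+1 := by
  have h9 : (9:ℤ)^t ≡ 1^t [ZMOD 8] := Int.ModEq.pow _ (by decide)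
  rw [one_pow] at h9
  obtain ⟨m, hm⟩ := (Int.modEq_iff_dvd.mp h9.symm)
  exact ⟨m, by omega⟩

lemma three_pow_odd (t : ℕ) : ∃ m : ℤ, (3:ℤ)^t = 2*m+1 := by
  obtain ⟨m, hm⟩ := Int.odd_pow.mpr (Or.inl ⟨1, by norm_num⟩ : Odd (3:ℤ) ∨ t = 0)
  exact ⟨m, by omega⟩

lemma three_pow_2w1 (t : ℕ) : ∃ m : ℤ, (3:ℤ)^(2*t+1) = 24*m+3 := by
  obtain ⟨m, hm⟩ := nine_pow t
  refine ⟨m, ?_⟩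
  rw [pow_succ, pow_mul]
  norm_num
  linarith [hm]

lemma MM_big (w : ℕ) : 1 < MM w := by have := kk_lt_MM w; unfold kk at this; omega

lemma gZ_natDegree (w : ℕ) : (gZ w).natDegree = kk w := by
  have h2 : 2 < kk w := by unfold kk; omega
  have hpos : (0:ℤ) < 1+8*3^(2*w+1) := by positivity
  unfold gZ
  compute_degree!
  · rw [if_neg (by omega), if_neg (by omega)]; omega
  · omega
  · omega

lemma hZ_natDegree (w : ℕ) : (hZ w).natDegree = MM w + 1 := by
  have h2 : 1 < MM w := MM_big w
  unfold hZ
  compute_degree!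
  rw [if_neg (by omega)]
  norm_num

lemma gZ_ne_zero (w : ℕ) : gZ w ≠ 0 := fun h => by
  have := gZ_natDegree w; rw [h] at this; unfold kk at this; simp at this

lemma hZ_ne_zero (w : ℕ) : hZ w ≠ 0 := fun h => by
  have := hZ_natDegree w; rw [h] at this; simp at this

lemma gZ_primitive (w : ℕ) : (gZ w).IsPrimitive := by
  intro r hr
  have : r ∣ (gZ w).eval 1 := by
    have := map_dvd (evalRingHom (1:ℤ)) hr
    simpa using this
  rw [gZ_eval_one] at this
  exact isUnit_of_dvd_one this

lemma hZ_primitive (w : ℕ) : (hZ w).IsPrimitive := by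
  intro r hr
  have : r ∣ (hZ w).eval 3 := by
    have := map_dvd (evalRingHom (3:ℤ)) hr
    simpa using this
  rw [hZ_eval_three] at this
  exact isUnit_of_dvd_one this

lemma gZ_coeff_top (w : ℕ) : (gZ w).coeff (kk w) = 1+8*3^(2*w+1) := by
  have h2 : 2 < kk w := by unfold kk; omega
  simp only [gZ, coeff_add, coeff_C_mul, coeff_X_pow, coeff_C, if_true]
  rw [if_neg (by omega), if_neg (by omega)]
  ring

lemma gZ_irred (w : ℕ) : Irreducible (gZ w) := by
  have h2 : 2 < kk w := by unfold kk; omega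
  have hdeg : (gZ w).natDegree = kk w := gZ_natDegree w
  have hdeg' : (gZ w).degree = kk w := by
    rw [degree_eq_natDegree (gZ_ne_zero w), hdeg]
  obtain ⟨t, ht⟩ := three_pow_odd (kk w)
  obtain ⟨m, hm⟩ := three_pow_2w1 w
  refine irreducible_of_eisenstein_criterion
    (Ideal.span_singleton_prime (by norm_num) |>.mpr Int.prime_two) ?_ ?_ ?_ ?_ (gZ_primitive w)
  · rw [leadingCoeff, hdeg, gZ_coeff_top]
    rw [Ideal.mem_span_singleton]
    omega
  · intro n hn
    rw [hdeg'] at hn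
    have hn' : n < kk w := by exact_mod_cast hn
    rw [Ideal.mem_span_singleton]
    simp only [gZ, coeff_add, coeff_C_mul, coeff_X_pow, coeff_C]
    rw [if_neg (by omega)]
    split_ifs with hA hB hB
    · omega
    · refine ⟨-(t*3^(2*w+1)), by linear_combination (-(3:ℤ)^(2*w+1)) * ht⟩
    · refine ⟨(12*m+1)*(2*t+1), by linear_combination (3:ℤ)^(kk w) * hm + (24*m+2) * ht⟩
    · simp
  · rw [hdeg']
    exact_mod_cast (by omega : (0:ℕ) < kk w)
  · rw [Ideal.span_singleton_pow, Ideal.mem_span_singleton]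
    simp only [gZ, coeff_add, coeff_C_mul, coeff_X_pow, coeff_C, if_true]
    rw [if_neg (by omega), if_neg (by omega)]
    intro hdvd
    obtain ⟨y, hy⟩ := hdvd
    have hkey : ((3:ℤ)^(2*w+1)-1)*3^(kk w) = 4*(12*m*t+6*m+t)+2 := by
      linear_combination (3:ℤ)^(kk w) * hm + (24*m+2) * ht
    simp only [mul_zero, zero_add, mul_one] at hy ⊢
    omega


lemma hZ_coeff_top (w : ℕ) : (hZ w).coeff (MM w + 1) = 3 := by
  have h2 : 1 < MM w := MM_big w
  simp only [hZ, coeff_add, coeff_C_mul, coeff_X_pow, coeff_C, coeff_X, if_true,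
    mul_ite, mul_one, mul_zero]
  rw [if_neg (by omega), if_neg (by omega), if_neg (by omega)]
  ring

lemma hZ_irred (w : ℕ) : Irreducible (hZ w) := by
  have h2 : 1 < MM w := MM_big w
  have hdeg : (hZ w).natDegree = MM w + 1 := hZ_natDegree w
  have hdeg' : (hZ w).degree = (MM w + 1 : ℕ) := by
    rw [degree_eq_natDegree (hZ_ne_zero w), hdeg]
  obtain ⟨t, ht⟩ := three_pow_odd (kk w)
  obtain ⟨m, hm9, hmE⟩ := E1_eq w
  refine irreducible_of_eisenstein_criterion
    (Ideal.span_singleton_prime (by norm_num) |>.mpr Int.prime_two) ?_ ?_ ?_ ?_ (hZ_primitive w)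
  · rw [leadingCoeff, hdeg, hZ_coeff_top]
    rw [Ideal.mem_span_singleton]
    omega
  · intro n hn
    rw [hdeg'] at hn
    have hn' : n < MM w + 1 := by exact_mod_cast hn
    rw [Ideal.mem_span_singleton]
    simp only [hZ, coeff_add, coeff_C_mul, coeff_X_pow, coeff_C, coeff_X]
    rw [if_neg (by omega : ¬ n = MM w + 1), hmE]
    rcases eq_or_ne n (MM w) with rfl | hMn
    · rw [if_pos rfl, if_neg (by omega : ¬ (1:ℕ) = MM w), if_neg (by omega : ¬ MM w = 0)]
      exact ⟨-5, by ring⟩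
    · rw [if_neg hMn]
      rcases eq_or_ne n 1 with rfl | h1n
      · rw [if_pos rfl, if_neg (by omega : ¬ (1:ℕ) = 0)]
        exact ⟨12*m*t + t + 6*m - 1, by linear_combination ((12:ℤ)*m+1) * ht⟩
      · rw [if_neg (fun hh => h1n hh.symm)]
        rcases eq_or_ne n 0 with rfl | h0n
        · rw [if_pos rfl]
          exact ⟨-(12*m*t) - 6*m + 5, by linear_combination (-(12:ℤ)*m) * ht⟩
        · rw [if_neg h0n]
          exact ⟨0, by ring⟩
  · rw [hdeg']
    exact_mod_cast (by omega : (0:ℕ) < MM w + 1)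
  · rw [Ideal.span_singleton_pow, Ideal.mem_span_singleton]
    have hc0 : (hZ w).coeff 0 = 3^(kk w)*(1-E1 w)+10 := by
      simp only [hZ, coeff_add, coeff_C_mul, coeff_X_pow, coeff_C, coeff_X]
      rw [if_neg (by omega : ¬ (0:ℕ) = MM w + 1), if_neg (by omega : ¬ (0:ℕ) = MM w),
        if_neg (by omega : ¬ (1:ℕ) = 0)]
      simp
    rw [hc0, hmE]
    intro hdvd
    obtain ⟨y, hy⟩ := hdvd
    have hkey : (3:ℤ)^(kk w)*(1-(12*m+1))+10 = 4*(-(6*m*t) - 3*m + 2)+2 := by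
      linear_combination (-(12:ℤ)*m) * ht
    omega

noncomputable def gQ (w : ℕ) : ℚ[X] := (gZ w).map (Int.castRingHom ℚ)
noncomputable def hQ (w : ℕ) : ℚ[X] := (hZ w).map (Int.castRingHom ℚ)

lemma gQ_eval (w : ℕ) (c : ℤ) : (gQ w).eval (c:ℚ) = (((gZ w).eval c : ℤ) : ℚ) := by
  simp [gQ]

lemma hQ_eval (w : ℕ) (c : ℤ) : (hQ w).eval (c:ℚ) = (((hZ w).eval c : ℤ) : ℚ) := by
  simp [hQ]

lemma gQ_irred (w : ℕ) : Irreducible (gQ w) :=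
  (Polynomial.IsPrimitive.Int.irreducible_iff_irreducible_map_cast (gZ_primitive w)).mp (gZ_irred w)

lemma hQ_irred (w : ℕ) : Irreducible (hQ w) :=
  (Polynomial.IsPrimitive.Int.irreducible_iff_irreducible_map_cast (hZ_primitive w)).mp (hZ_irred w)

lemma gQ_natDegree (w : ℕ) : (gQ w).natDegree = kk w := by
  rw [gQ, natDegree_map_eq_of_injective Int.cast_injective, gZ_natDegree]

lemma hQ_natDegree (w : ℕ) : (hQ w).natDegree = MM w + 1 := by
  rw [hQ, natDegree_map_eq_of_injective Int.cast_injective, hZ_natDegree]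

lemma gQ_ne_zero (w : ℕ) : gQ w ≠ 0 := (gQ_irred w).ne_zero
lemma hQ_ne_zero (w : ℕ) : hQ w ≠ 0 := (hQ_irred w).ne_zero

lemma gQ_not_dvd_hQ (w : ℕ) : ¬ (gQ w ∣ hQ w) := by
  intro hdvd
  have h1 := (gQ_irred w).associated_of_dvd (hQ_irred w) hdvd
  have h2 : (gQ w).natDegree = (hQ w).natDegree :=
    le_antisymm (natDegree_le_of_dvd h1.dvd (hQ_ne_zero w))
      (natDegree_le_of_dvd h1.symm.dvd (gQ_ne_zero w))
  rw [gQ_natDegree, hQ_natDegree] at h2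
  have := kk_lt_MM w
  omega

/-- the shape `C r * g^i * h^j`. -/
noncomputable def shp (w : ℕ) (r : ℚ) (i j : ℕ) : ℚ[X] := C r * (gQ w)^i * (hQ w)^j

lemma shp_natDegree (w : ℕ) (r : ℚ) (hr : r ≠ 0) (i j : ℕ) :
    (shp w r i j).natDegree = i * kk w + j * (MM w + 1) := by
  rw [shp, natDegree_mul (by simp [hr, pow_eq_zero_iff, gQ_ne_zero w]) (pow_ne_zero _ (hQ_ne_zero w)),
    natDegree_mul (by simp [hr]) (pow_ne_zero _ (gQ_ne_zero w))]
  simp [natDegree_pow, gQ_natDegree, hQ_natDegree]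

lemma shp_ne_zero (w : ℕ) (r : ℚ) (hr : r ≠ 0) (i j : ℕ) : shp w r i j ≠ 0 := by
  simp [shp, hr, pow_eq_zero_iff', gQ_ne_zero w, hQ_ne_zero w]

/-- Backward membership: if `r·3^(k·min i j)` is an integer then `C r g^i h^j` is
integer-valued. -/
lemma shp_mem (w : ℕ) (r : ℚ) (i j : ℕ) (z : ℤ) (hz : r * 3^(kk w * min i j) = (z:ℚ)) :
    shp w r i j ∈ IntValued := by
  intro c
  have hdvd : (3:ℤ)^(kk w * min i j) ∣ ((gZ w).eval c)^i * ((hZ w).eval c)^j := by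
    rw [pow_mul]
    by_cases h3 : (3:ℤ) ∣ c
    · apply Dvd.dvd.mul_right
      calc ((3:ℤ)^(kk w))^(min i j) ∣ ((gZ w).eval c)^(min i j) :=
            pow_dvd_pow_of_dvd (gZ_dvd w c h3) _
        _ ∣ ((gZ w).eval c)^i := pow_dvd_pow _ (Nat.min_le_left _ _)
    · apply Dvd.dvd.mul_left
      calc ((3:ℤ)^(kk w))^(min i j) ∣ ((hZ w).eval c)^(min i j) :=
            pow_dvd_pow_of_dvd (hZ_dvd w c h3) _
        _ ∣ ((hZ w).eval c)^j := pow_dvd_pow _ (Nat.min_le_right _ _)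
  obtain ⟨y, hy⟩ := hdvd
  refine ⟨z * y, ?_⟩
  have heval : (shp w r i j).eval (c:ℚ)
      = r * ((((gZ w).eval c : ℤ) : ℚ))^i * ((((hZ w).eval c : ℤ) : ℚ))^j := by
    simp [shp, gQ_eval, hQ_eval]
  rw [heval]
  have hyQ : ((((gZ w).eval c : ℤ) : ℚ))^i * ((((hZ w).eval c : ℤ) : ℚ))^j
      = 3^(kk w * min i j) * (y:ℚ) := by
    exact_mod_cast congrArg (fun z : ℤ => (z:ℚ)) hy
  push_cast
  rw [mul_assoc, hyQ, ← mul_assoc, hz]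

/-- Forward: scalar constraints from membership. -/
lemma shp_scalar (w : ℕ) (r : ℚ) (i j : ℕ) (hmem : shp w r i j ∈ IntValued) :
    (∃ z : ℤ, r * 3^(kk w * j) = (z:ℚ)) ∧ (∃ z : ℤ, r * 3^(kk w * i) = (z:ℚ)) := by
  constructor
  · obtain ⟨m, hm⟩ := hmem 1
    refine ⟨m, ?_⟩
    rw [← hm]
    have h1 : (1:ℚ) = ((1:ℤ):ℚ) := by norm_num
    rw [shp]
    simp only [eval_mul, eval_pow, eval_C, h1, gQ_eval, hQ_eval, gZ_eval_one, hZ_eval_one]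
    push_cast
    rw [one_pow, ← pow_mul]
    ring
  · obtain ⟨m, hm⟩ := hmem 3
    refine ⟨m, ?_⟩
    rw [← hm]
    have h1 : (3:ℚ) = ((3:ℤ):ℚ) := by norm_num
    rw [shp]
    simp only [eval_mul, eval_pow, eval_C, h1, gQ_eval, hQ_eval, gZ_eval_three, hZ_eval_three]
    push_cast
    rw [one_pow, ← pow_mul]
    ring

lemma const_mem (z : ℤ) : (C (z:ℚ) : ℚ[X]) ∈ IntValued := fun c => ⟨z, by simp⟩

lemma const_int (F : IntValued) (r : ℚ) (h : (F:ℚ[X]) = C r) : ∃ z : ℤ, r = (z:ℚ) := by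
  obtain ⟨m, hm⟩ := F.2 0
  rw [h] at hm
  simp at hm
  exact ⟨m, hm⟩

lemma coe_prod (l : Multiset IntValued) :
    ((l.prod : IntValued) : ℚ[X]) = (l.map (fun F => (F:ℚ[X]))).prod := by
  induction l using Multiset.induction_on with
  | empty => simp
  | cons a s ih => simp [ih]

lemma isUnit_iff_iv (F : IntValued) : IsUnit F ↔ ((F:ℚ[X]) = 1 ∨ (F:ℚ[X]) = -1) := by
  constructor
  · rintro ⟨u, rfl⟩
    have hmul : ((u.val : IntValued) : ℚ[X]) * ((u.inv : IntValued) : ℚ[X]) = 1 := by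
      calc ((u.val : IntValued) : ℚ[X]) * ((u.inv : IntValued) : ℚ[X])
          = ((u.val * u.inv : IntValued) : ℚ[X]) := by norm_cast
        _ = ((1 : IntValued) : ℚ[X]) := by rw [u.val_inv]
        _ = 1 := rfl
    have h1 : IsUnit ((u.val : IntValued) : ℚ[X]) := IsUnit.of_mul_eq_one _ hmul
    have h2 : IsUnit ((u.inv : IntValued) : ℚ[X]) :=
      IsUnit.of_mul_eq_one _ (by rw [mul_comm]; exact hmul)
    obtain ⟨r, hr, hC⟩ := Polynomial.isUnit_iff.mp h1
    obtain ⟨r', hr', hCr'⟩ := Polynomial.isUnit_iff.mp h2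
    obtain ⟨z, hz⟩ := const_int u.val r hC.symm
    obtain ⟨z', hz'⟩ := const_int u.inv r' hCr'.symm
    have hmul2 := hmul
    rw [← hC, ← hCr', ← C_mul, show (1:ℚ[X]) = C 1 from rfl] at hmul2
    have hrr : r * r' = 1 := C_inj.mp hmul2
    rw [hz, hz'] at hrr
    have hzz : z * z' = 1 := by exact_mod_cast hrr
    have : z = 1 ∨ z = -1 := Int.isUnit_iff.mp (IsUnit.of_mul_eq_one _ hzz)
    rcases this with h | h
    · left; rw [← hC, hz, h]; simp
    · right; rw [← hC, hz, h]; simp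
  · intro h
    rcases h with h | h
    · have : F = 1 := Subtype.ext (by rw [h]; rfl)
      rw [this]; exact isUnit_one
    · have : F = -1 := Subtype.ext (by rw [h]; rfl)
      rw [this]; exact (isUnit_one.neg)

lemma not_unit_of_deg (F : IntValued) (h : 0 < (F:ℚ[X]).natDegree) : ¬ IsUnit F := by
  intro hu
  rcases (isUnit_iff_iv F).mp hu with h1 | h1 <;> rw [h1] at h <;> simp at h

lemma not_unit_const (F : IntValued) (z : ℤ) (hz : z.natAbs ≠ 1) (h : (F:ℚ[X]) = C (z:ℚ)) :
    ¬ IsUnit F := by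
  intro hu
  rcases (isUnit_iff_iv F).mp hu with h1 | h1 <;> rw [h1] at h
  · have h2 : (z:ℚ) = 1 := C_inj.mp (h ▸ rfl : C (1:ℚ) = C (z:ℚ)).symm
    have : z = 1 := by exact_mod_cast h2
    omega
  · have h2 : C ((-1:ℚ)) = C ((z:ℚ)) := by rw [← h]; simp
    have h3 : (z:ℚ) = -1 := (C_inj.mp h2).symm
    have : z = -1 := by exact_mod_cast h3
    rw [this] at hz
    simp at hz


lemma gQ_mem (w : ℕ) : gQ w ∈ IntValued := fun c => ⟨(gZ w).eval c, gQ_eval w c⟩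
lemma hQ_mem (w : ℕ) : hQ w ∈ IntValued := fun c => ⟨(hZ w).eval c, hQ_eval w c⟩

lemma kk_pos (w : ℕ) : 0 < kk w := by unfold kk; omega

lemma hQ_not_dvd_gQ (w : ℕ) : ¬ (hQ w ∣ gQ w) := by
  intro hdvd
  have h1 := (hQ_irred w).associated_of_dvd (gQ_irred w) hdvd
  have h2 : (hQ w).natDegree = (gQ w).natDegree :=
    le_antisymm (natDegree_le_of_dvd h1.dvd (gQ_ne_zero w))
      (natDegree_le_of_dvd h1.symm.dvd (hQ_ne_zero w))
  rw [gQ_natDegree, hQ_natDegree] at h2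
  have := kk_lt_MM w
  omega

lemma gQ_prime (w : ℕ) : Prime (gQ w) :=
  (UniqueFactorizationMonoid.irreducible_iff_prime).mp (gQ_irred w)
lemma hQ_prime (w : ℕ) : Prime (hQ w) :=
  (UniqueFactorizationMonoid.irreducible_iff_prime).mp (hQ_irred w)

/-- Every divisor of `g^i h^j` in `ℚ[X]` has the form `C r * g^{i'} * h^{j'}`. -/
lemma dvd_struct (w : ℕ) (p : ℚ[X]) (hp : p ≠ 0) (i j : ℕ)
    (hdvd : p ∣ (gQ w)^i * (hQ w)^j) :
    ∃ (i' j' : ℕ) (r : ℚ), r ≠ 0 ∧ p = shp w r i' j' := by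
  obtain ⟨N, hN⟩ : ∃ N, p.natDegree = N := ⟨_, rfl⟩
  induction N using Nat.strong_induction_on generalizing p i j with
  | _ N IH =>
    rcases Nat.eq_zero_or_pos N with h0 | hpos
    · subst h0
      obtain ⟨r, hr⟩ := Polynomial.natDegree_eq_zero.mp hN
      refine ⟨0, 0, r, ?_, by rw [shp]; simp [← hr]⟩
      intro h0; rw [h0] at hr; simp at hr; exact hp hr.symm
    · have hnu : ¬ IsUnit p := by
        intro hu
        rw [Polynomial.natDegree_eq_zero_of_isUnit hu] at hN; omega
      obtain ⟨π, hπirr, hπdvd⟩ := WfDvdMonoid.exists_irreducible_factor hnu hp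
      have hπprime : Prime π := (UniqueFactorizationMonoid.irreducible_iff_prime).mp hπirr
      have hgh : π ∣ (gQ w)^i * (hQ w)^j := dvd_trans hπdvd hdvd
      rcases hπprime.2.2 _ _ hgh with hg | hh
      · have hg' : π ∣ gQ w := hπprime.dvd_of_dvd_pow hg
        have hassoc := hπirr.associated_of_dvd (gQ_irred w) hg'
        have hgp : gQ w ∣ p := (hassoc.symm.dvd).trans hπdvd
        have hi : i ≠ 0 := by
          rintro rfl
          simp only [pow_zero, one_mul] at hdvd
          exact gQ_not_dvd_hQ w ((gQ_prime w).dvd_of_dvd_pow (hgp.trans hdvd))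
        obtain ⟨i0, rfl⟩ : ∃ i0, i = i0 + 1 := ⟨i - 1, by omega⟩
        obtain ⟨p', hp'⟩ := hgp
        have hp'0 : p' ≠ 0 := by rintro rfl; rw [mul_zero] at hp'; exact hp hp'
        have hdvd' : p' ∣ (gQ w)^i0 * (hQ w)^j := by
          have h2 : gQ w * p' ∣ gQ w * ((gQ w)^i0 * (hQ w)^j) := by
            have heq : gQ w * ((gQ w)^i0 * (hQ w)^j) = (gQ w)^(i0+1) * (hQ w)^j := by ring
            rw [← hp', heq]
            exact hdvd
          exact (mul_dvd_mul_iff_left (gQ_ne_zero w)).mp h2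
        have hdeg : p'.natDegree < N := by
          have := natDegree_mul (gQ_ne_zero w) hp'0
          rw [← hp', hN, gQ_natDegree] at this
          have := kk_pos w
          omega
        obtain ⟨i', j', r, hr, hshape⟩ := IH _ hdeg p' hp'0 i0 j hdvd' rfl
        refine ⟨i'+1, j', r, hr, ?_⟩
        rw [hp', hshape, shp, shp]
        ring
      · have hh' : π ∣ hQ w := hπprime.dvd_of_dvd_pow hh
        have hassoc := hπirr.associated_of_dvd (hQ_irred w) hh'
        have hhp : hQ w ∣ p := (hassoc.symm.dvd).trans hπdvd
        have hj : j ≠ 0 := by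
          rintro rfl
          simp only [pow_zero, mul_one] at hdvd
          exact hQ_not_dvd_gQ w ((hQ_prime w).dvd_of_dvd_pow (hhp.trans hdvd))
        obtain ⟨j0, rfl⟩ : ∃ j0, j = j0 + 1 := ⟨j - 1, by omega⟩
        obtain ⟨p', hp'⟩ := hhp
        have hp'0 : p' ≠ 0 := by rintro rfl; rw [mul_zero] at hp'; exact hp hp'
        have hdvd' : p' ∣ (gQ w)^i * (hQ w)^j0 := by
          have h2 : hQ w * p' ∣ hQ w * ((gQ w)^i * (hQ w)^j0) := by
            have heq : hQ w * ((gQ w)^i * (hQ w)^j0) = (gQ w)^i * (hQ w)^(j0+1) := by ring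
            rw [← hp', heq]
            exact hdvd
          exact (mul_dvd_mul_iff_left (hQ_ne_zero w)).mp h2
        have hdeg : p'.natDegree < N := by
          have := natDegree_mul (hQ_ne_zero w) hp'0
          rw [← hp', hN, hQ_natDegree] at this
          omega
        obtain ⟨i', j', r, hr, hshape⟩ := IH _ hdeg p' hp'0 i j0 hdvd' rfl
        refine ⟨i', j'+1, r, hr, ?_⟩
        rw [hp', hshape, shp, shp]
        ring

lemma eq_aux (w : ℕ) (γ : ℚ) (hγ : γ ≠ 0) {δ : ℚ} {I J n' m' : ℕ}
    (h : shp w γ I J = shp w δ n' m') (hlt : I < n') : False := by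
  obtain ⟨d, rfl⟩ : ∃ d, n' = I + (d + 1) := ⟨n' - I - 1, by omega⟩
  have hne : (gQ w)^I ≠ 0 := pow_ne_zero _ (gQ_ne_zero w)
  have h2 : (gQ w)^I * (C γ * (hQ w)^J)
      = (gQ w)^I * (C δ * (gQ w)^(d+1) * (hQ w)^m') := by
    rw [shp, shp] at h
    linear_combination h
  have h3 := mul_left_cancel₀ hne h2
  have hdvd : gQ w ∣ C γ * (hQ w)^J := by
    rw [h3]
    exact ⟨C δ * gQ w ^ d * hQ w ^ m', by ring⟩
  rcases (gQ_prime w).2.2 _ _ hdvd with hc | hh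
  · have hC0 : (C γ : ℚ[X]) ≠ 0 := by simp [hγ]
    have := natDegree_le_of_dvd hc hC0
    rw [gQ_natDegree] at this
    simp at this
    have := kk_pos w
    omega
  · exact gQ_not_dvd_hQ w ((gQ_prime w).dvd_of_dvd_pow hh)

lemma eq_shape (w : ℕ) (γ δ : ℚ) (hγ : γ ≠ 0) (hδ : δ ≠ 0) (I J n' m' : ℕ)
    (h : shp w γ I J = shp w δ n' m') : I = n' ∧ J = m' ∧ γ = δ := by
  have hI : I = n' := by
    rcases lt_trichotomy I n' with hlt | heq | hgt
    · exact absurd (eq_aux w γ hγ h hlt) (by simp)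
    · exact heq
    · exact absurd (eq_aux w δ hδ h.symm hgt) (by simp)
  subst hI
  have hdegs := congrArg Polynomial.natDegree h
  rw [shp_natDegree w γ hγ, shp_natDegree w δ hδ] at hdegs
  have hJ : J = m' := by
    have : 0 < MM w + 1 := by omega
    exact Nat.eq_of_mul_eq_mul_right this (by omega)
  subst hJ
  refine ⟨rfl, rfl, ?_⟩
  rw [shp, shp] at h
  have hne : (gQ w)^I * (hQ w)^J ≠ 0 :=
    mul_ne_zero (pow_ne_zero _ (gQ_ne_zero w)) (pow_ne_zero _ (hQ_ne_zero w))
  have h2 : C γ * ((gQ w)^I * (hQ w)^J) = C δ * ((gQ w)^I * (hQ w)^J) := by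
    linear_combination h
  exact C_inj.mp (mul_right_cancel₀ hne h2)



lemma shp_mul (w : ℕ) (r1 r2 : ℚ) (i1 j1 i2 j2 : ℕ) :
    shp w r1 i1 j1 * shp w r2 i2 j2 = shp w (r1*r2) (i1+i2) (j1+j2) := by
  rw [shp, shp, shp, C_mul]; ring

lemma pow_kk_pos (w : ℕ) : (0:ℚ) < 3^(kk w) := by positivity

lemma unit_of_isUnit_int (F : IntValued) (z : ℤ) (hz : IsUnit z) (h : (F:ℚ[X]) = C (z:ℚ)) :
    IsUnit F := by
  rcases Int.isUnit_iff.mp hz with rfl | rfl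
  · exact (isUnit_iff_iv F).mpr (Or.inl (by rw [h]; simp))
  · exact (isUnit_iff_iv F).mpr (Or.inr (by rw [h]; simp))

noncomputable def GG (w : ℕ) : IntValued := ⟨gQ w, gQ_mem w⟩
noncomputable def HH (w : ℕ) : IntValued := ⟨hQ w, hQ_mem w⟩
noncomputable def T3 : IntValued := ⟨C (3:ℚ), by simpa using const_mem 3⟩
noncomputable def CC3 (w : ℕ) : IntValued :=
  ⟨shp w ((3:ℚ)^(kk w))⁻¹ 1 1, shp_mem w _ 1 1 1 (by
    rw [min_self, mul_one]
    push_cast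
    rw [inv_mul_cancel₀ (by positivity)])⟩

lemma GG_irr (w : ℕ) : Irreducible (GG w) := by
  constructor
  · exact not_unit_of_deg _ (by show 0 < (gQ w).natDegree; rw [gQ_natDegree]; exact kk_pos w)
  · intro a b hab
    have hco : gQ w = (a:ℚ[X]) * (b:ℚ[X]) := congrArg Subtype.val hab
    rcases (gQ_irred w).isUnit_or_isUnit hco with hu | hu
    · left
      obtain ⟨ra, hraU, hCa⟩ := Polynomial.isUnit_iff.mp hu
      have hra0 : ra ≠ 0 := hraU.ne_zero
      obtain ⟨za, hza⟩ := const_int a ra hCa.symm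
      have hb : (b:ℚ[X]) = C ra⁻¹ * gQ w := by
        rw [hco, ← hCa, ← mul_assoc, ← C_mul, inv_mul_cancel₀ hra0]
        simp
      have hshape : shp w ra⁻¹ 1 0 = (b:ℚ[X]) := by rw [shp, hb]; ring
      have hmem : shp w ra⁻¹ 1 0 ∈ IntValued := by rw [hshape]; exact b.2
      obtain ⟨z', hz'⟩ := (shp_scalar w ra⁻¹ 1 0 hmem).1
      simp only [mul_zero, pow_zero, mul_one] at hz'
      have hprod : za * z' = 1 := by
        have : (za:ℚ) * (z':ℚ) = 1 := by
          rw [← hza, ← hz']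
          field_simp
        exact_mod_cast this
      exact unit_of_isUnit_int a za (IsUnit.of_mul_eq_one _ hprod) (by rw [← hCa, hza])
    · right
      obtain ⟨rb, hrbU, hCb⟩ := Polynomial.isUnit_iff.mp hu
      have hrb0 : rb ≠ 0 := hrbU.ne_zero
      obtain ⟨zb, hzb⟩ := const_int b rb hCb.symm
      have ha : (a:ℚ[X]) = C rb⁻¹ * gQ w := by
        rw [hco, ← hCb, mul_comm ((a:ℚ[X])), ← mul_assoc, ← C_mul, inv_mul_cancel₀ hrb0]
        simp
      have hshape : shp w rb⁻¹ 1 0 = (a:ℚ[X]) := by rw [shp, ha]; ring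
      have hmem : shp w rb⁻¹ 1 0 ∈ IntValued := by rw [hshape]; exact a.2
      obtain ⟨z', hz'⟩ := (shp_scalar w rb⁻¹ 1 0 hmem).1
      simp only [mul_zero, pow_zero, mul_one] at hz'
      have hprod : zb * z' = 1 := by
        have : (zb:ℚ) * (z':ℚ) = 1 := by
          rw [← hzb, ← hz']
          field_simp
        exact_mod_cast this
      exact unit_of_isUnit_int b zb (IsUnit.of_mul_eq_one _ hprod) (by rw [← hCb, hzb])

lemma HH_irr (w : ℕ) : Irreducible (HH w) := by
  constructor
  · exact not_unit_of_deg _ (by show 0 < (hQ w).natDegree; rw [hQ_natDegree]; omega)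
  · intro a b hab
    have hco : hQ w = (a:ℚ[X]) * (b:ℚ[X]) := congrArg Subtype.val hab
    rcases (hQ_irred w).isUnit_or_isUnit hco with hu | hu
    · left
      obtain ⟨ra, hraU, hCa⟩ := Polynomial.isUnit_iff.mp hu
      have hra0 : ra ≠ 0 := hraU.ne_zero
      obtain ⟨za, hza⟩ := const_int a ra hCa.symm
      have hb : (b:ℚ[X]) = C ra⁻¹ * hQ w := by
        rw [hco, ← hCa, ← mul_assoc, ← C_mul, inv_mul_cancel₀ hra0]
        simp
      have hshape : shp w ra⁻¹ 0 1 = (b:ℚ[X]) := by rw [shp, hb]; ring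
      have hmem : shp w ra⁻¹ 0 1 ∈ IntValued := by rw [hshape]; exact b.2
      obtain ⟨z', hz'⟩ := (shp_scalar w ra⁻¹ 0 1 hmem).2
      simp only [mul_zero, pow_zero, mul_one] at hz'
      have hprod : za * z' = 1 := by
        have : (za:ℚ) * (z':ℚ) = 1 := by
          rw [← hza, ← hz']
          field_simp
        exact_mod_cast this
      exact unit_of_isUnit_int a za (IsUnit.of_mul_eq_one _ hprod) (by rw [← hCa, hza])
    · right
      obtain ⟨rb, hrbU, hCb⟩ := Polynomial.isUnit_iff.mp hu
      have hrb0 : rb ≠ 0 := hrbU.ne_zero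
      obtain ⟨zb, hzb⟩ := const_int b rb hCb.symm
      have ha : (a:ℚ[X]) = C rb⁻¹ * hQ w := by
        rw [hco, ← hCb, mul_comm ((a:ℚ[X])), ← mul_assoc, ← C_mul, inv_mul_cancel₀ hrb0]
        simp
      have hshape : shp w rb⁻¹ 0 1 = (a:ℚ[X]) := by rw [shp, ha]; ring
      have hmem : shp w rb⁻¹ 0 1 ∈ IntValued := by rw [hshape]; exact a.2
      obtain ⟨z', hz'⟩ := (shp_scalar w rb⁻¹ 0 1 hmem).2
      simp only [mul_zero, pow_zero, mul_one] at hz'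
      have hprod : zb * z' = 1 := by
        have : (zb:ℚ) * (z':ℚ) = 1 := by
          rw [← hzb, ← hz']
          field_simp
        exact_mod_cast this
      exact unit_of_isUnit_int b zb (IsUnit.of_mul_eq_one _ hprod) (by rw [← hCb, hzb])

lemma T3_irr : Irreducible T3 := by
  constructor
  · exact not_unit_const T3 3 (by norm_num) (by show C (3:ℚ) = _; norm_num)
  · intro a b hab
    have hco : C (3:ℚ) = (a:ℚ[X]) * (b:ℚ[X]) := congrArg Subtype.val hab
    have hCne : (C (3:ℚ) : ℚ[X]) ≠ 0 := by
      intro hh; have := C_inj.mp (hh.trans C_0.symm); norm_num at this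
    have hane : (a:ℚ[X]) ≠ 0 := by
      intro h0; rw [h0, zero_mul] at hco; exact hCne hco
    have hbne : (b:ℚ[X]) ≠ 0 := by
      intro h0; rw [h0, mul_zero] at hco; exact hCne hco
    have hdeg : (a:ℚ[X]).natDegree = 0 ∧ (b:ℚ[X]).natDegree = 0 := by
      have := natDegree_mul hane hbne
      rw [← hco, natDegree_C] at this
      omega
    obtain ⟨ra, hra⟩ := Polynomial.natDegree_eq_zero.mp hdeg.1
    obtain ⟨rb, hrb⟩ := Polynomial.natDegree_eq_zero.mp hdeg.2
    obtain ⟨za, hza⟩ := const_int a ra hra.symm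
    obtain ⟨zb, hzb⟩ := const_int b rb hrb.symm
    have hzz : 3 = za * zb := by
      have : (3:ℚ) = (za:ℚ) * (zb:ℚ) := by
        rw [← hza, ← hzb]
        have := hco
        rw [← hra, ← hrb, ← C_mul] at this
        exact C_inj.mp this
      exact_mod_cast this
    rcases (Int.prime_three.irreducible).isUnit_or_isUnit hzz with h | h
    · exact Or.inl (unit_of_isUnit_int a za h (by rw [← hra, hza]))
    · exact Or.inr (unit_of_isUnit_int b zb h (by rw [← hrb, hzb]))

lemma three_le_pow_kk (w : ℕ) : (3:ℤ) ≤ 3^(kk w) :=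
  le_self_pow₀ (by norm_num) (by have := kk_pos w; omega)

lemma CC3_irr (w : ℕ) : Irreducible (CC3 w) := by
  have ht : ((3:ℚ)^(kk w))⁻¹ ≠ 0 := inv_ne_zero (by positivity)
  constructor
  · apply not_unit_of_deg
    show 0 < (shp w ((3:ℚ)^(kk w))⁻¹ 1 1).natDegree
    rw [shp_natDegree w _ ht]
    omega
  · intro a b hab
    have hco : shp w ((3:ℚ)^(kk w))⁻¹ 1 1 = (a:ℚ[X]) * (b:ℚ[X]) := congrArg Subtype.val hab
    have hane : (a:ℚ[X]) ≠ 0 := by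
      intro h0; rw [h0, zero_mul] at hco; exact shp_ne_zero w _ ht 1 1 hco
    have hbne : (b:ℚ[X]) ≠ 0 := by
      intro h0; rw [h0, mul_zero] at hco; exact shp_ne_zero w _ ht 1 1 hco
    have hgh_eq : C ((3:ℚ)^(kk w)) * shp w ((3:ℚ)^(kk w))⁻¹ 1 1 = (gQ w)^1 * (hQ w)^1 := by
      rw [shp, ← mul_assoc, ← mul_assoc, ← C_mul,
        mul_inv_cancel₀ (by positivity : ((3:ℚ)^(kk w)) ≠ 0)]
      simp
    have hadvd : (a:ℚ[X]) ∣ (gQ w)^1 * (hQ w)^1 := by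
      rw [← hgh_eq, hco]
      exact ⟨C ((3:ℚ)^(kk w)) * (b:ℚ[X]), by ring⟩
    have hbdvd : (b:ℚ[X]) ∣ (gQ w)^1 * (hQ w)^1 := by
      rw [← hgh_eq, hco]
      exact ⟨C ((3:ℚ)^(kk w)) * (a:ℚ[X]), by ring⟩
    obtain ⟨ia, ja, ra, hra, hsa⟩ := dvd_struct w _ hane 1 1 hadvd
    obtain ⟨ib, jb, rb, hrb, hsb⟩ := dvd_struct w _ hbne 1 1 hbdvd
    rw [hsa, hsb, shp_mul] at hco
    obtain ⟨hi, hj, hr⟩ := eq_shape w _ _ ht (mul_ne_zero hra hrb) _ _ _ _ hco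
    have hr' : ra * rb * (3:ℚ)^(kk w) = 1 := by
      rw [← hr]; field_simp
    have hamem : shp w ra ia ja ∈ IntValued := by rw [← hsa]; exact a.2
    have hbmem : shp w rb ib jb ∈ IntValued := by rw [← hsb]; exact b.2
    have hia1 : ia ≤ 1 := by omega
    have hja1 : ja ≤ 1 := by omega
    interval_cases ia <;> interval_cases ja
    · -- (0,0): a is a constant
      left
      obtain ⟨za, hza⟩ : ∃ z : ℤ, ra = (z:ℚ) := by
        obtain ⟨z, hz⟩ := (shp_scalar w ra 0 0 hamem).1
        exact ⟨z, by simpa using hz⟩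
      obtain ⟨zb, hzb⟩ := (shp_scalar w rb ib jb hbmem).1
      rw [show jb = 1 by omega, mul_one] at hzb
      have hprod : za * zb = 1 := by
        have : (za:ℚ) * (zb:ℚ) = 1 := by
          rw [← hza, ← hzb]; linear_combination hr'
        exact_mod_cast this
      exact unit_of_isUnit_int a za (IsUnit.of_mul_eq_one _ hprod)
        (by rw [hsa, shp, hza]; simp)
    · -- (0,1): impossible
      exfalso
      obtain ⟨za, hza⟩ := (shp_scalar w ra 0 1 hamem).2
      simp only [mul_zero, pow_zero, mul_one] at hza
      obtain ⟨zb, hzb⟩ := (shp_scalar w rb ib jb hbmem).1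
      rw [show jb = 0 by omega, mul_zero, pow_zero, mul_one] at hzb
      have hzz : za * zb * 3^(kk w) = 1 := by
        have : ((za * zb * 3^(kk w) : ℤ) : ℚ) = 1 := by
          push_cast
          rw [← hza, ← hzb]; linear_combination hr'
        exact_mod_cast this
      have hd : (3:ℤ)^(kk w) ∣ 1 := ⟨za * zb, by linarith [hzz]⟩
      have h1 := Int.le_of_dvd (by norm_num) hd
      have h2 := three_le_pow_kk w
      omega
    · -- (1,0): impossible
      exfalso
      obtain ⟨za, hza⟩ := (shp_scalar w ra 1 0 hamem).1
      simp only [mul_zero, pow_zero, mul_one] at hza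
      obtain ⟨zb, hzb⟩ := (shp_scalar w rb ib jb hbmem).2
      rw [show ib = 0 by omega, mul_zero, pow_zero, mul_one] at hzb
      have hzz : za * zb * 3^(kk w) = 1 := by
        have : ((za * zb * 3^(kk w) : ℤ) : ℚ) = 1 := by
          push_cast
          rw [← hza, ← hzb]; linear_combination hr'
        exact_mod_cast this
      have hd : (3:ℤ)^(kk w) ∣ 1 := ⟨za * zb, by linarith [hzz]⟩
      have h1 := Int.le_of_dvd (by norm_num) hd
      have h2 := three_le_pow_kk w
      omega
    · -- (1,1): b is a constant
      right
      obtain ⟨zb, hzb⟩ : ∃ z : ℤ, rb = (z:ℚ) := by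
        obtain ⟨z, hz⟩ := (shp_scalar w rb ib jb hbmem).1
        rw [show jb = 0 by omega] at hz
        exact ⟨z, by simpa using hz⟩
      obtain ⟨za, hza⟩ := (shp_scalar w ra 1 1 hamem).1
      rw [mul_one] at hza
      have hprod : zb * za = 1 := by
        have : (zb:ℚ) * (za:ℚ) = 1 := by
          rw [← hzb, ← hza]; linear_combination hr'
        exact_mod_cast this
      exact unit_of_isUnit_int b zb (IsUnit.of_mul_eq_one _ hprod)
        (by rw [hsb, show ib = 0 by omega, show jb = 0 by omega, shp, hzb]; simp)


lemma not_irred_of_split (F F1 F2 : IntValued)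
    (hmul : (F:ℚ[X]) = (F1:ℚ[X]) * (F2:ℚ[X]))
    (h1 : ¬IsUnit F1) (h2 : ¬IsUnit F2) : ¬ Irreducible F := fun hF => by
  rcases hF.isUnit_or_isUnit (Subtype.ext hmul) with h | h
  · exact h1 h
  · exact h2 h

lemma GG_not_unit (w : ℕ) : ¬ IsUnit (GG w) :=
  not_unit_of_deg _ (by show 0 < (gQ w).natDegree; rw [gQ_natDegree]; exact kk_pos w)
lemma HH_not_unit (w : ℕ) : ¬ IsUnit (HH w) :=
  not_unit_of_deg _ (by show 0 < (hQ w).natDegree; rw [hQ_natDegree]; omega)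

lemma shp_not_unit (w : ℕ) (F : IntValued) (r : ℚ) (hr : r ≠ 0) (i j : ℕ) (hij : 0 < i + j)
    (h : (F:ℚ[X]) = shp w r i j) : ¬ IsUnit F := by
  apply not_unit_of_deg
  rw [h, shp_natDegree w r hr]
  have := kk_pos w
  rcases Nat.eq_zero_or_pos i with rfl | hi
  · have : 0 < j := by omega
    positivity
  · positivity

lemma irred_shape (w : ℕ) (F : IntValued) (hF : Irreducible F) (i j : ℕ) (r : ℚ) (hr : r ≠ 0)
    (hco : (F:ℚ[X]) = shp w r i j) :
    (∃ p : ℤ, Prime p ∧ (F:ℚ[X]) = C (p:ℚ)) ∨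
    (∃ s : ℤ, s.natAbs = 1 ∧
      ((F:ℚ[X]) = shp w (s:ℚ) 1 0 ∨ (F:ℚ[X]) = shp w (s:ℚ) 0 1 ∨
       (F:ℚ[X]) = shp w ((s:ℚ)/3^(kk w)) 1 1)) := by
  have hmem : shp w r i j ∈ IntValued := by rw [← hco]; exact F.2
  obtain ⟨⟨z1, hz1⟩, ⟨z3, hz3⟩⟩ := shp_scalar w r i j hmem
  -- i ≤ 1
  have hile : i ≤ 1 := by
    by_contra hgt
    push_neg at hgt
    obtain ⟨i0, rfl⟩ : ∃ i0, i = i0 + 2 := ⟨i - 2, by omega⟩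
    rcases Nat.eq_zero_or_pos j with rfl | hj
    · have hrz : r = (z1:ℚ) := by simpa using hz1
      refine not_irred_of_split F (GG w)
        ⟨shp w r (i0+1) 0, shp_mem w r _ 0 z1 (by simpa using hz1)⟩
        ?_ (GG_not_unit w) ?_ hF
      · rw [hco]
        show shp w r (i0+2) 0 = gQ w * shp w r (i0+1) 0
        rw [shp, shp]; ring
      · exact shp_not_unit w _ r hr (i0+1) 0 (by omega) rfl
    · set μ := min (i0+2) j with hμdef
      have hμ1 : 1 ≤ μ := by omega
      obtain ⟨m0, hm0⟩ : ∃ m0, μ = m0 + 1 := ⟨μ-1, by omega⟩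
      have hzz : ∃ zz : ℤ, r * 3^(kk w * μ) = (zz:ℚ) := by
        rcases le_total (i0+2) j with hij | hij
        · exact ⟨z3, by rwa [hμdef, min_eq_left hij]⟩
        · exact ⟨z1, by rwa [hμdef, min_eq_right hij]⟩
      obtain ⟨zz, hzz⟩ := hzz
      have hpow_ne : ((3:ℚ)^(kk w * m0)) ≠ 0 := by positivity
      refine not_irred_of_split F
        ⟨shp w (r * 3^(kk w * m0)) 1 1, shp_mem w _ 1 1 zz (by
          rw [min_self, mul_one, mul_assoc, ← pow_add, ← hzz, hm0]
          ring_nf)⟩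
        ⟨shp w ((3:ℚ)^(kk w * m0))⁻¹ (i0+1) (j-1), shp_mem w _ _ _ 1 (by
          rw [show min (i0+1) (j-1) = m0 by omega]
          push_cast
          exact inv_mul_cancel₀ hpow_ne)⟩
        ?_ ?_ ?_ hF
      · rw [hco]
        show shp w r (i0+2) j = _
        rw [shp_mul, mul_inv_cancel_right₀ hpow_ne]
        congr 1 <;> omega
      · exact shp_not_unit w _ _ (by
          intro h0
          exact hr (by simpa [hpow_ne] using mul_eq_zero.mp h0)) 1 1 (by omega) rfl
      · exact shp_not_unit w _ _ (inv_ne_zero hpow_ne) (i0+1) (j-1) (by omega) rfl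
  have hjle : j ≤ 1 := by
    by_contra hgt
    push_neg at hgt
    obtain ⟨j0, rfl⟩ : ∃ j0, j = j0 + 2 := ⟨j - 2, by omega⟩
    rcases Nat.eq_zero_or_pos i with rfl | hi
    · have hrz : r = (z3:ℚ) := by simpa using hz3
      refine not_irred_of_split F (HH w)
        ⟨shp w r 0 (j0+1), shp_mem w r _ _ z3 (by simpa using hz3)⟩
        ?_ (HH_not_unit w) ?_ hF
      · rw [hco]
        show shp w r 0 (j0+2) = hQ w * shp w r 0 (j0+1)
        rw [shp, shp]; ring
      · exact shp_not_unit w _ r hr 0 (j0+1) (by omega) rfl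
    · set μ := min i (j0+2) with hμdef
      have hμ1 : 1 ≤ μ := by omega
      obtain ⟨m0, hm0⟩ : ∃ m0, μ = m0 + 1 := ⟨μ-1, by omega⟩
      have hzz : ∃ zz : ℤ, r * 3^(kk w * μ) = (zz:ℚ) := by
        rcases le_total i (j0+2) with hij | hij
        · exact ⟨z3, by rwa [hμdef, min_eq_left hij]⟩
        · exact ⟨z1, by rwa [hμdef, min_eq_right hij]⟩
      obtain ⟨zz, hzz⟩ := hzz
      have hpow_ne : ((3:ℚ)^(kk w * m0)) ≠ 0 := by positivity
      refine not_irred_of_split F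
        ⟨shp w (r * 3^(kk w * m0)) 1 1, shp_mem w _ 1 1 zz (by
          rw [min_self, mul_one, mul_assoc, ← pow_add, ← hzz, hm0]
          ring_nf)⟩
        ⟨shp w ((3:ℚ)^(kk w * m0))⁻¹ (i-1) (j0+1), shp_mem w _ _ _ 1 (by
          rw [show min (i-1) (j0+1) = m0 by omega]
          push_cast
          exact inv_mul_cancel₀ hpow_ne)⟩
        ?_ ?_ ?_ hF
      · rw [hco]
        show shp w r i (j0+2) = _
        rw [shp_mul, mul_inv_cancel_right₀ hpow_ne]
        congr 1 <;> omega
      · exact shp_not_unit w _ _ (by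
          intro h0
          exact hr (by simpa [hpow_ne] using mul_eq_zero.mp h0)) 1 1 (by omega) rfl
      · exact shp_not_unit w _ _ (inv_ne_zero hpow_ne) (i-1) (j0+1) (by omega) rfl
  interval_cases i <;> interval_cases j
  · -- (0,0)
    have hrz : r = (z1:ℚ) := by simpa using hz1
    have hz10 : z1 ≠ 0 := by rintro rfl; rw [hrz] at hr; simp at hr
    have hCz : (F:ℚ[X]) = C ((z1:ℚ)) := by rw [hco, shp, hrz]; simp
    by_cases h1 : z1.natAbs = 1
    · exact absurd (unit_of_isUnit_int F z1 (Int.isUnit_iff_natAbs_eq.mpr h1) hCz) hF.not_isUnit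
    · obtain ⟨p, hp, hpd⟩ := Int.exists_prime_and_dvd h1
      obtain ⟨z', rfl⟩ := hpd
      by_cases h2 : z'.natAbs = 1
      · refine Or.inl ⟨p * z', ?_, hCz⟩
        rw [Int.prime_iff_natAbs_prime, Int.natAbs_mul, h2, mul_one]
        exact Int.prime_iff_natAbs_prime.mp hp
      · exfalso
        refine not_irred_of_split F ⟨C (p:ℚ), const_mem p⟩ ⟨C (z':ℚ), const_mem z'⟩
          ?_ ?_ ?_ hF
        · rw [hCz]
          show _ = C ((p:ℚ)) * C ((z':ℚ))
          rw [← C_mul]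
          push_cast
          rfl
        · exact not_unit_const _ p (by
            have := Int.prime_iff_natAbs_prime.mp hp
            exact this.ne_one) rfl
        · exact not_unit_const _ z' h2 rfl
  · -- (0,1)
    have hrz : r = (z3:ℚ) := by simpa using hz3
    have hz30 : z3 ≠ 0 := by rintro rfl; rw [hrz] at hr; simp at hr
    by_cases h1 : z3.natAbs = 1
    · exact Or.inr ⟨z3, h1, Or.inr (Or.inl (by rw [hco, hrz]))⟩
    · exfalso
      obtain ⟨p, hp, hpd⟩ := Int.exists_prime_and_dvd h1
      obtain ⟨z', rfl⟩ := hpd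
      refine not_irred_of_split F ⟨C (p:ℚ), const_mem p⟩
        ⟨shp w (z':ℚ) 0 1, shp_mem w _ 0 1 z' (by simp)⟩ ?_ ?_ ?_ hF
      · rw [hco, hrz]
        show shp w _ 0 1 = C ((p:ℚ)) * shp w (z':ℚ) 0 1
        rw [shp, shp, ← mul_assoc, ← mul_assoc, ← C_mul]
        push_cast
        ring
      · exact not_unit_const _ p (Int.prime_iff_natAbs_prime.mp hp).ne_one rfl
      · exact shp_not_unit w _ _ (by
          intro h0
          apply hz30
          have : (z':ℚ) = 0 := h0
          have hz'0 : z' = 0 := by exact_mod_cast this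
          rw [hz'0, mul_zero]) 0 1 (by omega) rfl
  · -- (1,0)
    have hrz : r = (z1:ℚ) := by simpa using hz1
    have hz10 : z1 ≠ 0 := by rintro rfl; rw [hrz] at hr; simp at hr
    by_cases h1 : z1.natAbs = 1
    · exact Or.inr ⟨z1, h1, Or.inl (by rw [hco, hrz])⟩
    · exfalso
      obtain ⟨p, hp, hpd⟩ := Int.exists_prime_and_dvd h1
      obtain ⟨z', rfl⟩ := hpd
      refine not_irred_of_split F ⟨C (p:ℚ), const_mem p⟩
        ⟨shp w (z':ℚ) 1 0, shp_mem w _ 1 0 z' (by simp)⟩ ?_ ?_ ?_ hF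
      · rw [hco, hrz]
        show shp w _ 1 0 = C ((p:ℚ)) * shp w (z':ℚ) 1 0
        rw [shp, shp, ← mul_assoc, ← mul_assoc, ← C_mul]
        push_cast
        ring
      · exact not_unit_const _ p (Int.prime_iff_natAbs_prime.mp hp).ne_one rfl
      · exact shp_not_unit w _ _ (by
          intro h0
          apply hz10
          have hz'0 : z' = 0 := by exact_mod_cast h0
          rw [hz'0, mul_zero]) 1 0 (by omega) rfl
  · -- (1,1)
    rw [mul_one] at hz1
    have hz10 : z1 ≠ 0 := by
      rintro rfl
      have h3 : ((3:ℚ)^(kk w)) ≠ 0 := by positivity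
      have hz1' : r * (3:ℚ)^(kk w) = 0 := by exact_mod_cast hz1
      exact hr ((mul_eq_zero.mp hz1').resolve_right h3)
    by_cases h1 : z1.natAbs = 1
    · refine Or.inr ⟨z1, h1, Or.inr (Or.inr ?_)⟩
      rw [hco]
      congr 1
      rw [eq_div_iff (by positivity : ((3:ℚ)^(kk w)) ≠ 0)]
      exact hz1
    · exfalso
      obtain ⟨p, hp, hpd⟩ := Int.exists_prime_and_dvd h1
      obtain ⟨z', rfl⟩ := hpd
      have hp0 : (p:ℚ) ≠ 0 := by
        exact_mod_cast hp.ne_zero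
      refine not_irred_of_split F ⟨C (p:ℚ), const_mem p⟩
        ⟨shp w (r/p) 1 1, shp_mem w _ 1 1 z' (by
          rw [min_self, mul_one]
          rw [div_mul_eq_mul_div, hz1]
          push_cast
          rw [mul_comm (p:ℚ) (z':ℚ), mul_div_assoc, div_self hp0, mul_one])⟩ ?_ ?_ ?_ hF
      · rw [hco]
        show shp w r 1 1 = C ((p:ℚ)) * shp w (r/(p:ℚ)) 1 1
        rw [shp, shp, ← mul_assoc, ← mul_assoc, ← C_mul, mul_div_cancel₀ _ hp0]
      · exact not_unit_const _ p (Int.prime_iff_natAbs_prime.mp hp).ne_one rfl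
      · exact shp_not_unit w _ _ (div_ne_zero hr hp0) 1 1 (by omega) rfl



lemma two_pow_card_le (mp : Multiset ℤ) (h : ∀ p ∈ mp, Prime p) :
    2^(Multiset.card mp) ≤ mp.prod.natAbs := by
  induction mp using Multiset.induction_on with
  | empty => simp
  | cons a s ih =>
    rw [Multiset.prod_cons, Multiset.card_cons, Int.natAbs_mul, pow_succ, mul_comm (2^_) 2]
    have ha : 2 ≤ a.natAbs := (Int.prime_iff_natAbs_prime.mp (h a (by simp))).two_le
    exact Nat.mul_le_mul ha (ih (fun p hp => h p (by simp [hp])))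

lemma prod_natAbs_three (mp : Multiset ℤ) (h : ∀ p ∈ mp, p.natAbs = 3) :
    mp.prod.natAbs = 3^(Multiset.card mp) := by
  induction mp using Multiset.induction_on with
  | empty => simp
  | cons a s ih =>
    rw [Multiset.prod_cons, Multiset.card_cons, Int.natAbs_mul, pow_succ, mul_comm (3^_) 3,
      h a (by simp), ih (fun p hp => h p (by simp [hp]))]

lemma prod_ne_zero_of_prime (mp : Multiset ℤ) (h : ∀ p ∈ mp, Prime p) : mp.prod ≠ 0 :=
  Multiset.prod_ne_zero (fun h0 => (h 0 h0).ne_zero rfl)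

lemma counting (w n1 : ℕ) (l : Multiset IntValued) (hirr : ∀ F ∈ l, Irreducible F)
    (hdvd : ∀ F ∈ l, (F:ℚ[X]) ∣ (gQ w)^(n1+1) * (hQ w)^(n1+1)) :
    ∃ (mp : Multiset ℤ) (β δ' ε : ℕ) (s : ℤ), s.natAbs = 1 ∧ (∀ p ∈ mp, Prime p) ∧
      Multiset.card l = Multiset.card mp + β + δ' + ε ∧
      ((l.prod : IntValued) : ℚ[X])
        = shp w ((s:ℚ) * (mp.prod:ℚ) / 3^(kk w * ε)) (β+ε) (δ'+ε) := by
  induction l using Multiset.induction_on with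
  | empty =>
    refine ⟨0, 0, 0, 0, 1, by norm_num, by simp, by simp, ?_⟩
    show ((1 : IntValued) : ℚ[X]) = _
    rw [shp]
    norm_num
  | cons F l IH =>
    obtain ⟨mp, β, δ', ε, s, hs, hmp, hcard, hprod⟩ :=
      IH (fun G hG => hirr G (by simp [hG])) (fun G hG => hdvd G (by simp [hG]))
    have hFirr : Irreducible F := hirr F (by simp)
    have hFne : (F:ℚ[X]) ≠ 0 := by
      intro h0
      exact hFirr.ne_zero (Subtype.ext h0)
    obtain ⟨i, j, r, hr, hsF⟩ := dvd_struct w _ hFne (n1+1) (n1+1) (hdvd F (by simp))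
    have hcoe : ((F ::ₘ l).prod : IntValued) = F * l.prod := by rw [Multiset.prod_cons]
    have hcoe2 : (((F ::ₘ l).prod : IntValued) : ℚ[X])
        = (F:ℚ[X]) * ((l.prod : IntValued) : ℚ[X]) := by rw [hcoe]; rfl
    have hsZ : s ≠ 0 := fun h0 => by rw [h0] at hs; simp at hs
    have hsne : ((s:ℚ) * (mp.prod:ℚ) / 3^(kk w * ε)) ≠ 0 := by
      apply div_ne_zero
      · exact mul_ne_zero (Int.cast_ne_zero.mpr hsZ)
          (Int.cast_ne_zero.mpr (prod_ne_zero_of_prime mp hmp))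
      · positivity
    rcases irred_shape w F hFirr i j r hr hsF with ⟨p, hp, hFp⟩ | ⟨s0, hs0, hcase⟩
    · refine ⟨p ::ₘ mp, β, δ', ε, s, hs, ?_, ?_, ?_⟩
      · intro p' hp'
        rcases Multiset.mem_cons.mp hp' with rfl | hm
        · exact hp
        · exact hmp p' hm
      · simp only [Multiset.card_cons]
        omega
      · rw [hcoe2, hprod, hFp, Multiset.prod_cons]
        have : (C ((p:ℚ)) : ℚ[X]) = shp w (p:ℚ) 0 0 := by rw [shp]; simp
        rw [this, shp_mul]
        congr 1 <;> first | omega | (push_cast; ring)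
    · rcases hcase with hFg | hFh | hFc
      · refine ⟨mp, β+1, δ', ε, s0*s, by rw [Int.natAbs_mul, hs0, hs], hmp, ?_, ?_⟩
        · simp only [Multiset.card_cons]
          omega
        · rw [hcoe2, hprod, hFg, shp_mul]
          congr 1 <;> first | omega | (push_cast; ring)
      · refine ⟨mp, β, δ'+1, ε, s0*s, by rw [Int.natAbs_mul, hs0, hs], hmp, ?_, ?_⟩
        · simp only [Multiset.card_cons]
          omega
        · rw [hcoe2, hprod, hFh, shp_mul]
          congr 1 <;> first | omega | (push_cast; ring)
      · refine ⟨mp, β, δ', ε+1, s0*s, by rw [Int.natAbs_mul, hs0, hs], hmp, ?_, ?_⟩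
        · simp only [Multiset.card_cons]
          omega
        · rw [hcoe2, hprod, hFc, shp_mul]
          congr 1 <;> first | omega | (push_cast; field_simp; ring)



noncomputable def fIV (w n1 : ℕ) : IntValued :=
  ⟨shp w ((3:ℚ)^(kk w * n1))⁻¹ (n1+1) (n1+1), shp_mem w _ _ _ (3^(kk w)) (by
    rw [min_self]
    have h1 : (3:ℚ)^(kk w * (n1+1)) = 3^(kk w * n1) * 3^(kk w) := by
      rw [show kk w * (n1+1) = kk w * n1 + kk w by ring, pow_add]
    rw [h1, inv_mul_cancel_left₀ (by positivity)]
    norm_cast)⟩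

lemma shp_pow (w : ℕ) (r : ℚ) (i j n : ℕ) :
    (shp w r i j)^n = shp w (r^n) (i*n) (j*n) := by
  rw [shp, shp, mul_pow, mul_pow, ← C_pow, ← pow_mul, ← pow_mul]

lemma gQ_shp (w : ℕ) : gQ w = shp w 1 1 0 := by rw [shp]; simp
lemma hQ_shp (w : ℕ) : hQ w = shp w 1 0 1 := by rw [shp]; simp

lemma shp_assoc_dvd (w : ℕ) (r : ℚ) (hr : r ≠ 0) (i j : ℕ) (p : ℚ[X])
    (hd : p ∣ shp w r i j) : p ∣ (gQ w)^i * (hQ w)^j := by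
  obtain ⟨c, hc⟩ := hd
  have hgh : (gQ w)^i * (hQ w)^j = C r⁻¹ * shp w r i j := by
    rw [shp, ← mul_assoc, ← mul_assoc, ← C_mul, inv_mul_cancel₀ hr]
    simp
  rw [hgh, hc]
  exact ⟨C r⁻¹ * c, by ring⟩

lemma tpow_ne (w n1 : ℕ) : ((3:ℚ)^(kk w * n1))⁻¹ ≠ 0 := inv_ne_zero (by positivity)

lemma prod_a (w n1 : ℕ) :
    (GG w ::ₘ HH w ::ₘ Multiset.replicate n1 (CC3 w)).prod = fIV w n1 := by
  apply Subtype.ext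
  have hcoe : ((GG w ::ₘ HH w ::ₘ Multiset.replicate n1 (CC3 w)).prod : ℚ[X])
      = gQ w * (hQ w * (shp w ((3:ℚ)^(kk w))⁻¹ 1 1)^n1) := by
    rw [Multiset.prod_cons, Multiset.prod_cons, Multiset.prod_replicate]
    rfl
  rw [hcoe]
  show _ = shp w ((3:ℚ)^(kk w * n1))⁻¹ (n1+1) (n1+1)
  rw [shp_pow, gQ_shp, hQ_shp, shp_mul, shp_mul]
  congr 1 <;> first
  | ring
  | (rw [one_mul, one_mul, inv_pow, ← pow_mul])

lemma prod_b (w n1 : ℕ) :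
    (Multiset.replicate (n1+1) (CC3 w) + Multiset.replicate (kk w) T3).prod = fIV w n1 := by
  apply Subtype.ext
  have hcoe : ((Multiset.replicate (n1+1) (CC3 w) + Multiset.replicate (kk w) T3).prod : ℚ[X])
      = (shp w ((3:ℚ)^(kk w))⁻¹ 1 1)^(n1+1) * (C (3:ℚ))^(kk w) := by
    rw [Multiset.prod_add, Multiset.prod_replicate, Multiset.prod_replicate]
    rfl
  rw [hcoe]
  show _ = shp w ((3:ℚ)^(kk w * n1))⁻¹ (n1+1) (n1+1)
  have hC3 : (C (3:ℚ))^(kk w) = shp w ((3:ℚ)^(kk w)) 0 0 := by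
    rw [shp, ← C_pow]; simp
  rw [shp_pow, hC3, shp_mul]
  have hscal : (((3:ℚ)^(kk w))⁻¹)^(n1+1) * (3:ℚ)^(kk w) = ((3:ℚ)^(kk w * n1))⁻¹ := by
    rw [inv_pow, ← pow_mul, show kk w * (n1+1) = kk w * n1 + kk w by ring, pow_add, mul_inv,
      mul_assoc, inv_mul_cancel₀ (by positivity : ((3:ℚ)^(kk w)) ≠ 0), mul_one]
  congr 1 <;> first
  | ring
  | exact hscal

theorem fully_elastic_aux (w n1 : ℕ) (n0 : ℕ) :
    (∃ l : Multiset IntValued, Multiset.card l = n0 ∧ (∀ g ∈ l, Irreducible g) ∧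
        l.prod = fIV w n1)
      ↔ (n0 = n1 + 2 ∨ n0 = n1 + 1 + kk w) := by
  constructor
  · rintro ⟨l, rfl, hlirr, hlprod⟩
    have hdvd : ∀ F ∈ l, (F:ℚ[X]) ∣ (gQ w)^(n1+1) * (hQ w)^(n1+1) := by
      intro F hF
      apply shp_assoc_dvd w _ (tpow_ne w n1) (n1+1) (n1+1)
      obtain ⟨c, hc⟩ := Multiset.dvd_prod hF
      refine ⟨(c : ℚ[X]), ?_⟩
      have := congrArg (fun x : IntValued => (x : ℚ[X])) (hlprod ▸ hc)
      simp at this; exact this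
    obtain ⟨mp, β, δ', ε, s, hs, hmp, hcard, hprod⟩ := counting w n1 l hlirr hdvd
    rw [hlprod] at hprod
    have hfshape : ((fIV w n1 : IntValued) : ℚ[X])
        = shp w ((3:ℚ)^(kk w * n1))⁻¹ (n1+1) (n1+1) := rfl
    rw [hfshape] at hprod
    have heq := eq_shape w _ _ (tpow_ne w n1) (by
        apply div_ne_zero
        · exact mul_ne_zero (Int.cast_ne_zero.mpr (fun h0 => by rw [h0] at hs; simp at hs))
            (Int.cast_ne_zero.mpr (prod_ne_zero_of_prime mp hmp))
        · positivity) _ _ _ _ hprod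
    obtain ⟨hβ', hδ', hscal'⟩ := heq
    have hβ : β + ε = n1 + 1 := hβ'.symm
    have hδ : δ' + ε = n1 + 1 := hδ'.symm
    have hscal : (s:ℚ) * (mp.prod:ℚ) / 3^(kk w * ε) = ((3:ℚ)^(kk w * n1))⁻¹ := hscal'.symm
    have hint : s * mp.prod * 3^(kk w * n1) = 3^(kk w * ε) := by
      have h3ε : ((3:ℚ)^(kk w * ε)) ≠ 0 := by positivity
      have h3n : ((3:ℚ)^(kk w * n1)) ≠ 0 := by positivity
      have h1 : ((s * mp.prod * 3^(kk w * n1) : ℤ) : ℚ) = ((3^(kk w * ε) : ℤ) : ℚ) := by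
        push_cast
        rw [div_eq_iff h3ε] at hscal
        field_simp at hscal ⊢
        rw [Int.cast_multiset_prod] at hscal
        linear_combination hscal
      exact_mod_cast h1
    have hNA : mp.prod.natAbs * 3^(kk w * n1) = 3^(kk w * ε) := by
      have h2 := congrArg Int.natAbs hint
      rwa [Int.natAbs_mul, Int.natAbs_mul, hs, one_mul, Int.natAbs_pow, Int.natAbs_pow] at h2
    have hP1 : 1 ≤ mp.prod.natAbs :=
      Nat.one_le_iff_ne_zero.mpr (Int.natAbs_ne_zero.mpr (prod_ne_zero_of_prime mp hmp))
    have hkkpos := kk_pos w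
    have hεn : n1 ≤ ε := by
      have h1 : 3^(kk w * n1) ≤ 3^(kk w * ε) := by
        calc 3^(kk w * n1) ≤ mp.prod.natAbs * 3^(kk w * n1) := Nat.le_mul_of_pos_left _ hP1
          _ = 3^(kk w * ε) := hNA
      have h2 : kk w * n1 ≤ kk w * ε := (Nat.pow_le_pow_iff_right (by norm_num)).mp h1
      exact Nat.le_of_mul_le_mul_left h2 hkkpos
    have hεle : ε ≤ n1 + 1 := by omega
    rcases (by omega : ε = n1 ∨ ε = n1 + 1) with rfl | rfl
    · -- length a
      left
      have hNP : mp.prod.natAbs = 1 := by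
        have := hNA
        have h3 : 0 < 3^(kk w * ε) := by positivity
        exact Nat.eq_of_mul_eq_mul_right h3 (by rw [this, one_mul])
      have hc0 : Multiset.card mp = 0 := by
        have h2 := two_pow_card_le mp hmp
        rw [hNP] at h2
        have := Nat.one_lt_two_pow_iff (n := Multiset.card mp)
        omega
      omega
    · -- length b
      right
      have hNP : mp.prod.natAbs = 3^(kk w) := by
        have hsplit : (3:ℕ)^(kk w * (n1+1)) = 3^(kk w) * 3^(kk w * n1) := by
          rw [← pow_add]; congr 1; ring
        rw [hsplit] at hNA
        have h3 : 0 < 3^(kk w * n1) := by positivity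
        exact Nat.eq_of_mul_eq_mul_right h3 hNA
      have hall3 : ∀ p ∈ mp, p.natAbs = 3 := by
        intro p hp
        have hpd : p ∣ mp.prod := Multiset.dvd_prod hp
        have hprime := hmp p hp
        have hd3 : p ∣ (3:ℤ)^(kk w * (n1+1)) := by
          rw [← hint]
          exact Dvd.dvd.mul_right (hpd.mul_left s) _
        have := hprime.dvd_of_dvd_pow hd3
        have hdvd3 : p.natAbs ∣ 3 := by
          have := Int.natAbs_dvd_natAbs.mpr this
          simpa using this
        rcases (Nat.prime_three.eq_one_or_self_of_dvd _ hdvd3) with h1 | h1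
        · exact absurd h1 (Int.prime_iff_natAbs_prime.mp hprime).ne_one
        · exact h1
      have hcard3 : 3^(Multiset.card mp) = 3^(kk w) := by
        rw [← prod_natAbs_three mp hall3, hNP]
      have hcmp : Multiset.card mp = kk w := Nat.pow_right_injective (by norm_num) hcard3
      omega
  · rintro (rfl | rfl)
    · refine ⟨GG w ::ₘ HH w ::ₘ Multiset.replicate n1 (CC3 w), by simp, ?_, prod_a w n1⟩
      intro G hG
      rcases Multiset.mem_cons.mp hG with rfl | hG
      · exact GG_irr w
      · rcases Multiset.mem_cons.mp hG with rfl | hG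
        · exact HH_irr w
        · rw [Multiset.eq_of_mem_replicate hG]
          exact CC3_irr w
    · refine ⟨Multiset.replicate (n1+1) (CC3 w) + Multiset.replicate (kk w) T3,
        by simp; omega, ?_, prod_b w n1⟩
      intro G hG
      rcases Multiset.mem_add.mp hG with hG | hG
      · rw [Multiset.eq_of_mem_replicate hG]; exact CC3_irr w
      · rw [Multiset.eq_of_mem_replicate hG]; exact T3_irr


end FE


/-- `Int(ℤ)` is fully elastic: every rational `q > 1` is the elasticity of some
nonzero nonunit `f`; in fact `f` can be chosen with set of lengths `{a, b}`,
`a < b`, `b / a = q`. -/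
theorem fully_elastic (q : ℚ) (hq : 1 < q) :
    ∃ f : IntValued, f ≠ 0 ∧ ¬IsUnit f ∧
      ∃ a b : ℕ, a < b ∧ (b : ℚ) / (a : ℚ) = q ∧
        ∀ n : ℕ,
          (∃ l : Multiset IntValued, Multiset.card l = n ∧ (∀ g ∈ l, Irreducible g) ∧
              l.prod = f)
            ↔ (n = a ∨ n = b) := by
  open FE in
  have hden : 0 < q.den := q.pos
  have hq1 : (q.den : ℤ) < q.num := by
    have h0 : (0:ℚ) < (q.den:ℚ) := by exact_mod_cast hden
    have h1 : (1:ℚ) < (q.num:ℚ) / (q.den:ℚ) := by rw [Rat.num_div_den q]; exact hq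
    have h2 : (q.den:ℚ) < (q.num:ℚ) := by
      have := (one_lt_div h0).mp h1
      exact this
    exact_mod_cast h2
  have hnum_pos : 0 < q.num := lt_trans (by exact_mod_cast hden) hq1
  set u' : ℕ := q.num.toNat with hu'
  have hu'cast : (u' : ℤ) = q.num := Int.toNat_of_nonneg (le_of_lt hnum_pos)
  have hvu : q.den < u' := by
    have : (q.den : ℤ) < (u' : ℤ) := by rw [hu'cast]; exact hq1
    exact_mod_cast this
  set w : ℕ := u' - q.den - 1 with hw
  set n1 : ℕ := 2*(q.den - 1) with hn1
  have hkk : kk w = 2*(u' - q.den) + 1 := by unfold kk; omega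
  refine ⟨fIV w n1, ?_, ?_, 2*q.den, 2*u', by omega, ?_, ?_⟩
  · intro h0
    have : (fIV w n1 : ℚ[X]) = 0 := by rw [h0]; rfl
    exact shp_ne_zero w _ (tpow_ne w n1) (n1+1) (n1+1) this
  · exact shp_not_unit w _ _ (tpow_ne w n1) (n1+1) (n1+1) (by omega) rfl
  · have h2 : ((2*u' : ℕ) : ℚ) / ((2*q.den : ℕ) : ℚ) = q := by
      push_cast
      rw [mul_div_mul_left _ _ (two_ne_zero)]
      have : ((u' : ℕ) : ℚ) = ((q.num : ℤ) : ℚ) := by exact_mod_cast congrArg (fun z : ℤ => (z:ℚ)) hu'cast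
      rw [this, Rat.num_div_den]
    exact h2
  · intro n0
    rw [fully_elastic_aux w n1 n0]
    constructor
    · rintro (h | h)
      · left; omega
      · right; rw [hkk] at h; omega
    · rintro (h | h)
      · left; omega
      · right; rw [hkk]; omega
end

section
/- For every natural number n ≥ 1 there exist irreducible elements H, G₁, …, G_{n+1} of Int(ℤ) such that X · H(X) = G₁(X) · G₂(X) · … · G_{n+1}(X). (Note that the polynomial X is itself irreducible in Int(ℤ), so the product of the two irreducibles X and H has a factorization of length n + 1.) -/
open Polynomial

/-- The polynomial `X` as an element of `Int(ℤ)`. -/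
noncomputable def Xiv : IntValued := ⟨Polynomial.X, fun c => ⟨c, by simp⟩⟩

namespace IVAux

open Finset

lemma taylor_sub_coeff (f : ℚ[X]) (j : ℕ) (hf : f.natDegree ≤ j + 1) :
    (Polynomial.taylor 1 f - f).coeff j = (j + 1 : ℚ) * f.coeff (j + 1) := by
  have hdeg : (hasseDeriv j f).natDegree < 2 :=
    lt_of_le_of_lt (natDegree_hasseDeriv_le f j) (by omega)
  rw [coeff_sub, taylor_coeff, eval_eq_sum_range' hdeg]
  rw [Finset.sum_range_succ, Finset.sum_range_succ, Finset.sum_range_zero]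
  rw [hasseDeriv_coeff j f 0, hasseDeriv_coeff j f 1]
  simp only [zero_add, Nat.choose_self, Nat.cast_one, one_mul, pow_zero, mul_one, pow_one]
  rw [show (1 + j).choose j = j + 1 by rw [add_comm]; exact Nat.choose_succ_self_right j]
  push_cast
  ring

lemma taylor_sub_natDegree (f : ℚ[X]) (k : ℕ) (hf : f.natDegree ≤ k + 1) :
    (Polynomial.taylor 1 f - f).natDegree ≤ k := by
  rw [natDegree_le_iff_coeff_eq_zero]
  intro N hN
  rw [taylor_sub_coeff f N (le_trans hf (by omega))]
  rw [coeff_eq_zero_of_natDegree_lt (by omega), mul_zero]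

lemma fwd_eval (k : ℕ) (f : ℚ[X]) (hf : f.natDegree ≤ k) :
    (fwdDiff (1 : ℚ))^[k] (fun x => f.eval x) 0 = (k.factorial : ℚ) * f.coeff k := by
  induction k generalizing f with
  | zero =>
      simp [Function.iterate_zero, coeff_zero_eq_eval_zero]
  | succ k ih =>
      have hΔ : fwdDiff (1 : ℚ) (fun x => f.eval x)
          = fun x => (Polynomial.taylor 1 f - f).eval x := by
        funext x
        simp [fwdDiff, Polynomial.taylor_eval]
      rw [Function.iterate_succ_apply, hΔ, ih _ (taylor_sub_natDegree f k hf),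
        taylor_sub_coeff f k hf]
      push_cast [Nat.factorial_succ]
      ring

lemma factorial_mul_coeff_int (f : ℚ[X]) (hf : f ∈ IntValued) (k : ℕ) (hk : f.natDegree ≤ k) :
    ∃ t : ℤ, (k.factorial : ℚ) * f.coeff k = (t : ℚ) := by
  choose v hv using hf
  refine ⟨∑ j ∈ Finset.range (k + 1), (-1) ^ (k - j) * (k.choose j : ℤ) * v (j : ℤ), ?_⟩
  rw [← fwd_eval k f hk, fwdDiff_iter_eq_sum_shift]
  push_cast
  refine Finset.sum_congr rfl fun j hj => ?_
  have h1 : (0 : ℚ) + j • (1 : ℚ) = ((j : ℤ) : ℚ) := by push_cast; ring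
  rw [zsmul_eq_mul, h1, hv (j : ℤ)]
  push_cast
  ring

lemma isUnit_iff' (g : IntValued) : IsUnit g ↔ (g : ℚ[X]) = 1 ∨ (g : ℚ[X]) = -1 := by
  constructor
  · intro hu
    obtain ⟨h, hh⟩ := hu.exists_right_inv
    have hval : (g : ℚ[X]) * (h : ℚ[X]) = 1 := by exact_mod_cast congrArg Subtype.val hh
    have hug : IsUnit (g : ℚ[X]) := IsUnit.of_mul_eq_one _ hval
    obtain ⟨q, hq, hCq⟩ := Polynomial.isUnit_iff.mp hug
    have hq0 : q ≠ 0 := hq.ne_zero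
    have hhval : (h : ℚ[X]) = C q⁻¹ := by
      have := congrArg (fun p => C q⁻¹ * p) hval
      simp only [← hCq, mul_one] at this
      rw [← this, ← mul_assoc, ← C_mul, inv_mul_cancel₀ hq0, C_1, one_mul]
    obtain ⟨t, ht⟩ := g.2 0
    obtain ⟨w, hw⟩ := h.2 0
    rw [← hCq] at ht
    rw [hhval] at hw
    simp only [Int.cast_zero, eval_C] at ht hw
    have htw : t * w = 1 := by
      have : (t : ℚ) * w = 1 := by rw [← ht, ← hw, mul_inv_cancel₀ hq0]
      exact_mod_cast this
    rcases Int.eq_one_or_neg_one_of_mul_eq_one htw with h1 | h1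
    · left; rw [← hCq, ht, h1]; simp
    · right; rw [← hCq, ht, h1]; simp
  · rintro (h | h)
    · have : g = 1 := Subtype.ext (by simpa using h)
      exact this ▸ isUnit_one
    · have : g = -1 := Subtype.ext (by simpa using h)
      exact this ▸ isUnit_one.neg

/-- The generalized binomial polynomial `binom(X + a, m)`. -/
noncomputable def bpoly (a : ℤ) (m : ℕ) : ℚ[X] :=
  C ((m.factorial : ℚ))⁻¹ * Polynomial.taylor (a : ℚ) (descPochhammer ℚ m)

lemma bpoly_eval (a c : ℤ) (m : ℕ) :
    (bpoly a m).eval (c : ℚ) = ((Ring.choose (c + a) m : ℤ) : ℚ) := by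
  rw [bpoly, eval_mul, eval_C, Polynomial.taylor_eval]
  have h1 : descPochhammer ℚ m = (descPochhammer ℤ m).map (Int.castRingHom ℚ) :=
    (descPochhammer_map (Int.castRingHom ℚ) m).symm
  have h2 : ((c : ℚ) + (a : ℚ)) = ((c + a : ℤ) : ℚ) := by push_cast; ring
  rw [h1, h2, eval_intCast_map]
  simp only [Int.cast_id]
  have h3 : (descPochhammer ℤ m).eval (c + a) = m.factorial • Ring.choose (c + a) m := by
    rw [eval_eq_smeval, Ring.descPochhammer_eq_factorial_smul_choose]
  rw [h3]
  have h4 : (m.factorial : ℚ) ≠ 0 := by exact_mod_cast m.factorial_ne_zero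
  field_simp
  simp [nsmul_eq_mul]

lemma bpoly_mem (a : ℤ) (m : ℕ) : bpoly a m ∈ IntValued :=
  fun c => ⟨Ring.choose (c + a) m, bpoly_eval a c m⟩

lemma bpoly_natDegree (a : ℤ) (m : ℕ) : (bpoly a m).natDegree = m := by
  rw [bpoly, natDegree_C_mul (inv_ne_zero (by exact_mod_cast m.factorial_ne_zero)),
    natDegree_taylor, descPochhammer_natDegree]

lemma taylor_coeff_top (r : ℚ) (p : ℚ[X]) (m : ℕ) (hm : p.natDegree ≤ m) :
    (Polynomial.taylor r p).coeff m = p.coeff m := by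
  rw [taylor_coeff]
  have h0 : (hasseDeriv m p).natDegree ≤ 0 := le_trans (natDegree_hasseDeriv_le p m) (by omega)
  rw [(p.hasseDeriv m).eq_C_of_natDegree_le_zero h0, eval_C, hasseDeriv_coeff m p 0]
  simp

lemma bpoly_leadingCoeff (a : ℤ) (m : ℕ) :
    (bpoly a m).leadingCoeff = ((m.factorial : ℚ))⁻¹ := by
  rw [leadingCoeff, bpoly_natDegree, bpoly, coeff_C_mul,
    taylor_coeff_top _ _ _ (le_of_eq (descPochhammer_natDegree ℚ m))]
  have h1 : (descPochhammer ℚ m).coeff m = 1 := by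
    have h := monic_descPochhammer ℚ m
    rw [Monic, leadingCoeff, descPochhammer_natDegree] at h
    exact h
  rw [h1, mul_one]

lemma bpoly_ne_zero (a : ℤ) (m : ℕ) : bpoly a m ≠ 0 := by
  intro h
  have h2 := bpoly_leadingCoeff a m
  rw [h, leadingCoeff_zero] at h2
  exact (inv_ne_zero (by exact_mod_cast m.factorial_ne_zero : (m.factorial : ℚ) ≠ 0)) h2.symm

lemma bpoly_eval_one (a : ℤ) (m : ℕ) : (bpoly a m).eval (((m : ℤ) - a : ℤ) : ℚ) = 1 := by
  rw [bpoly_eval a ((m : ℤ) - a) m, sub_add_cancel, Ring.choose_natCast m m]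
  simp

/-- The generalized binomial polynomial as an element of `Int(ℤ)`. -/
noncomputable def bIV (a : ℤ) (m : ℕ) : IntValued := ⟨bpoly a m, bpoly_mem a m⟩

lemma isUnit_of_const_of_isUnit_eval (g : IntValued) (c : ℤ) (t : ℤ)
    (hdeg : (g : ℚ[X]).natDegree = 0)
    (ht : (g : ℚ[X]).eval (c : ℚ) = (t : ℚ)) (hU : IsUnit t) : IsUnit g := by
  have hgC : (g : ℚ[X]) = C ((g : ℚ[X]).coeff 0) :=
    (g : ℚ[X]).eq_C_of_natDegree_le_zero (le_of_eq hdeg)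
  have hgt : (g : ℚ[X]) = C (t : ℚ) := by
    rw [hgC]; congr 1
    rw [coeff_zero_eq_eval_zero]
    have h0 : (g : ℚ[X]).eval (c : ℚ) = (g : ℚ[X]).eval 0 := by
      rw [hgC, eval_C, eval_C]
    rw [← h0, ht]
  rw [isUnit_iff' g]
  rcases Int.isUnit_iff.mp hU with h1 | h1
  · left; rw [hgt, h1]; simp
  · right; rw [hgt, h1]; simp

lemma isUnit_of_const_of_eval_one (g h : IntValued) (c : ℤ)
    (hdeg : (g : ℚ[X]).natDegree = 0)
    (heval : ((g : ℚ[X]) * (h : ℚ[X])).eval (c : ℚ) = 1) : IsUnit g := by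
  obtain ⟨t, ht⟩ := g.2 c
  obtain ⟨w, hw⟩ := h.2 c
  rw [eval_mul, ht, hw] at heval
  have htw : t * w = 1 := by exact_mod_cast heval
  exact isUnit_of_const_of_isUnit_eval g c t hdeg ht (IsUnit.of_mul_eq_one _ htw)

lemma irreducible_bIV (a : ℤ) (m : ℕ) (hm : 1 ≤ m) : Irreducible (bIV a m) := by
  constructor
  · intro hu
    rw [isUnit_iff'] at hu
    have hdeg : (bIV a m : ℚ[X]).natDegree = m := bpoly_natDegree a m
    rcases hu with h1 | h1 <;> rw [h1] at hdeg
    · rw [natDegree_one] at hdeg; omega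
    · rw [show ((-1 : ℚ[X]) = C (-1)) from (by rw [C_neg, C_1]), natDegree_C] at hdeg; omega
  · intro g h hgh
    have hv : bpoly a m = (g : ℚ[X]) * (h : ℚ[X]) := congrArg Subtype.val hgh
    have hg0 : (g : ℚ[X]) ≠ 0 := fun h0 => bpoly_ne_zero a m (by rw [hv, h0, zero_mul])
    have hh0 : (h : ℚ[X]) ≠ 0 := fun h0 => bpoly_ne_zero a m (by rw [hv, h0, mul_zero])
    set k := (g : ℚ[X]).natDegree with hk
    set l := (h : ℚ[X]).natDegree with hl
    have hkl : k + l = m := by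
      rw [hk, hl, ← natDegree_mul hg0 hh0, ← hv, bpoly_natDegree]
    obtain ⟨u, hu⟩ := factorial_mul_coeff_int (g : ℚ[X]) g.2 k le_rfl
    obtain ⟨s, hs⟩ := factorial_mul_coeff_int (h : ℚ[X]) h.2 l le_rfl
    have hlc : (g : ℚ[X]).leadingCoeff * (h : ℚ[X]).leadingCoeff = ((m.factorial : ℚ))⁻¹ := by
      rw [← leadingCoeff_mul, ← hv, bpoly_leadingCoeff]
    have hfac : (m.choose k) * k.factorial * l.factorial = m.factorial := by
      have := Nat.choose_mul_factorial_mul_factorial (show k ≤ m by omega)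
      rwa [show m - k = l by omega] at this
    have hmf : (m.factorial : ℚ) ≠ 0 := by exact_mod_cast m.factorial_ne_zero
    have hulc : (u : ℚ) = (k.factorial : ℚ) * (g : ℚ[X]).leadingCoeff := by
      rw [← hu, leadingCoeff, ← hk]
    have hslc : (s : ℚ) = (l.factorial : ℚ) * (h : ℚ[X]).leadingCoeff := by
      rw [← hs, leadingCoeff, ← hl]
    have e1 : ((m.choose k : ℚ)) * (k.factorial : ℚ) * (l.factorial : ℚ) = (m.factorial : ℚ) := by
      exact_mod_cast congrArg (Nat.cast : ℕ → ℚ) hfac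
    have key : (u : ℚ) * s * (m.choose k : ℚ) = 1 := by
      calc (u : ℚ) * s * (m.choose k : ℚ)
          = ((m.choose k : ℚ) * k.factorial * l.factorial)
            * ((g : ℚ[X]).leadingCoeff * (h : ℚ[X]).leadingCoeff) := by
            rw [hulc, hslc]; ring
        _ = (m.factorial : ℚ) * ((m.factorial : ℚ))⁻¹ := by rw [e1, hlc]
        _ = 1 := mul_inv_cancel₀ hmf
    have keyz : (m.choose k : ℤ) * (u * s) = 1 := by
      rw [mul_comm]; exact_mod_cast key
    have hch : m.choose k = 1 := by
      rcases Int.eq_one_or_neg_one_of_mul_eq_one keyz with h1 | h1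
      · exact_mod_cast h1
      · exfalso; omega
    have hk0m : k = 0 ∨ k = m := by
      by_contra hc
      push_neg at hc
      have hk1 : 1 ≤ k := by omega
      have hkm : k + 1 ≤ m := by omega
      have : k + 1 ≤ m.choose k := by
        calc k + 1 = (k + 1).choose k := (Nat.choose_succ_self_right k).symm
          _ ≤ m.choose k := Nat.choose_le_choose k hkm
      omega
    have heval1 : ((g : ℚ[X]) * (h : ℚ[X])).eval ((((m : ℤ) - a : ℤ)) : ℚ) = 1 := by
      rw [← hv]; exact bpoly_eval_one a m
    rcases hk0m with h0 | h0
    · left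
      exact isUnit_of_const_of_eval_one g h ((m : ℤ) - a) h0 heval1
    · right
      refine isUnit_of_const_of_eval_one h g ((m : ℤ) - a) (by omega) ?_
      rwa [mul_comm]

lemma irreducible_two : Irreducible (2 : IntValued) := by
  have h2v : ((2 : IntValued) : ℚ[X]) = C 2 := by
    have h := Polynomial.C_eq_natCast (R := ℚ) 2
    norm_num at h
    exact h.symm
  constructor
  · intro hu
    rw [isUnit_iff', h2v] at hu
    rcases hu with h1 | h1
    · rw [show (1 : ℚ[X]) = C 1 from C_1.symm, C_inj] at h1; norm_num at h1
    · rw [show (-1 : ℚ[X]) = C (-1) from (by rw [C_neg, C_1]), C_inj] at h1; norm_num at h1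
  · intro g h hgh
    have hv : (C 2 : ℚ[X]) = (g : ℚ[X]) * (h : ℚ[X]) := by
      rw [← h2v]; exact congrArg Subtype.val hgh
    have hC0 : (C 2 : ℚ[X]) ≠ 0 := by
      intro h0; rw [C_eq_zero] at h0; norm_num at h0
    have hg0 : (g : ℚ[X]) ≠ 0 := fun h0 => hC0 (by rw [hv, h0, zero_mul])
    have hh0 : (h : ℚ[X]) ≠ 0 := fun h0 => hC0 (by rw [hv, h0, mul_zero])
    have hdeg : (g : ℚ[X]).natDegree + (h : ℚ[X]).natDegree = 0 := by
      rw [← natDegree_mul hg0 hh0, ← hv, natDegree_C]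
    obtain ⟨t, ht⟩ := g.2 0
    obtain ⟨w, hw⟩ := h.2 0
    have heval : ((g : ℚ[X]) * (h : ℚ[X])).eval (0 : ℚ) = 2 := by
      rw [← hv, eval_C]
    rw [eval_mul] at heval
    simp only [Int.cast_zero] at ht hw
    rw [ht, hw] at heval
    have htw : t * w = 2 := by exact_mod_cast heval
    have hirr : Irreducible (2 : ℤ) := Int.prime_two.irreducible
    rcases hirr.isUnit_or_isUnit htw.symm with hU | hU
    · left
      exact isUnit_of_const_of_isUnit_eval g 0 t (by omega) (by simpa using ht) hU
    · right
      exact isUnit_of_const_of_isUnit_eval h 0 w (by omega) (by simpa using hw) hU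

end IVAux

open IVAux in
/-- For every `n ≥ 1` there are irreducibles `H, G₁, …, G_{n+1}` of `Int(ℤ)` with
`X · H = G₁ ⋯ G_{n+1}`. -/
theorem x_mul_irreducible_long_factorization (n : ℕ) (hn : 1 ≤ n) :
    ∃ H : IntValued, ∃ G : Fin (n + 1) → IntValued,
      Irreducible H ∧ (∀ i, Irreducible (G i)) ∧
      Xiv * H = ∏ i, G i := by
  set m : ℕ := 2 ^ n with hm
  have hm2 : 2 ≤ m := by
    calc 2 = 2 ^ 1 := by norm_num
      _ ≤ 2 ^ n := Nat.pow_le_pow_right (by norm_num) hn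
  refine ⟨bIV (-1) (m - 1), Fin.snoc (fun _ : Fin n => (2 : IntValued)) (bIV 0 m), ?_, ?_, ?_⟩
  · exact irreducible_bIV (-1) (m - 1) (by omega)
  · intro i
    refine Fin.lastCases ?_ ?_ i
    · rw [Fin.snoc_last]; exact irreducible_bIV 0 m (by omega)
    · intro j; rw [Fin.snoc_castSucc]; exact irreducible_two
  · have hprod : (∏ i, (Fin.snoc (fun _ : Fin n => (2 : IntValued)) (bIV 0 m) : Fin (n+1) → IntValued) i)
        = 2 ^ n * bIV 0 m := by
      rw [Fin.prod_univ_castSucc]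
      simp [Fin.snoc_castSucc, Fin.snoc_last, Finset.prod_const, mul_comm]
    rw [hprod]
    apply Subtype.ext
    push_cast
    show (X : ℚ[X]) * bpoly (-1) (m - 1) = (2 : ℚ[X]) ^ n * bpoly 0 m
    have hmm : m - 1 + 1 = m := by omega
    have hfact : (m.factorial : ℚ) = (m : ℚ) * ((m - 1).factorial : ℚ) := by
      rw [← hmm, Nat.factorial_succ]; push_cast [hmm]; ring
    have h2n : ((2 : ℚ[X]) ^ n) = C ((m : ℕ) : ℚ) := by
      have h2C : (2 : ℚ[X]) = C 2 := by
        have h := Polynomial.C_eq_natCast (R := ℚ) 2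
        norm_num at h
        exact h.symm
      rw [h2C, ← C_pow]
      congr 1
      rw [hm]
      push_cast
      ring
    rw [bpoly, bpoly, h2n]
    have htay0 : Polynomial.taylor ((0 : ℤ) : ℚ) (descPochhammer ℚ m) = descPochhammer ℚ m := by
      simp [Polynomial.taylor_zero]
    rw [htay0]
    have htaym1 : Polynomial.taylor ((-1 : ℤ) : ℚ) (descPochhammer ℚ (m - 1))
        = (descPochhammer ℚ (m - 1)).comp (X - 1) := by
      rw [Polynomial.taylor_apply]
      congr 1
      rw [show (((-1 : ℤ) : ℚ)) = -1 by norm_num, C_neg, C_1]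
      ring
    rw [htaym1]
    have hsucc : descPochhammer ℚ m = X * (descPochhammer ℚ (m - 1)).comp (X - 1) := by
      conv_lhs => rw [← hmm]
      rw [descPochhammer_succ_left]
    rw [hsucc]
    have hmne : ((m : ℚ)) ≠ 0 := by positivity
    have hf1 : ((m - 1).factorial : ℚ) ≠ 0 := by exact_mod_cast (m - 1).factorial_ne_zero
    rw [show (C ((m : ℕ) : ℚ) * (C ((m.factorial : ℚ))⁻¹ * (X * (descPochhammer ℚ (m - 1)).comp (X - 1))))
        = (C ((m : ℚ) * ((m.factorial : ℚ))⁻¹)) * (X * (descPochhammer ℚ (m - 1)).comp (X - 1)) by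
      rw [C_mul]; ring]
    have : (m : ℚ) * ((m.factorial : ℚ))⁻¹ = (((m - 1).factorial : ℚ))⁻¹ := by
      rw [hfact]
      field_simp
    rw [this]
    ring
end

section
/- The lengths of factorizations of products of the fixed irreducible X with a varying irreducible element of Int(ℤ) are unbounded: for every natural number N there exists an irreducible H ∈ Int(ℤ) such that the set of lengths of X · H in Int(ℤ) contains an element greater than or equal to N. -/
open Polynomial

open Finset Nat


lemma factorial_dvd_prod (m : ℕ) (y : ℤ) : (m ! : ℤ) ∣ ∏ i ∈ range m, (y - i) := by
  have h1 : (descPochhammer ℤ m).eval y = ∏ i ∈ range m, (y - i) := by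
    induction m with
    | zero => simp
    | succ n ih =>
      rw [descPochhammer_succ_right, eval_mul, ih, prod_range_succ]
      simp
  have h2 := Ring.descPochhammer_eq_factorial_smul_choose y m
  rw [← Polynomial.eval_eq_smeval] at h2
  rw [← h1, h2]
  exact ⟨Ring.choose y m, by simp [nsmul_eq_mul]⟩


lemma coeff_comp_X_add_one (q : ℚ[X]) (n k : ℕ) (h : q.natDegree < n) :
    (q.comp (X + 1)).coeff k = ∑ i ∈ range n, q.coeff i * (i.choose k) := by
  conv_lhs => rw [q.as_sum_range' n h]
  have : ((∑ i ∈ range n, monomial i (q.coeff i)).comp (X + 1) : ℚ[X])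
      = ∑ i ∈ range n, C (q.coeff i) * (X + 1) ^ i := by
    simp [Polynomial.comp, Polynomial.eval₂_finset_sum, Polynomial.eval₂_monomial]
  rw [this, Polynomial.finset_sum_coeff]
  refine Finset.sum_congr rfl fun i _ => ?_
  rw [coeff_C_mul, coeff_X_add_one_pow]

lemma natDegree_le_of_coeff_eq_zero (p : ℚ[X]) (n : ℕ) (h1 : p.natDegree ≤ n + 1)
    (h2 : p.coeff (n + 1) = 0) : p.natDegree ≤ n := by
  by_contra hc
  have hd : p.natDegree = n + 1 := by omega
  have hp : p ≠ 0 := by intro h0; rw [h0] at hd; simp at hd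
  have := p.coeff_natDegree
  rw [hd, h2] at this
  exact hp (leadingCoeff_eq_zero.mp this.symm)

lemma key_lemma (n : ℕ) : ∀ q : ℚ[X], q.natDegree ≤ n →
    (∀ x : ℤ, ∃ z : ℤ, q.eval (x : ℚ) = (z : ℚ)) →
    ∃ z : ℤ, (n ! : ℚ) * q.coeff n = (z : ℚ) := by
  induction n with
  | zero =>
    intro q h hq
    obtain ⟨z, hz⟩ := hq 0
    refine ⟨z, ?_⟩
    have hC : q = C (q.coeff 0) := q.eq_C_of_natDegree_le_zero h
    rw [Nat.factorial_zero, Nat.cast_one, one_mul]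
    rw [hC] at hz; simpa using hz
  | succ n ih =>
    intro q h hq
    set D : ℚ[X] := q.comp (X + 1) - q with hD
    have hcoeff : ∀ k, D.coeff k = (∑ i ∈ range (n + 2), q.coeff i * (i.choose k)) - q.coeff k := by
      intro k
      rw [hD, Polynomial.coeff_sub, coeff_comp_X_add_one q (n + 2) k (by omega)]
    have htop : D.coeff (n + 1) = 0 := by
      rw [hcoeff, Finset.sum_range_succ]
      have : ∑ i ∈ range (n + 1), q.coeff i * ((i.choose (n + 1) : ℚ)) = 0 := by
        refine Finset.sum_eq_zero fun i hi => ?_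
        rw [Nat.choose_eq_zero_of_lt (Finset.mem_range.mp hi)]
        simp
      rw [this]; simp
    have hmid : D.coeff n = (n + 1 : ℚ) * q.coeff (n + 1) := by
      rw [hcoeff, Finset.sum_range_succ, Finset.sum_range_succ]
      have : ∑ i ∈ range n, q.coeff i * ((i.choose n : ℚ)) = 0 := by
        refine Finset.sum_eq_zero fun i hi => ?_
        rw [Nat.choose_eq_zero_of_lt (Finset.mem_range.mp hi)]
        simp
      rw [this]
      rw [Nat.choose_self, Nat.choose_succ_self_right]
      push_cast; ring
    have hdegD : D.natDegree ≤ n := by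
      refine natDegree_le_of_coeff_eq_zero D n ?_ htop
      have h1 : (q.comp (X + 1)).natDegree ≤ n + 1 := by
        rw [Polynomial.natDegree_comp]
        have : (X + 1 : ℚ[X]).natDegree = 1 := by
          simpa using Polynomial.natDegree_X_add_C (1 : ℚ)
        rw [this, mul_one]; exact h
      exact le_trans (Polynomial.natDegree_sub_le _ _) (by omega)
    have hival : ∀ x : ℤ, ∃ z : ℤ, D.eval (x : ℚ) = (z : ℚ) := by
      intro x
      obtain ⟨z1, hz1⟩ := hq (x + 1)
      obtain ⟨z2, hz2⟩ := hq x
      refine ⟨z1 - z2, ?_⟩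
      rw [hD, Polynomial.eval_sub, Polynomial.eval_comp]
      simp only [eval_add, eval_X, eval_one]
      rw [hz2]
      rw [show ((x : ℚ) + 1) = ((x + 1 : ℤ) : ℚ) by push_cast; ring, hz1]
      push_cast; ring
    obtain ⟨z, hz⟩ := ih D hdegD hival
    refine ⟨z, ?_⟩
    rw [hmid] at hz
    rw [Nat.factorial_succ]
    push_cast at hz ⊢
    linarith [hz]

noncomputable def binQ (b : ℤ) (m : ℕ) : ℚ[X] :=
  C ((m ! : ℚ))⁻¹ * ∏ i ∈ range m, (X - C ((b + i : ℤ) : ℚ))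


lemma binQ_mem (b : ℤ) (m : ℕ) : binQ b m ∈ IntValued := by
  intro c
  obtain ⟨z, hz⟩ := factorial_dvd_prod m (c - b)
  refine ⟨z, ?_⟩
  have he : (binQ b m).eval (c : ℚ)
      = (m ! : ℚ)⁻¹ * ∏ i ∈ range m, ((c : ℚ) - ((b + i : ℤ) : ℚ)) := by
    simp [binQ, eval_prod]
  have h2 : ∏ i ∈ range m, ((c : ℚ) - ((b + i : ℤ) : ℚ))
      = ((∏ i ∈ range m, (c - b - i) : ℤ) : ℚ) := by
    push_cast
    exact Finset.prod_congr rfl fun i _ => by ring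
  rw [he, h2]
  rw [hz]
  push_cast
  rw [← mul_assoc, inv_mul_cancel₀ (by exact_mod_cast Nat.factorial_ne_zero m : (m ! : ℚ) ≠ 0), one_mul]

lemma monic_prodF (b : ℤ) (m : ℕ) :
    Monic (∏ i ∈ range m, (X - C ((b + i : ℤ) : ℚ))) :=
  monic_prod_of_monic _ _ fun i _ => monic_X_sub_C _

lemma natDegree_binQ (b : ℤ) (m : ℕ) : (binQ b m).natDegree = m := by
  rw [binQ, natDegree_C_mul (inv_ne_zero (Nat.cast_ne_zero.mpr (Nat.factorial_ne_zero m)))]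
  rw [natDegree_prod_of_monic _ _ fun i _ => monic_X_sub_C _]
  rw [Finset.sum_congr rfl (fun (i : ℕ) _ => natDegree_X_sub_C (((b + (i : ℤ)) : ℤ) : ℚ))]
  simp

lemma binQ_ne_zero (b : ℤ) (m : ℕ) : binQ b m ≠ 0 :=
  mul_ne_zero (by simp [Nat.factorial_ne_zero m]) (monic_prodF b m).ne_zero

lemma leadingCoeff_binQ (b : ℤ) (m : ℕ) : (binQ b m).leadingCoeff = (m ! : ℚ)⁻¹ := by
  rw [binQ, leadingCoeff_mul, (monic_prodF b m).leadingCoeff, leadingCoeff_C, mul_one]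

lemma isUnit_of_pm_one (x : IntValued) (h : (x : ℚ[X]) = 1 ∨ (x : ℚ[X]) = -1) : IsUnit x := by
  rcases h with h | h
  · have : x = 1 := Subtype.ext (by simpa using h)
    rw [this]; exact isUnit_one
  · have : x = -1 := Subtype.ext (by simpa using h)
    rw [this]; exact isUnit_one.neg

lemma eval_ne_zero_of_isUnit {x : IntValued} (h : IsUnit x) (r : ℚ) :
    (x : ℚ[X]).eval r ≠ 0 := by
  obtain ⟨y, hy⟩ := h.exists_right_inv
  have hval : (x : ℚ[X]) * (y : ℚ[X]) = 1 := by exact_mod_cast congrArg (fun t : IntValued => (t : ℚ[X])) hy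
  intro h0
  have := congrArg (Polynomial.eval r) hval
  rw [eval_mul, h0, zero_mul, eval_one] at this
  exact zero_ne_one this

lemma binQ_irreducible (b : ℤ) (m : ℕ) (hm : 1 ≤ m) :
    Irreducible (⟨binQ b m, binQ_mem b m⟩ : IntValued) := by
  constructor
  · intro hu
    have := eval_ne_zero_of_isUnit hu ((b : ℚ))
    apply this
    show (binQ b m).eval (b : ℚ) = 0
    rw [binQ, eval_mul, eval_prod]
    have : ∏ i ∈ range m, ((X - C ((b + i : ℤ) : ℚ)).eval (b : ℚ)) = 0 := by
      refine Finset.prod_eq_zero (Finset.mem_range.mpr hm) ?_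
      simp
    rw [this, mul_zero]
  · rintro g h hgh
    have hpoly : binQ b m = (g : ℚ[X]) * (h : ℚ[X]) := by
      have := congrArg (Subring.subtype IntValued) hgh
      simpa using this
    have hg0 : (g : ℚ[X]) ≠ 0 := fun h0 => binQ_ne_zero b m (by rw [hpoly, h0, zero_mul])
    have hh0 : (h : ℚ[X]) ≠ 0 := fun h0 => binQ_ne_zero b m (by rw [hpoly, h0, mul_zero])
    set d1 := (g : ℚ[X]).natDegree with hd1
    set d2 := (h : ℚ[X]).natDegree with hd2
    have hdeg : d1 + d2 = m := by
      rw [hd1, hd2, ← Polynomial.natDegree_mul hg0 hh0, ← hpoly, natDegree_binQ]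
    have hlc : (g : ℚ[X]).leadingCoeff * (h : ℚ[X]).leadingCoeff = (m ! : ℚ)⁻¹ := by
      rw [← Polynomial.leadingCoeff_mul, ← hpoly, leadingCoeff_binQ]
    obtain ⟨u, hu⟩ := key_lemma d1 (g : ℚ[X]) le_rfl g.2
    obtain ⟨v, hv⟩ := key_lemma d2 (h : ℚ[X]) le_rfl h.2
    rw [Polynomial.coeff_natDegree] at hu hv
    have hu0 : u ≠ 0 := by
      intro h0
      rw [h0] at hu
      have := mul_ne_zero (Nat.cast_ne_zero.mpr (Nat.factorial_ne_zero d1) : (d1 ! : ℚ) ≠ 0)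
        (Polynomial.leadingCoeff_ne_zero.mpr hg0)
      simp [hu] at this
    have hv0 : v ≠ 0 := by
      intro h0
      rw [h0] at hv
      have := mul_ne_zero (Nat.cast_ne_zero.mpr (Nat.factorial_ne_zero d2) : (d2 ! : ℚ) ≠ 0)
        (Polynomial.leadingCoeff_ne_zero.mpr hh0)
      simp [hv] at this
    have hkey : (m ! : ℤ) * (u * v) = (d1 ! : ℤ) * (d2 ! : ℤ) := by
      have hq : (m ! : ℚ) * ((u : ℚ) * (v : ℚ)) = (d1 ! : ℚ) * (d2 ! : ℚ) := by
        have hfne : (m ! : ℚ) ≠ 0 := Nat.cast_ne_zero.mpr (Nat.factorial_ne_zero m)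
        rw [← hu, ← hv]
        calc (m ! : ℚ) * (((d1 ! : ℚ) * (g:ℚ[X]).leadingCoeff) * ((d2 ! : ℚ) * (h:ℚ[X]).leadingCoeff))
            = ((d1 ! : ℚ) * (d2 ! : ℚ)) * ((m ! : ℚ) * ((g:ℚ[X]).leadingCoeff * (h:ℚ[X]).leadingCoeff)) := by
              ring
          _ = (d1 ! : ℚ) * (d2 ! : ℚ) := by rw [hlc, mul_inv_cancel₀ hfne, mul_one]
      exact_mod_cast hq
    -- case analysis
    rcases Nat.eq_zero_or_pos d1 with h1 | h1
    · left
      -- g is a constant of absolute value 1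
      have hmd : d2 = m := by omega
      have hchoose : u * v = 1 := by
        have : (m ! : ℤ) * (u * v) = (m ! : ℤ) * 1 := by
          rw [hkey, h1, hmd]; simp
        exact mul_left_cancel₀ (by exact_mod_cast Nat.factorial_ne_zero m) this
      have huu : u = 1 ∨ u = -1 := Int.isUnit_iff.mp (IsUnit.of_mul_eq_one _ hchoose)
      have hgC : (g : ℚ[X]) = C ((g : ℚ[X]).coeff 0) := (g : ℚ[X]).eq_C_of_natDegree_le_zero (by omega)
      have hlcg : (g : ℚ[X]).leadingCoeff = (g : ℚ[X]).coeff 0 := by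
        conv_lhs => rw [hgC]
        rw [leadingCoeff_C]
      have hgc0 : (g : ℚ[X]).coeff 0 = (u : ℚ) := by
        rw [h1] at hu
        simpa [hlcg] using hu
      refine isUnit_of_pm_one g ?_
      rcases huu with h' | h'
      · left; rw [hgC, hgc0, h']; simp
      · right; rw [hgC, hgc0, h']; simp [← Polynomial.C_neg]
    rcases Nat.eq_zero_or_pos d2 with h2 | h2
    · right
      have hmd : d1 = m := by omega
      have hchoose : u * v = 1 := by
        have : (m ! : ℤ) * (u * v) = (m ! : ℤ) * 1 := by
          rw [hkey, h2, hmd]; simp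
        exact mul_left_cancel₀ (by exact_mod_cast Nat.factorial_ne_zero m) this
      have hvv : v = 1 ∨ v = -1 := Int.isUnit_iff.mp (IsUnit.of_mul_eq_one _ (by rw [mul_comm]; exact hchoose))
      have hhC : (h : ℚ[X]) = C ((h : ℚ[X]).coeff 0) := (h : ℚ[X]).eq_C_of_natDegree_le_zero (by omega)
      have hlch : (h : ℚ[X]).leadingCoeff = (h : ℚ[X]).coeff 0 := by
        conv_lhs => rw [hhC]
        rw [leadingCoeff_C]
      have hhc0 : (h : ℚ[X]).coeff 0 = (v : ℚ) := by
        rw [h2] at hv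
        simpa [hlch] using hv
      refine isUnit_of_pm_one h ?_
      rcases hvv with h' | h'
      · left; rw [hhC, hhc0, h']; simp
      · right; rw [hhC, hhc0, h']; simp [← Polynomial.C_neg]
    · exfalso
      -- both degrees positive: contradiction
      have hle : d1 ≤ m := by omega
      have hd2m : d2 ≤ m := by omega
      have hpascal : 2 ≤ m.choose d1 := by
        have h3 : d1 - 1 + 1 = d1 := by omega
        have h4 : m - 1 + 1 = m := by omega
        have hps : m.choose d1 = (m-1).choose (d1-1) + (m-1).choose (d1-1+1) := by
          conv_lhs => rw [← h4, ← h3]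
          exact Nat.choose_succ_succ _ _
        have p1 : 0 < (m-1).choose (d1-1) := Nat.choose_pos (by omega)
        have p2 : 0 < (m-1).choose (d1-1+1) := Nat.choose_pos (by omega)
        omega
      have hcmf : (m.choose d1) * d1 ! * d2 ! = m ! := by
        have := Nat.choose_mul_factorial_mul_factorial hle
        rw [show m - d1 = d2 by omega] at this
        exact this
      have hone : (m.choose d1 : ℤ) * (u * v) = 1 := by
        have hmain : ((d1 ! : ℤ) * (d2 ! : ℤ)) * ((m.choose d1 : ℤ) * (u * v))
            = ((d1 ! : ℤ) * (d2 ! : ℤ)) * 1 := by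
          rw [mul_one]
          rw [show ((d1 ! : ℤ) * (d2 ! : ℤ)) * ((m.choose d1 : ℤ) * (u * v))
              = ((m.choose d1 : ℤ) * (d1 ! : ℤ) * (d2 ! : ℤ)) * (u * v) by ring]
          rw [show ((m.choose d1 : ℤ) * (d1 ! : ℤ) * (d2 ! : ℤ)) = ((m ! : ℕ) : ℤ) by
            exact_mod_cast congrArg (fun t : ℕ => (t : ℤ)) hcmf]
          exact hkey
        exact mul_left_cancel₀ (mul_ne_zero (by exact_mod_cast Nat.factorial_ne_zero d1)
          (by exact_mod_cast Nat.factorial_ne_zero d2)) hmain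
      have : (m.choose d1 : ℤ) ≤ 1 := Int.le_of_dvd one_pos ⟨u * v, hone.symm⟩
      have : m.choose d1 ≤ 1 := by exact_mod_cast this
      omega

lemma two_irreducible : Irreducible (2 : IntValued) := by
  constructor
  · intro hu
    obtain ⟨y, hy⟩ := hu.exists_right_inv
    have hval : ((2 : IntValued) : ℚ[X]) * (y : ℚ[X]) = 1 := by
      have := congrArg (Subring.subtype IntValued) hy
      simpa using this
    obtain ⟨z, hz⟩ := y.2 0
    have h2 : ((2 : IntValued) : ℚ[X]) = (2 : ℚ[X]) := by push_cast; rfl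
    have := congrArg (Polynomial.eval (0 : ℚ)) hval
    rw [h2] at this
    simp only [eval_mul, eval_one, eval_ofNat] at this
    rw [show ((0:ℤ):ℚ) = (0:ℚ) by simp] at hz
    rw [hz] at this
    have : (2 * z : ℤ) = 1 := Int.cast_injective (α := ℚ) (by push_cast; linarith)
    omega
  · rintro g h hgh
    have hpoly : (2 : ℚ[X]) = (g : ℚ[X]) * (h : ℚ[X]) := by
      have := congrArg (Subring.subtype IntValued) hgh
      have h2' : ((2 : IntValued) : ℚ[X]) = (2 : ℚ[X]) := by push_cast; rfl
      rw [← h2']; simpa using this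
    have h20 : (2 : ℚ[X]) ≠ 0 := by norm_num
    have hg0 : (g : ℚ[X]) ≠ 0 := fun h0 => h20 (by rw [hpoly, h0, zero_mul])
    have hh0 : (h : ℚ[X]) ≠ 0 := fun h0 => h20 (by rw [hpoly, h0, mul_zero])
    have hdeg : (g : ℚ[X]).natDegree + (h : ℚ[X]).natDegree = 0 := by
      rw [← Polynomial.natDegree_mul hg0 hh0, ← hpoly]
      simp
    have hgC : (g : ℚ[X]) = C ((g : ℚ[X]).coeff 0) :=
      (g : ℚ[X]).eq_C_of_natDegree_le_zero (by omega)
    have hhC : (h : ℚ[X]) = C ((h : ℚ[X]).coeff 0) :=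
      (h : ℚ[X]).eq_C_of_natDegree_le_zero (by omega)
    obtain ⟨z, hz⟩ := g.2 0
    obtain ⟨w, hw⟩ := h.2 0
    rw [show ((0:ℤ):ℚ) = (0:ℚ) by simp] at hz hw
    have hz' : (g : ℚ[X]).coeff 0 = (z : ℚ) := by
      conv_lhs at hz => rw [hgC]
      simpa using hz
    have hw' : (h : ℚ[X]).coeff 0 = (w : ℚ) := by
      conv_lhs at hw => rw [hhC]
      simpa using hw
    have hzw : z * w = 2 := by
      have := congrArg (Polynomial.eval (0 : ℚ)) hpoly
      rw [hgC, hhC, hz', hw'] at this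
      simp only [eval_mul, eval_C, eval_ofNat] at this
      exact Int.cast_injective (α := ℚ) (by push_cast; linarith)
    have : IsUnit z ∨ IsUnit w := Int.prime_two.irreducible.isUnit_or_isUnit hzw.symm
    rcases this with huz | huw
    · left
      refine isUnit_of_pm_one g ?_
      rcases Int.isUnit_iff.mp huz with h' | h'
      · left; rw [hgC, hz', h']; simp
      · right; rw [hgC, hz', h']; simp [← Polynomial.C_neg]
    · right
      refine isUnit_of_pm_one h ?_
      rcases Int.isUnit_iff.mp huw with h' | h'
      · left; rw [hhC, hw', h']; simp
      · right; rw [hhC, hw', h']; simp [← Polynomial.C_neg]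

/-- Lengths of factorizations of `X · H`, for irreducible `H`, are unbounded:
for every `N` there is an irreducible `H ∈ Int(ℤ)` such that `L(X · H)` contains
some `k ≥ N`. -/
theorem lengths_of_x_mul_irreducible_unbounded (N : ℕ) :
    ∃ H : IntValued, Irreducible H ∧
      ∃ k : ℕ, N ≤ k ∧
        ∃ l : Multiset IntValued, Multiset.card l = k ∧ (∀ g ∈ l, Irreducible g) ∧
          l.prod = Xiv * H := by
  set n : ℕ := 2 ^ (N + 1) - 1 with hn
  have hn1 : n + 1 = 2 ^ (N + 1) := by
    have : 1 ≤ 2 ^ (N + 1) := Nat.one_le_two_pow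
    omega
  have hnpos : 1 ≤ n := by
    have : 4 ≤ 2 ^ (N + 1) + 2 := by
      have := Nat.one_le_two_pow (n := N)
      have h2 : 2 ^ (N + 1) = 2 * 2 ^ N := by ring
      omega
    omega
  refine ⟨⟨binQ 1 n, binQ_mem 1 n⟩, binQ_irreducible 1 n hnpos, N + 2, by omega,
    Multiset.replicate (N + 1) (2 : IntValued) + {(⟨binQ 0 (n + 1), binQ_mem 0 (n + 1)⟩ : IntValued)},
    ?_, ?_, ?_⟩
  · simp
  · intro g hg
    rw [Multiset.mem_add] at hg
    rcases hg with hg | hg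
    · rw [Multiset.eq_of_mem_replicate hg]
      exact two_irreducible
    · rw [Multiset.mem_singleton.mp hg]
      exact binQ_irreducible 0 (n + 1) (by omega)
  · rw [Multiset.prod_add, Multiset.prod_replicate, Multiset.prod_singleton]
    apply Subtype.ext
    have hcoe : (((2 : IntValued) ^ (N + 1) * ⟨binQ 0 (n + 1), binQ_mem 0 (n + 1)⟩ : IntValued) : ℚ[X])
        = (2 : ℚ[X]) ^ (N + 1) * binQ 0 (n + 1) := by
      push_cast; rfl
    rw [hcoe]
    show (2 : ℚ[X]) ^ (N + 1) * binQ 0 (n + 1) = X * binQ 1 n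
    -- polynomial identity
    have hsplit : ∏ i ∈ range (n + 1), (X - C (((0 : ℤ) + (i : ℤ) : ℤ) : ℚ))
        = X * ∏ i ∈ range n, (X - C (((1 : ℤ) + (i : ℤ) : ℤ) : ℚ)) := by
      rw [Finset.prod_range_succ']
      rw [mul_comm]
      congr 1
      · simp
      · refine Finset.prod_congr rfl fun i _ => ?_
        congr 1
        push_cast
        ring
    rw [binQ, binQ, hsplit]
    have h2c : ((2 : ℚ[X])) ^ (N + 1) = C (((n : ℚ) + 1)) := by
      have : ((2 : ℚ)) ^ (N + 1) = ((n : ℚ) + 1) := by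
        rw [show ((n : ℚ) + 1) = ((n + 1 : ℕ) : ℚ) by push_cast; ring, hn1]
        push_cast
        ring
      rw [← this]
      rw [C_pow]
      congr 1
    rw [h2c]
    rw [show (C ((((n+1) ! : ℚ))⁻¹) : ℚ[X]) * (X * ∏ i ∈ range n, (X - C (((1 : ℤ) + (i : ℤ) : ℤ) : ℚ)))
        = X * (C ((((n+1) ! : ℚ))⁻¹) * ∏ i ∈ range n, (X - C (((1 : ℤ) + (i : ℤ) : ℤ) : ℚ))) by ring]
    rw [show C (((n : ℚ) + 1)) * (X * (C ((((n+1) ! : ℚ))⁻¹) * ∏ i ∈ range n, (X - C (((1 : ℤ) + (i : ℤ) : ℤ) : ℚ))))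
        = X * ((C (((n : ℚ) + 1)) * C ((((n+1) ! : ℚ))⁻¹)) * ∏ i ∈ range n, (X - C (((1 : ℤ) + (i : ℤ) : ℤ) : ℚ))) by ring]
    congr 2
    rw [← C_mul]
    congr 1
    rw [Nat.factorial_succ]
    push_cast
    rw [mul_inv]
    rw [← mul_assoc, mul_inv_cancel₀ (by positivity : ((n : ℚ) + 1) ≠ 0), one_mul]
end

section
/- Let p be a prime, I a nonempty finite index set, and for each i ∈ I let fᵢ ∈ ℤ[X] be primitive and irreducible in ℤ[X], such that the fixed divisor of the product ∏_{i∈I} fᵢ equals p. Let g = (∏_{i∈I} fᵢ)/p ∈ Int(ℤ). Then every factorization of g into irreducibles in Int(ℤ) is essentially the same as a factorization of the form g = ((∏_{j∈J} fⱼ)/p) · ∏_{i∈I∖J} fᵢ, where J ⊆ I is minimal (with respect to inclusion) among subsets of I such that the fixed divisor of ∏_{j∈J} fⱼ equals p. -/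
open Polynomial

/-- The fixed divisor `d(f)` of `f ∈ ℤ[X]`: the nonnegative generator of the
ideal of ℤ generated by the image `f(ℤ)`. -/
noncomputable def fixedDivisor (f : Polynomial ℤ) : ℕ :=
  (@Submodule.IsPrincipal.generator ℤ ℤ _ _ _
    (Ideal.span (Set.range fun c : ℤ => f.eval c))
    (IsPrincipalIdealRing.principal _)).natAbs

/-- An integer polynomial, viewed as an element of `Int(ℤ)`. -/
noncomputable def toIV (f : Polynomial ℤ) : IntValued :=
  ⟨f.map (Int.castRingHom ℚ), fun c => ⟨f.eval c, by simp [Polynomial.eval_intCast_map]⟩⟩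

/-! ### Auxiliary lemmas -/

lemma fd_dvd_eval (f : Polynomial ℤ) (c : ℤ) : (fixedDivisor f : ℤ) ∣ f.eval c := by
  rw [fixedDivisor, Int.natAbs_dvd]
  rw [← Ideal.mem_span_singleton, Ideal.span_singleton_generator]
  exact Ideal.subset_span ⟨c, rfl⟩

lemma dvd_fd (f : Polynomial ℤ) (e : ℤ) (he : ∀ c : ℤ, e ∣ f.eval c) :
    e ∣ (fixedDivisor f : ℤ) := by
  rw [fixedDivisor, Int.dvd_natAbs]
  have h1 : Ideal.span (Set.range fun c : ℤ => f.eval c) ≤ Ideal.span {e} := by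
    rw [Ideal.span_le]
    rintro x ⟨c, rfl⟩
    exact Ideal.mem_span_singleton.2 (he c)
  rw [← Ideal.mem_span_singleton]
  exact h1 (Submodule.IsPrincipal.generator_mem _)

lemma fd_dvd_fd {A B : Polynomial ℤ} (h : A ∣ B) : fixedDivisor A ∣ fixedDivisor B := by
  rw [← Int.natCast_dvd_natCast]
  refine dvd_fd _ _ fun c => ?_
  exact (fd_dvd_eval A c).trans (by obtain ⟨k, rfl⟩ := h; simp [dvd_mul_right])

lemma fd_assoc {A B : Polynomial ℤ} (h : Associated A B) : fixedDivisor A = fixedDivisor B :=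
  Nat.dvd_antisymm (fd_dvd_fd h.dvd) (fd_dvd_fd h.symm.dvd)

lemma fd_one : fixedDivisor 1 = 1 := by
  have h := fd_dvd_eval 1 0
  simp only [Polynomial.eval_one] at h
  have h2 : fixedDivisor 1 ∣ 1 := by exact_mod_cast h
  exact Nat.dvd_one.1 h2

lemma rat_den_dvd (q : ℚ) (z m : ℤ) (h : q * (z : ℚ) = (m : ℚ)) : (q.den : ℤ) ∣ z := by
  have key : q.num * z = m * (q.den : ℤ) := by
    have h2 : (q * (z:ℚ)) * (q.den : ℚ) = (m:ℚ) * (q.den:ℚ) := by rw [h]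
    rw [mul_comm q _, mul_assoc, Rat.mul_den_eq_num] at h2
    rw [mul_comm q.num z]; exact_mod_cast h2
  have hdvd : (q.den : ℤ) ∣ q.num * z := Dvd.intro m (by linarith [key])
  have hnat : q.den ∣ q.num.natAbs * z.natAbs := by
    have := Int.natAbs_dvd_natAbs.2 hdvd
    simpa [Int.natAbs_mul] using this
  have hcop : q.den.Coprime q.num.natAbs := (q.reduced).symm
  have hz : q.den ∣ z.natAbs := (Nat.Coprime.dvd_of_dvd_mul_left hcop hnat)
  exact Int.natAbs_dvd_natAbs.1 (by simpa using hz)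

lemma rat_mul_int (q : ℚ) (d : ℤ) (h : (q.den : ℤ) ∣ d) : ∃ n : ℤ, q * (d : ℚ) = (n : ℚ) := by
  obtain ⟨t, rfl⟩ := h
  refine ⟨q.num * t, ?_⟩
  push_cast
  rw [← mul_assoc, Rat.mul_den_eq_num]

lemma multiset_isPrimitive (S : Multiset (Polynomial ℤ)) (h : ∀ A ∈ S, A.IsPrimitive) :
    S.prod.IsPrimitive := by
  induction S using Multiset.induction_on with
  | empty => simp only [Multiset.prod_zero]; exact isPrimitive_one
  | cons a S ih =>
    rw [Multiset.prod_cons]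
    exact (h a (Multiset.mem_cons_self a S)).mul
      (ih fun A hA => h A (Multiset.mem_cons_of_mem hA))

lemma exists_decomp (h : Polynomial ℚ) (h0 : h ≠ 0) :
    ∃ (q : ℚ) (A : Polynomial ℤ), A.IsPrimitive ∧ q ≠ 0 ∧
      h = Polynomial.C q * A.map (Int.castRingHom ℚ) := by
  obtain ⟨b, hb⟩ := IsLocalization.integerNormalization_map_to_map (nonZeroDivisors ℤ) h
  set N := IsLocalization.integerNormalization (nonZeroDivisors ℤ) h with hN
  have hbne : (b : ℤ) ≠ 0 := nonZeroDivisors.coe_ne_zero b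
  have hbq : ((b : ℤ) : ℚ) ≠ 0 := by exact_mod_cast hbne
  have hNalg : N.map (Int.castRingHom ℚ) = Polynomial.C ((b : ℤ) : ℚ) * h := by
    have halg : (algebraMap ℤ ℚ) = Int.castRingHom ℚ := rfl
    rw [← halg, hb, zsmul_eq_mul]
    norm_cast
  have hNne : N ≠ 0 := by
    intro hh
    rw [hh] at hNalg
    simp only [Polynomial.map_zero] at hNalg
    rcases (mul_eq_zero.1 hNalg.symm) with h1 | h2
    · exact absurd h1 (by simp [hbq])
    · exact h0 h2
  have hc : N.content ≠ 0 := by simpa [Polynomial.content_eq_zero_iff] using hNne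
  have hcq : ((N.content : ℤ) : ℚ) ≠ 0 := by exact_mod_cast hc
  refine ⟨(N.content : ℚ) / ((b:ℤ):ℚ), N.primPart, N.isPrimitive_primPart,
    div_ne_zero hcq hbq, ?_⟩
  have h2 : N.map (Int.castRingHom ℚ)
      = Polynomial.C ((N.content : ℤ) : ℚ) * N.primPart.map (Int.castRingHom ℚ) := by
    conv_lhs => rw [N.eq_C_content_mul_primPart]
    simp [Polynomial.map_mul]
  rw [h2] at hNalg
  calc h = Polynomial.C (((b:ℤ):ℚ))⁻¹ * (Polynomial.C ((b : ℤ) : ℚ) * h) := by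
        rw [← mul_assoc, ← Polynomial.C_mul, inv_mul_cancel₀ hbq]; simp
    _ = Polynomial.C ((N.content : ℚ) / ((b:ℤ):ℚ)) * N.primPart.map (Int.castRingHom ℚ) := by
        rw [← hNalg, ← mul_assoc, ← Polynomial.C_mul]
        congr 1
        · congr 1; field_simp

lemma prim_compare {A B : Polynomial ℤ} (hA : A.IsPrimitive) (hB : B.IsPrimitive) (r : ℚ)
    (h : A.map (Int.castRingHom ℚ) = Polynomial.C r * B.map (Int.castRingHom ℚ)) :
    (r = 1 ∨ r = -1) ∧ A = Polynomial.C r.num * B := by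
  have hinj : Function.Injective (Polynomial.map (Int.castRingHom ℚ)) :=
    Polynomial.map_injective _ Int.cast_injective
  have key : A * Polynomial.C (r.den : ℤ) = B * Polynomial.C r.num := by
    apply hinj
    rw [Polynomial.map_mul, Polynomial.map_mul, h]
    simp only [Polynomial.map_C]
    rw [mul_comm (Polynomial.C r), mul_assoc]
    congr 1
    rw [← Polynomial.C_mul]
    congr 1
    exact_mod_cast Rat.mul_den_eq_num r
  have hcont : ((r.den : ℤ)).natAbs = r.num.natAbs := by
    have h1 := congrArg Polynomial.content key
    rw [mul_comm A _, mul_comm B _, Polynomial.content_C_mul, Polynomial.content_C_mul,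
      hA.content_eq_one, hB.content_eq_one, mul_one, mul_one] at h1
    have h2 := congrArg Int.natAbs h1
    simpa [← Int.abs_eq_normalize, Int.natAbs_abs] using h2
  have hden : r.den = r.num.natAbs := by simpa using hcont
  have hcop : r.num.natAbs.Coprime r.den := r.reduced
  have hden1 : r.den = 1 := by
    have h3 := hcop
    rw [hden] at h3 ⊢
    simpa [Nat.coprime_self] using h3
  have hnum : r.num = 1 ∨ r.num = -1 := by
    rw [hden1] at hden
    rcases Int.natAbs_eq r.num with h' | h' <;> omega
  have hr : (r : ℚ) = (r.num : ℚ) := by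
    conv_lhs => rw [← Rat.num_div_den r]
    rw [hden1]; simp
  constructor
  · rcases hnum with h' | h' <;> [left; right] <;> rw [hr, h'] <;> simp
  · have h2 : A * Polynomial.C ((1:ℕ) : ℤ) = B * Polynomial.C r.num := by rw [← hden1]; exact key
    simpa [mul_comm] using h2

section Split
variable {α β ι : Type*} [CommMonoidWithZero α] [IsCancelMulZero α]

lemma split_pair (g : ι → α) (M : Multiset ι) (hM : ∀ i ∈ M, Prime (g i)) :
    ∀ x y : α, Associated (x * y) (M.map g).prod →
      ∃ M₁ M₂ : Multiset ι, M₁ + M₂ = M ∧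
        Associated x (M₁.map g).prod ∧ Associated y (M₂.map g).prod := by
  induction M using Multiset.induction_on with
  | empty =>
    intro x y h
    simp only [Multiset.map_zero, Multiset.prod_zero] at h
    have hu : IsUnit (x * y) := associated_one_iff_isUnit.1 h
    exact ⟨0, 0, by simp, by
      simpa using associated_one_iff_isUnit.2 (isUnit_of_mul_isUnit_left hu), by
      simpa using associated_one_iff_isUnit.2 (isUnit_of_mul_isUnit_right hu)⟩
  | cons a M' ih =>
    intro x y h
    have hprimes' : ∀ i ∈ M', Prime (g i) := fun i hi => hM i (Multiset.mem_cons_of_mem hi)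
    have hpa : Prime (g a) := hM a (Multiset.mem_cons_self a M')
    rw [Multiset.map_cons, Multiset.prod_cons] at h
    have hdvd : g a ∣ x * y := dvd_trans (dvd_mul_right _ _) h.symm.dvd
    rcases hpa.2.2 x y hdvd with ⟨x', rfl⟩ | ⟨y', rfl⟩
    · have h' : Associated (g a * (x' * y)) (g a * (M'.map g).prod) := by
        rwa [← mul_assoc]
      have h'' : Associated (x' * y) ((M'.map g).prod) :=
        Associated.of_mul_left h' (Associated.refl _) hpa.ne_zero
      obtain ⟨M₁, M₂, hMM, hx, hy⟩ := ih hprimes' x' y h''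
      exact ⟨a ::ₘ M₁, M₂, by rw [Multiset.cons_add, hMM], by
        rw [Multiset.map_cons, Multiset.prod_cons]; exact Associated.mul_left _ hx, hy⟩
    · have h' : Associated (g a * (x * y')) (g a * (M'.map g).prod) := by
        rwa [mul_left_comm] at h
      have h'' : Associated (x * y') ((M'.map g).prod) :=
        Associated.of_mul_left h' (Associated.refl _) hpa.ne_zero
      obtain ⟨M₁, M₂, hMM, hx, hy⟩ := ih hprimes' x y' h''
      exact ⟨M₁, a ::ₘ M₂, by rw [Multiset.add_cons, hMM], hx, by
        rw [Multiset.map_cons, Multiset.prod_cons]; exact Associated.mul_left _ hy⟩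

lemma split_multiset (g : ι → α) (φ : β → α) :
    ∀ (L : Multiset β) (M : Multiset ι), (∀ i ∈ M, Prime (g i)) →
      Associated ((L.map φ).prod) ((M.map g).prod) →
      ∃ Z : Multiset (β × Multiset ι), Z.map Prod.fst = L ∧ (Z.map Prod.snd).sum = M ∧
        ∀ z ∈ Z, Associated (φ z.1) ((z.2.map g).prod) := by
  intro L
  induction L using Multiset.induction_on with
  | empty =>
    intro M hM h
    simp only [Multiset.map_zero, Multiset.prod_zero] at h
    have hM0 : M = 0 := by
      by_contra hne
      obtain ⟨i, hi⟩ := Multiset.exists_mem_of_ne_zero hne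
      have hd : g i ∣ (M.map g).prod := Multiset.dvd_prod (Multiset.mem_map_of_mem g hi)
      exact (hM i hi).not_unit (isUnit_of_dvd_unit hd
        (associated_one_iff_isUnit.1 h.symm))
    exact ⟨0, by simp, by simp [hM0], by simp⟩
  | cons x L' ih =>
    intro M hM h
    rw [Multiset.map_cons, Multiset.prod_cons] at h
    obtain ⟨M₁, M₂, hMM, hx, hL'⟩ := split_pair g M hM _ _ h
    have hM₂ : ∀ i ∈ M₂, Prime (g i) := fun i hi =>
      hM i (by rw [← hMM]; exact Multiset.mem_add.2 (Or.inr hi))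
    obtain ⟨Z', hfst, hsnd, hass⟩ := ih M₂ hM₂ hL'
    refine ⟨(x, M₁) ::ₘ Z', by simp [hfst], by simp [hsnd, ← hMM, add_comm], ?_⟩
    rintro z hz
    rcases Multiset.mem_cons.1 hz with rfl | hz'
    · exact hx
    · exact hass z hz'
end Split

lemma assoc_sign {A B : Polynomial ℤ} (h : Associated A B) : A = B ∨ A = -B := by
  obtain ⟨v, hv⟩ := h
  obtain ⟨rv, hrv_unit, hrv⟩ := Polynomial.isUnit_iff.1 v.isUnit
  rcases Int.isUnit_iff.1 hrv_unit with rfl | rfl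
  · left; rw [← hv, ← hrv]; simp
  · right; rw [← hv, ← hrv]; simp [Polynomial.C_neg]

lemma coe_IV_prod (L : Multiset IntValued) :
    ((L.prod : IntValued) : Polynomial ℚ) = (L.map (fun h : IntValued => (h : Polynomial ℚ))).prod := by
  have := map_multiset_prod (IntValued.subtype) L
  simpa using this

lemma prod_decomp (q : IntValued → ℚ) (A : IntValued → Polynomial ℤ) :
    ∀ (L : Multiset IntValued),
      (∀ h ∈ L, (h : Polynomial ℚ) = Polynomial.C (q h) * (A h).map (Int.castRingHom ℚ)) →
      (L.map (fun h : IntValued => (h : Polynomial ℚ))).prod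
        = Polynomial.C ((L.map q).prod) * ((L.map A).prod).map (Int.castRingHom ℚ) := by
  intro L
  induction L using Multiset.induction_on with
  | empty => simp
  | cons a L ih =>
    intro hpt
    simp only [Multiset.map_cons, Multiset.prod_cons]
    rw [hpt a (Multiset.mem_cons_self a L), ih (fun h hh => hpt h (Multiset.mem_cons_of_mem hh)),
      Polynomial.map_mul, Polynomial.C_mul]
    ring

lemma toIV_mul (a b : Polynomial ℤ) : toIV (a * b) = toIV a * toIV b := by
  apply Subtype.ext
  simp [toIV, Polynomial.map_mul]

lemma not_isUnit_aux (h : IntValued) (u : ℚ) (E D : Polynomial ℤ)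
    (hcoe : (h : Polynomial ℚ) = Polynomial.C u * E.map (Int.castRingHom ℚ))
    (hdvd : D ∣ E) (hD : D.natDegree ≠ 0) : ¬ IsUnit h := by
  intro hu
  have h1 : IsUnit ((h : Polynomial ℚ)) := hu.map (IntValued.subtype)
  rw [hcoe] at h1
  have h2 : IsUnit (E.map (Int.castRingHom ℚ)) := isUnit_of_mul_isUnit_right h1
  have h3 : IsUnit (D.map (Int.castRingHom ℚ)) :=
    isUnit_of_dvd_unit (Polynomial.map_dvd _ hdvd) h2
  have h4 := Polynomial.isUnit_iff_degree_eq_zero.1 h3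
  rw [Polynomial.degree_map_eq_of_injective Int.cast_injective] at h4
  exact hD (Polynomial.natDegree_eq_zero_iff_degree_le_zero.2 h4.le)

lemma natDegree_ne_zero_of_prim_irr {A : Polynomial ℤ} (hp : A.IsPrimitive)
    (hi : Irreducible A) : A.natDegree ≠ 0 := by
  intro h0
  obtain ⟨a, rfl⟩ := Polynomial.natDegree_eq_zero.1 h0
  exact hi.not_isUnit (Polynomial.isUnit_C.2 (hp a dvd_rfl))

lemma key_mult {ι : Type*} (f : ι → Polynomial ℤ) :
    ∀ (W : Multiset (IntValued × Multiset ι)),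
      (∀ z ∈ W, ∃ i, z.2 = {i} ∧ Associates.mk z.1 = Associates.mk (toIV (f i))) →
      W.map (fun z => Associates.mk z.1)
        = ((W.map Prod.snd).sum.map fun i => Associates.mk (toIV (f i))) := by
  intro W
  induction W using Multiset.induction_on with
  | empty => simp
  | cons z W ih =>
    intro hpt
    obtain ⟨i, hi, hmk⟩ := hpt z (Multiset.mem_cons_self z W)
    simp only [Multiset.map_cons, Multiset.sum_cons, hi, Multiset.singleton_add,
      Multiset.map_cons]
    rw [hmk, ih (fun w hw => hpt w (Multiset.mem_cons_of_mem hw))]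

/-- Lemma 4. -/
theorem factorizations_of_prod_div_prime {ι : Type*} [DecidableEq ι]
    (p : ℕ) (hp : p.Prime) (I : Finset ι) (hI : I.Nonempty)
    (f : ι → Polynomial ℤ)
    (hprim : ∀ i ∈ I, (f i).IsPrimitive) (hirr : ∀ i ∈ I, Irreducible (f i))
    (hd : fixedDivisor (∏ i ∈ I, f i) = p)
    (g : IntValued)
    (hg : (g : Polynomial ℚ) * Polynomial.C (p : ℚ)
        = (∏ i ∈ I, f i).map (Int.castRingHom ℚ)) :
    ∀ L : Multiset IntValued, (∀ h ∈ L, Irreducible h) → L.prod = g →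
      ∃ J : Finset ι, J ⊆ I ∧ fixedDivisor (∏ j ∈ J, f j) = p ∧
        (∀ J' : Finset ι, J' ⊆ J → fixedDivisor (∏ j ∈ J', f j) = p → J' = J) ∧
        ∃ gJ : IntValued,
          (gJ : Polynomial ℚ) * Polynomial.C (p : ℚ)
              = (∏ j ∈ J, f j).map (Int.castRingHom ℚ) ∧
          L.map Associates.mk
            = Multiset.map Associates.mk
                (gJ ::ₘ ((I \ J).val.map fun i => toIV (f i))) := by
  intro L hL hLg
  have hinj : Function.Injective (Polynomial.map (Int.castRingHom ℚ)) :=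
    Polynomial.map_injective _ Int.cast_injective
  have hFne : (∏ i ∈ I, f i) ≠ 0 :=
    Finset.prod_ne_zero_iff.2 (fun i hi => (hirr i hi).ne_zero)
  have hgne : (g : Polynomial ℚ) ≠ 0 := by
    intro h0
    rw [h0, zero_mul] at hg
    exact hFne (hinj (by simpa using hg.symm))
  have hmem : ∀ h : IntValued, h ∈ L → (h : Polynomial ℚ) ≠ 0 := by
    intro h hh h0
    have hzero : (0 : IntValued) ∈ L := by
      have : h = 0 := Subtype.ext h0
      rwa [this] at hh
    have : L.prod = 0 := Multiset.prod_eq_zero hzero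
    rw [hLg] at this
    exact hgne (by rw [this]; rfl)
  have hdeg : ∀ i ∈ I, (f i).natDegree ≠ 0 :=
    fun i hi => natDegree_ne_zero_of_prim_irr (hprim i hi) (hirr i hi)
  -- decomposition of each element of `Int(ℤ)` as (rational) content times primitive part
  have decomp_all : ∀ h : IntValued, ∃ (qh : ℚ) (Ah : Polynomial ℤ), Ah.IsPrimitive ∧
      ((h : Polynomial ℚ) ≠ 0 → qh ≠ 0 ∧
        (h : Polynomial ℚ) = Polynomial.C qh * Ah.map (Int.castRingHom ℚ)) := by
    intro h
    by_cases h0 : (h : Polynomial ℚ) = 0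
    · exact ⟨1, 1, isPrimitive_one, fun hc => absurd h0 hc⟩
    · obtain ⟨qh, Ah, hA, hq, he⟩ := exists_decomp _ h0
      exact ⟨qh, Ah, hA, fun _ => ⟨hq, he⟩⟩
  choose q A hAprim hAspec using decomp_all
  have hprodL : (L.map (fun h : IntValued => (h : Polynomial ℚ))).prod
      = Polynomial.C ((L.map q).prod) * ((L.map A).prod).map (Int.castRingHom ℚ) :=
    prod_decomp q A L (fun h hh => (hAspec h (hmem h hh)).2)
  have hFeq : (∏ i ∈ I, f i).map (Int.castRingHom ℚ)
      = Polynomial.C ((p : ℚ) * (L.map q).prod)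
          * ((L.map A).prod).map (Int.castRingHom ℚ) := by
    rw [← hg, ← hLg, coe_IV_prod, hprodL, Polynomial.C_mul]
    ring
  have hAprimprod : ((L.map A).prod).IsPrimitive := by
    refine multiset_isPrimitive _ ?_
    rintro B hB
    obtain ⟨h, _, rfl⟩ := Multiset.mem_map.1 hB
    exact hAprim h
  have hFprim : (∏ i ∈ I, f i).IsPrimitive := by
    rw [Finset.prod_eq_multiset_prod]
    refine multiset_isPrimitive _ ?_
    rintro B hB
    obtain ⟨i, hi, rfl⟩ := Multiset.mem_map.1 hB
    exact hprim i hi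
  set r : ℚ := (p : ℚ) * (L.map q).prod with hrdef
  obtain ⟨hr1, hr2⟩ := prim_compare hFprim hAprimprod r hFeq
  have hrnum : r.num = 1 ∨ r.num = -1 := by
    rcases hr1 with h' | h' <;> rw [h'] <;> simp
  have hrnum_unit : IsUnit (Polynomial.C r.num : Polynomial ℤ) :=
    Polynomial.isUnit_C.2 (Int.isUnit_iff.2 hrnum)
  have hassocLA : Associated ((L.map A).prod) ((I.val.map f).prod) := by
    obtain ⟨v, hv⟩ := hrnum_unit
    refine ⟨v, ?_⟩
    rw [hv, mul_comm, ← hr2, Finset.prod_eq_multiset_prod]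
  have hprimes : ∀ i ∈ I.val, Prime (f i) :=
    fun i hi => (UniqueFactorizationMonoid.irreducible_iff_prime).1 (hirr i hi)
  obtain ⟨Z, hZfst, hZsnd, hZass⟩ := split_multiset f A L I.val hprimes hassocLA
  -- facts for each piece
  have hz1mem : ∀ z ∈ Z, z.1 ∈ L := by
    intro z hz; rw [← hZfst]; exact Multiset.mem_map_of_mem _ hz
  have hzne : ∀ z ∈ Z, (z.1 : Polynomial ℚ) ≠ 0 := fun z hz => hmem _ (hz1mem z hz)
  have hzdec : ∀ z ∈ Z, (z.1 : Polynomial ℚ)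
      = Polynomial.C (q z.1) * (A z.1).map (Int.castRingHom ℚ) :=
    fun z hz => (hAspec _ (hzne z hz)).2
  have hzsub : ∀ z ∈ Z, z.2 ≤ I.val := by
    intro z hz; rw [← hZsnd]
    exact Multiset.le_sum_of_mem (Multiset.mem_map_of_mem _ hz)
  have hfd_p : fixedDivisor ((I.val.map f).prod) = p := by
    rw [← Finset.prod_eq_multiset_prod]; exact hd
  have hsfd : ∀ s : Multiset ι, s ≤ I.val → fixedDivisor ((s.map f).prod) ∣ p := by
    intro s hs
    rw [← hfd_p]
    exact fd_dvd_fd (Multiset.prod_dvd_prod_of_le (Multiset.map_le_map hs))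
  have hzden : ∀ z ∈ Z, ((q z.1).den : ℤ) ∣ (fixedDivisor ((z.2.map f).prod) : ℤ) := by
    intro z hz
    rw [← fd_assoc (hZass z hz)]
    refine dvd_fd _ _ fun c => ?_
    obtain ⟨m, hm⟩ := z.1.2 c
    refine rat_den_dvd (q z.1) _ m ?_
    have hev := congrArg (Polynomial.eval ((c : ℤ) : ℚ)) (hzdec z hz)
    rw [hm] at hev
    rw [hev]
    simp [Polynomial.eval_intCast_map]
  -- no two pieces can both have fixed divisor divisible by p
  have htwo : ∀ s t : Multiset ι, s + t ≤ I.val →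
      (p : ℤ) ∣ (fixedDivisor ((s.map f).prod) : ℤ) →
      (p : ℤ) ∣ (fixedDivisor ((t.map f).prod) : ℤ) → False := by
    intro s t hst hs ht
    have hpp : ((p * p : ℕ) : ℤ) ∣ (fixedDivisor (((s + t).map f).prod) : ℤ) := by
      refine dvd_fd _ _ fun c => ?_
      rw [Multiset.map_add, Multiset.prod_add, Polynomial.eval_mul]
      push_cast
      exact mul_dvd_mul (hs.trans (fd_dvd_eval _ c)) (ht.trans (fd_dvd_eval _ c))
    have hpp2 : p * p ∣ p := by
      have h1 : (p * p) ∣ fixedDivisor (((s + t).map f).prod) := by exact_mod_cast hpp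
      exact h1.trans (hsfd _ hst)
    have := Nat.le_of_dvd hp.pos hpp2
    nlinarith [hp.two_le]
  -- there is at least one piece whose fixed divisor is divisible by p
  have hex : ∃ z ∈ Z, (p : ℤ) ∣ (fixedDivisor ((z.2.map f).prod) : ℤ) := by
    by_contra hno
    push_neg at hno
    have hint : ∀ z ∈ Z, q z.1 = ((q z.1).num : ℚ) := by
      intro z hz
      have hfd1 : fixedDivisor ((z.2.map f).prod) = 1 := by
        rcases hp.eq_one_or_self_of_dvd _ (hsfd _ (hzsub z hz)) with h' | h'
        · exact h'
        · exact absurd (by rw [h'] : (p:ℤ) ∣ (fixedDivisor ((z.2.map f).prod):ℤ)) (hno z hz)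
      have hden1 : (q z.1).den = 1 := by
        have hd1 := hzden z hz
        rw [hfd1] at hd1
        have : ((q z.1).den : ℤ) ∣ 1 := by exact_mod_cast hd1
        exact_mod_cast Int.eq_one_of_dvd_one (by positivity) this
      conv_lhs => rw [← Rat.num_div_den (q z.1), hden1]
      simp
    have hcast : (L.map q).prod = (((Z.map (fun z => (q z.1).num)).prod : ℤ) : ℚ) := by
      rw [← hZfst, Multiset.map_map]
      have hmapeq : Multiset.map (q ∘ Prod.fst) Z
          = Multiset.map (fun z => (((q z.1).num : ℤ) : ℚ)) Z :=
        Multiset.map_congr rfl (fun z hz => hint z hz)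
      rw [hmapeq]
      push_cast
      rw [Multiset.map_map]
      rfl
    have : IsUnit ((p : ℤ)) := by
      have h1 : ((p : ℤ) * (Z.map (fun z => (q z.1).num)).prod : ℤ) = 1 ∨
          ((p : ℤ) * (Z.map (fun z => (q z.1).num)).prod : ℤ) = -1 := by
        rcases hr1 with h' | h' <;> [left; right] <;>
          · rw [hrdef, hcast] at h'
            exact_mod_cast h'
      rcases h1 with h' | h'
      · exact IsUnit.of_mul_eq_one _ h'
      · exact IsUnit.of_mul_eq_one _ (by linarith : (p:ℤ) * (-(Z.map (fun z => (q z.1).num)).prod) = 1)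
    have hp2 := hp.two_le
    rcases Int.isUnit_iff.1 this with h' | h' <;> omega
  obtain ⟨z₀, hz₀Z, hz₀p⟩ := hex
  obtain ⟨Z', rfl⟩ := Multiset.exists_cons_of_mem hz₀Z
  have hz₀Z' : z₀ ∈ z₀ ::ₘ Z' := Multiset.mem_cons_self _ _
  have hZ'sum : z₀.2 + (Multiset.map Prod.snd Z').sum = I.val := by
    simpa using hZsnd
  have hz'not : ∀ z ∈ Z', ¬ (p : ℤ) ∣ (fixedDivisor ((z.2.map f).prod) : ℤ) := by
    intro z hz hdvd
    refine htwo z₀.2 z.2 ?_ hz₀p hdvd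
    calc z₀.2 + z.2 ≤ z₀.2 + (Multiset.map Prod.snd Z').sum :=
          add_le_add_right (Multiset.le_sum_of_mem (Multiset.mem_map_of_mem _ hz)) _
      _ = I.val := hZ'sum
  have hz'int : ∀ z ∈ Z', q z.1 = ((q z.1).num : ℚ) := by
    intro z hz
    have hfd1 : fixedDivisor ((z.2.map f).prod) = 1 := by
      rcases hp.eq_one_or_self_of_dvd _ (hsfd _ (hzsub z (Multiset.mem_cons_of_mem hz))) with h' | h'
      · exact h'
      · exact absurd (by rw [h'] : (p:ℤ) ∣ (fixedDivisor ((z.2.map f).prod):ℤ)) (hz'not z hz)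
    have hden1 : (q z.1).den = 1 := by
      have hd1 := hzden z (Multiset.mem_cons_of_mem hz)
      rw [hfd1] at hd1
      have hd2 : ((q z.1).den : ℤ) ∣ 1 := by exact_mod_cast hd1
      exact_mod_cast Int.eq_one_of_dvd_one (by positivity) hd2
    conv_lhs => rw [← Rat.num_div_den (q z.1), hden1]
    simp
  set m : ℤ := (Z'.map (fun z => (q z.1).num)).prod with hmdef
  have hm : (Multiset.map (q ∘ Prod.fst) Z').prod = (m : ℚ) := by
    have hmapeq : Multiset.map (q ∘ Prod.fst) Z'
        = Multiset.map (fun z => (((q z.1).num : ℤ) : ℚ)) Z' :=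
      Multiset.map_congr rfl (fun z hz => hz'int z hz)
    rw [hmapeq, hmdef]
    push_cast
    rw [Multiset.map_map]
    rfl
  have hdenz₀ : ((q z₀.1).den : ℤ) ∣ (p : ℤ) := by
    refine (hzden z₀ hz₀Z').trans ?_
    exact_mod_cast hsfd _ (hzsub z₀ hz₀Z')
  obtain ⟨n₀, hn₀⟩ := rat_mul_int (q z₀.1) (p : ℤ) hdenz₀
  have hn₀' : q z₀.1 * (p : ℚ) = (n₀ : ℚ) := by push_cast at hn₀; exact_mod_cast hn₀
  have hrprod : r = ((n₀ * m : ℤ) : ℚ) := by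
    rw [hrdef, ← hZfst, Multiset.map_map, Multiset.map_cons, Multiset.prod_cons, hm]
    simp only [Function.comp_apply]
    push_cast
    rw [← hn₀']
    ring
  have hn₀m : n₀ * m = 1 ∨ n₀ * m = -1 := by
    rcases hr1 with h' | h' <;> [left; right] <;>
      · rw [hrprod] at h'
        exact_mod_cast h'
  have hnm_unit : IsUnit (n₀ * m) := by
    rcases hn₀m with h' | h' <;> rw [h']
    · exact isUnit_one
    · exact isUnit_one.neg
  have hmunit : IsUnit m := isUnit_of_mul_isUnit_right hnm_unit
  have hn₀unit : IsUnit n₀ := isUnit_of_mul_isUnit_left hnm_unit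
  have hq'unit : ∀ z ∈ Z', q z.1 = 1 ∨ q z.1 = -1 := by
    intro z hz
    have hdvdm : (q z.1).num ∣ m := Multiset.dvd_prod (Multiset.mem_map_of_mem _ hz)
    have hqu : IsUnit (q z.1).num := isUnit_of_dvd_unit hdvdm hmunit
    rcases Int.isUnit_iff.1 hqu with h' | h' <;> [left; right] <;>
      rw [hz'int z hz, h'] <;> simp
  -- every other piece is a single `f i`
  have hsingle : ∀ z ∈ Z', ∃ i, z.2 = {i} ∧ Associates.mk z.1 = Associates.mk (toIV (f i)) := by
    intro z hz
    have hzZ : z ∈ z₀ ::ₘ Z' := Multiset.mem_cons_of_mem hz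
    obtain ⟨w, hw1, hwcoe⟩ : ∃ w : ℚ, (w = 1 ∨ w = -1) ∧
        (z.1 : Polynomial ℚ) = Polynomial.C w * ((z.2.map f).prod).map (Int.castRingHom ℚ) := by
      rcases assoc_sign (hZass z hzZ) with hA' | hA'
      · exact ⟨q z.1, hq'unit z hz, by rw [hzdec z hzZ, hA']⟩
      · refine ⟨-q z.1, ?_, ?_⟩
        · rcases hq'unit z hz with h' | h' <;> [right; left] <;> rw [h'] <;> ring
        · rw [hzdec z hzZ, hA']
          simp only [Polynomial.map_neg, Polynomial.C_neg]
          ring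
    obtain ⟨ε, hεcoe, hεunit⟩ : ∃ ε : IntValued,
        ((ε : Polynomial ℚ) = Polynomial.C w) ∧ IsUnit ε := by
      rcases hw1 with h' | h'
      · exact ⟨1, by rw [h']; simp, isUnit_one⟩
      · exact ⟨-1, by rw [h']; simp, isUnit_one.neg⟩
    rcases Multiset.empty_or_exists_mem z.2 with hempty | ⟨i, hi⟩
    · exfalso
      have hcoe1 : (z.1 : Polynomial ℚ) = Polynomial.C w := by rw [hwcoe, hempty]; simp
      have hunit : IsUnit z.1 := by
        have hz1ε : z.1 = ε := Subtype.ext (by rw [hcoe1, hεcoe])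
        rw [hz1ε]; exact hεunit
      exact (hL z.1 (hz1mem z hzZ)).not_isUnit hunit
    obtain ⟨t, ht⟩ := Multiset.exists_cons_of_mem hi
    have hiI : i ∈ I.val := Multiset.mem_of_le (hzsub z hzZ) hi
    by_cases ht0 : t = 0
    · refine ⟨i, by rw [ht, ht0]; rfl, ?_⟩
      have hz1eq : z.1 = ε * toIV (f i) := Subtype.ext (by
        rw [hwcoe, ht, ht0]
        push_cast
        rw [hεcoe]
        simp [toIV])
      rw [hz1eq]
      refine (Associates.mk_eq_mk_iff_associated.2 (Associated.symm ⟨hεunit.unit, ?_⟩))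
      rw [hεunit.unit_spec]
      ring
    · exfalso
      obtain ⟨j, hj⟩ := Multiset.exists_mem_of_ne_zero ht0
      have hjI : j ∈ I.val := Multiset.mem_of_le (hzsub z hzZ)
        (by rw [ht]; exact Multiset.mem_cons_of_mem hj)
      have heq : z.1 = (ε * toIV (f i)) * toIV ((t.map f).prod) := Subtype.ext (by
        rw [hwcoe, ht]
        push_cast
        rw [hεcoe]
        simp only [toIV, Multiset.map_cons, Multiset.prod_cons, Polynomial.map_mul]
        ring)
      rcases (hL z.1 (hz1mem z hzZ)).isUnit_or_isUnit heq with hu | hu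
      · refine not_isUnit_aux (ε * toIV (f i)) w (f i) (f i) ?_ dvd_rfl (hdeg i hiI) hu
        push_cast
        rw [hεcoe]
        simp [toIV]
      · refine not_isUnit_aux (toIV ((t.map f).prod)) 1 ((t.map f).prod) (f j) ?_
          (Multiset.dvd_prod (Multiset.mem_map_of_mem f hj)) (hdeg j hjI) hu
        simp [toIV]
  -- the distinguished piece
  obtain ⟨w₀, hw₀p, hw₀coe⟩ : ∃ w₀ : ℚ, (w₀ * (p : ℚ) = 1 ∨ w₀ * (p : ℚ) = -1) ∧
      (z₀.1 : Polynomial ℚ)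
        = Polynomial.C w₀ * ((z₀.2.map f).prod).map (Int.castRingHom ℚ) := by
    have hn₀1 : n₀ = 1 ∨ n₀ = -1 := Int.isUnit_iff.1 hn₀unit
    rcases assoc_sign (hZass z₀ hz₀Z') with hA' | hA'
    · refine ⟨q z₀.1, ?_, by rw [hzdec z₀ hz₀Z', hA']⟩
      rcases hn₀1 with h' | h' <;> [left; right] <;> rw [hn₀', h'] <;> simp
    · refine ⟨-q z₀.1, ?_, ?_⟩
      · rcases hn₀1 with h' | h' <;> [right; left] <;>
          · rw [neg_mul, hn₀', h']
            simp
      · rw [hzdec z₀ hz₀Z', hA']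
        simp only [Polynomial.map_neg, Polynomial.C_neg]
        ring
  have hs₀sub : z₀.2 ≤ I.val := hzsub z₀ hz₀Z'
  have hs₀nodup : z₀.2.Nodup := Multiset.nodup_of_le hs₀sub I.nodup
  set J : Finset ι := ⟨z₀.2, hs₀nodup⟩ with hJdef
  have hJval : J.val = z₀.2 := rfl
  have hJsub : J ⊆ I := Finset.val_le_iff.1 hs₀sub
  have hJprod : ∏ j ∈ J, f j = (z₀.2.map f).prod := by
    rw [Finset.prod_eq_multiset_prod, hJval]
  have hJfd : fixedDivisor (∏ j ∈ J, f j) = p := by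
    rw [hJprod]
    refine Nat.dvd_antisymm (hsfd _ hs₀sub) ?_
    exact_mod_cast hz₀p
  have hJ'prod : ∀ J' : Finset ι, ∏ j ∈ J', f j = (J'.val.map f).prod :=
    fun J' => Finset.prod_eq_multiset_prod _ _
  have hmin : ∀ J' : Finset ι, J' ⊆ J → fixedDivisor (∏ j ∈ J', f j) = p → J' = J := by
    intro J' hJ'sub hJ'fd
    by_contra hne
    have hle : J'.val ≤ J.val := Finset.val_le_iff.2 hJ'sub
    set rest : Multiset ι := J.val - J'.val with hrestdef
    have hrest : J'.val + rest = J.val := add_tsub_cancel_of_le hle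
    have hrest0 : rest ≠ 0 := by
      intro h0
      exact hne (Finset.val_inj.1 (by rw [← hrest, h0, add_zero]))
    obtain ⟨j, hj⟩ := Multiset.exists_mem_of_ne_zero hrest0
    have hjJ : j ∈ J.val := by rw [← hrest]; exact Multiset.mem_add.2 (Or.inr hj)
    have hjI : j ∈ I.val := Multiset.mem_of_le hs₀sub (hJval ▸ hjJ)
    have hJ'ne : J'.Nonempty := by
      rw [Finset.nonempty_iff_ne_empty]
      intro h0
      rw [h0, Finset.prod_empty, fd_one] at hJ'fd
      exact hp.one_lt.ne' hJ'fd.symm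
    obtain ⟨j', hj'⟩ := hJ'ne
    have hj'I : j' ∈ I.val :=
      Multiset.mem_of_le hs₀sub (hJval ▸ Multiset.mem_of_le hle hj')
    have hB₁mem : (Polynomial.C w₀ * ((J'.val.map f).prod).map (Int.castRingHom ℚ))
        ∈ IntValued := by
      intro c
      have hfdJ' : fixedDivisor ((J'.val.map f).prod) = p := by
        rw [← hJ'prod J']; exact hJ'fd
      have hpd : (p : ℤ) ∣ (J'.val.map f).prod.eval c := by
        have hh := fd_dvd_eval ((J'.val.map f).prod) c
        rwa [hfdJ'] at hh
      obtain ⟨t', ht'⟩ := hpd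
      have hev : Polynomial.eval ((c : ℤ) : ℚ)
            (Polynomial.C w₀ * ((J'.val.map f).prod).map (Int.castRingHom ℚ))
          = w₀ * (((J'.val.map f).prod.eval c : ℤ) : ℚ) := by
        simp [Polynomial.eval_intCast_map]
      rcases hw₀p with h' | h'
      · refine ⟨t', ?_⟩
        rw [hev, ht']
        push_cast
        rw [show w₀ * ((p:ℚ) * (t':ℚ)) = (w₀ * (p:ℚ)) * t' from by ring, h', one_mul]
      · refine ⟨-t', ?_⟩
        rw [hev, ht']
        push_cast
        rw [show w₀ * ((p:ℚ) * (t':ℚ)) = (w₀ * (p:ℚ)) * t' from by ring, h']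
        ring
    set B₁ : IntValued := ⟨_, hB₁mem⟩ with hB₁def
    have heq : z₀.1 = B₁ * toIV ((rest.map f).prod) := Subtype.ext (by
      rw [hw₀coe]
      rw [show (z₀.2 : Multiset ι) = J'.val + rest from by rw [hrest, hJval]]
      push_cast
      simp only [hB₁def, toIV, Multiset.map_add, Multiset.prod_add, Polynomial.map_mul]
      ring)
    rcases (hL z₀.1 (hz1mem z₀ hz₀Z')).isUnit_or_isUnit heq with hu | hu
    · exact not_isUnit_aux B₁ w₀ ((J'.val.map f).prod) (f j') rfl
        (Multiset.dvd_prod (Multiset.mem_map_of_mem f hj')) (hdeg j' hj'I) hu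
    · exact not_isUnit_aux (toIV ((rest.map f).prod)) 1 ((rest.map f).prod) (f j)
        (by simp [toIV]) (Multiset.dvd_prod (Multiset.mem_map_of_mem f hj)) (hdeg j hjI) hu
  obtain ⟨gJ, hgJeq, hgJmk⟩ : ∃ gJ : IntValued,
      (gJ : Polynomial ℚ) * Polynomial.C (p : ℚ)
          = (∏ j ∈ J, f j).map (Int.castRingHom ℚ) ∧
        Associates.mk z₀.1 = Associates.mk gJ := by
    have hCmul : ∀ M : Polynomial ℚ, (Polynomial.C w₀ * M) * Polynomial.C (p:ℚ)
        = Polynomial.C (w₀ * (p:ℚ)) * M := by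
      intro M; rw [Polynomial.C_mul]; ring
    rcases hw₀p with h' | h'
    · refine ⟨z₀.1, ?_, rfl⟩
      rw [hJprod, hw₀coe, hCmul, h']
      simp
    · refine ⟨-z₀.1, ?_, ?_⟩
      · rw [hJprod]
        push_cast
        rw [hw₀coe]
        rw [show (-(Polynomial.C w₀ * ((z₀.2.map f).prod).map (Int.castRingHom ℚ)))
              * Polynomial.C (p:ℚ)
            = -((Polynomial.C w₀ * ((z₀.2.map f).prod).map (Int.castRingHom ℚ))
              * Polynomial.C (p:ℚ)) from by ring, hCmul, h']
        simp
      · refine (Associates.mk_eq_mk_iff_associated.2 ?_)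
        have hneg : IsUnit (-1 : IntValued) := isUnit_one.neg
        exact ⟨hneg.unit, by rw [hneg.unit_spec]; ring⟩
  refine ⟨J, hJsub, hJfd, hmin, gJ, hgJeq, ?_⟩
  have hsum' : (Multiset.map Prod.snd Z').sum = (I \ J).val := by
    rw [Finset.sdiff_val]
    refine eq_tsub_of_add_eq ?_
    rw [add_comm, hJval]
    exact hZ'sum
  rw [← hZfst]
  simp only [Multiset.map_cons, Multiset.map_map]
  rw [show Multiset.map (Associates.mk ∘ Prod.fst) Z'
      = Multiset.map (fun z => Associates.mk z.1) Z' from rfl]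
  rw [key_mult f Z' hsingle, hsum', hgJmk]
  simp [Multiset.map_map]
end
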